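/- arXiv:1609.09182 — 3 statements merged into one kernel-verified Lean document; each statement's English description precedes it below -/
import Mathlib

section
/- For all k_1, k_2 ≥ 1 one has the shuffle-type product formula g^sh_{k_1} · g^sh_{k_2} = Σ_{a+b = k_1+k_2, a ≥ 1, b ≥ 1} ( C(b−1, k_1−1) + C(b−1, k_2−1) )·g^sh_{a,b}, where g^sh_k = g_k and g^sh_{a,b} = g_{a,b} + δ_{a,1}·(1/2)·(g^{(1)}_b − g_b), equivalent to the generating-series functional equation T_sh(X)·T_sh(Y) = T_sh(X, X+Y) + T_sh(Y, X+Y). -/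
open Finset PowerSeries

/-- The `q`-series `g^{(d)}_k(q) = Σ_{u,v ≥ 1} (u^d/d!)(v^{k-1}/(k-1)!) q^{uv}` as a
formal power series: the coefficient of `q^n` is the (finite) sum over divisors. -/
noncomputable def gb (d k : ℕ) : PowerSeries ℚ :=
  PowerSeries.mk fun n =>
    ∑ u ∈ n.divisors,
      ((u : ℚ) ^ d / (Nat.factorial d : ℚ)) *
        (((n / u : ℕ) : ℚ) ^ (k - 1) / (Nat.factorial (k - 1) : ℚ))

/-- `g_k = g^{(0)}_k`. -/
noncomputable def g (k : ℕ) : PowerSeries ℚ := gb 0 k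

/-- The depth-two series `g^{(d₁,d₂)}_{k₁,k₂}`. -/
noncomputable def gb2 (d1 d2 k1 k2 : ℕ) : PowerSeries ℚ :=
  PowerSeries.mk fun n =>
    ∑ u1 ∈ Finset.range (n+1), ∑ u2 ∈ Finset.range (n+1),
    ∑ v1 ∈ Finset.range (n+1), ∑ v2 ∈ Finset.range (n+1),
      if 0 < u1 ∧ u1 < u2 ∧ 0 < v1 ∧ 0 < v2 ∧ u1 * v1 + u2 * v2 = n then
        ((u1 : ℚ) ^ d1 / (Nat.factorial d1 : ℚ)) *
        ((u2 : ℚ) ^ d2 / (Nat.factorial d2 : ℚ)) *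
        ((v1 : ℚ) ^ (k1 - 1) / (Nat.factorial (k1 - 1) : ℚ)) *
        ((v2 : ℚ) ^ (k2 - 1) / (Nat.factorial (k2 - 1) : ℚ))
      else 0

/-- `g_{k₁,k₂} = g^{(0,0)}_{k₁,k₂}`. -/
noncomputable def g2 (k1 k2 : ℕ) : PowerSeries ℚ := gb2 0 0 k1 k2

/-- The depth-three series `g^{(d₁,d₂,d₃)}_{k₁,k₂,k₃}`. -/
noncomputable def gb3 (d1 d2 d3 k1 k2 k3 : ℕ) : PowerSeries ℚ :=
  PowerSeries.mk fun n =>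
    ∑ u1 ∈ Finset.range (n+1), ∑ u2 ∈ Finset.range (n+1), ∑ u3 ∈ Finset.range (n+1),
    ∑ v1 ∈ Finset.range (n+1), ∑ v2 ∈ Finset.range (n+1), ∑ v3 ∈ Finset.range (n+1),
      if 0 < u1 ∧ u1 < u2 ∧ u2 < u3 ∧ 0 < v1 ∧ 0 < v2 ∧ 0 < v3 ∧
          u1 * v1 + u2 * v2 + u3 * v3 = n then
        ((u1 : ℚ) ^ d1 / (Nat.factorial d1 : ℚ)) *
        ((u2 : ℚ) ^ d2 / (Nat.factorial d2 : ℚ)) *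
        ((u3 : ℚ) ^ d3 / (Nat.factorial d3 : ℚ)) *
        ((v1 : ℚ) ^ (k1 - 1) / (Nat.factorial (k1 - 1) : ℚ)) *
        ((v2 : ℚ) ^ (k2 - 1) / (Nat.factorial (k2 - 1) : ℚ)) *
        ((v3 : ℚ) ^ (k3 - 1) / (Nat.factorial (k3 - 1) : ℚ))
      else 0

/-- `g_{k₁,k₂,k₃} = g^{(0,0,0)}_{k₁,k₂,k₃}`. -/
noncomputable def g3 (k1 k2 k3 : ℕ) : PowerSeries ℚ := gb3 0 0 0 k1 k2 k3

/-- The shuffle-regularized series `g^sh_{k₁,k₂}`. -/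
noncomputable def gsh2 (k1 k2 : ℕ) : PowerSeries ℚ :=
  g2 k1 k2 + (if k1 = 1 then (1/2 : ℚ) else 0) • (gb 1 k2 - g k2)

/-- The shuffle-regularized series `g^sh_{k₁,k₂,k₃}`. -/
noncomputable def gsh3 (k1 k2 k3 : ℕ) : PowerSeries ℚ :=
  g3 k1 k2 k3
    + (if k1 = 1 then (1/2 : ℚ) else 0) • (gb2 1 0 k2 k3 - g2 k2 k3)
    + (if k2 = 1 then (1/2 : ℚ) else 0) • (gb2 0 1 k1 k3 - gb2 1 0 k1 k3 - g2 k1 k3)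
    + (if k1 * k2 = 1 then (1 : ℚ) else 0) •
        ((1/6 : ℚ) • gb 2 k3 - (1/4 : ℚ) • gb 1 k3 + (1/6 : ℚ) • g k3)

/-- The operator `d̂ = q·d/dq` on formal power series. -/
noncomputable def qd (f : PowerSeries ℚ) : PowerSeries ℚ :=
  PowerSeries.mk fun n => (n : ℚ) * PowerSeries.coeff n f

noncomputable def W (k v : ℕ) : ℚ := (v:ℚ)^(k-1) / (Nat.factorial (k-1) : ℚ)

lemma binom (k1 k2 : ℕ) (h1 : 1 ≤ k1) (h2 : 1 ≤ k2) (x y : ℕ) :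
    W k1 (x + y) * W k2 y =
    ∑ a ∈ Icc 1 (k1+k2-1),
      (Nat.choose (k1+k2-a-1) (k2-1) : ℚ) *
        ((x:ℚ)^(a-1) / (Nat.factorial (a-1) : ℚ) * W (k1+k2-a) y) := by
  obtain ⟨m, rfl⟩ : ∃ m, k1 = m + 1 := ⟨k1 - 1, by omega⟩
  obtain ⟨l, rfl⟩ : ∃ l, k2 = l + 1 := ⟨k2 - 1, by omega⟩
  have hIcc : Icc 1 (m+1+(l+1)-1) = Ico 1 (m+l+2) := by
    ext i; simp only [mem_Icc, mem_Ico]; omega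
  rw [hIcc, Finset.sum_Ico_eq_sum_range]
  have hr : m + l + 2 - 1 = m + l + 1 := by omega
  rw [hr]
  -- now RHS = ∑ j ∈ range (m+l+1), f (1+j)
  have htrunc : ∑ j ∈ range (m+l+1),
      (Nat.choose (m+1+(l+1)-(1+j)-1) (l+1-1) : ℚ) *
        ((x:ℚ)^(1+j-1) / (Nat.factorial (1+j-1) : ℚ) * W (m+1+(l+1)-(1+j)) y)
      = ∑ j ∈ range (m+1),
      (Nat.choose (m+1+(l+1)-(1+j)-1) (l+1-1) : ℚ) *
        ((x:ℚ)^(1+j-1) / (Nat.factorial (1+j-1) : ℚ) * W (m+1+(l+1)-(1+j)) y) := by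
    symm
    apply Finset.sum_subset
    · intro j hj; simp only [mem_range] at *; omega
    · intro j hj hj'
      simp only [mem_range] at *
      have : m+1+(l+1)-(1+j)-1 < l+1-1 := by omega
      rw [Nat.choose_eq_zero_of_lt this]
      simp
  rw [htrunc]
  simp only [W]
  push_cast
  rw [add_pow]
  rw [Finset.sum_div, Finset.sum_mul]
  apply Finset.sum_congr rfl
  intro j hj
  simp only [mem_range] at hj
  have hjm : j ≤ m := by omega
  have e1 : m + 1 + (l+1) - (1+j) - 1 = (m - j) + l := by omega
  have e2 : 1 + j - 1 = j := by omega
  have e3 : m + 1 + (l + 1) - (1 + j) - 1 = m + l - j := by omega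
  have e4 : (m+1) - 1 = m := by omega
  have e5 : (l+1) - 1 = l := by omega
  rw [e1]
  have c1 : (Nat.choose ((m-j)+l) l : ℚ) = (Nat.factorial ((m-j)+l) : ℚ) / ((Nat.factorial l : ℚ) * (Nat.factorial (m-j) : ℚ)) := by
    rw [Nat.cast_choose ℚ (by omega : l ≤ (m-j)+l)]
    have h : (m-j)+l - l = m - j := by omega
    rw [h]
  have c2 : (Nat.choose m j : ℚ) = (Nat.factorial m : ℚ) / ((Nat.factorial j : ℚ) * (Nat.factorial (m-j) : ℚ)) := by
    rw [Nat.cast_choose ℚ hjm]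
  have ey : (y:ℚ)^((m-j)+l) = (y:ℚ)^(m-j) * (y:ℚ)^l := by rw [pow_add]
  have ey2 : (y:ℚ)^(m-j) = (y:ℚ)^(m-j) := rfl
  rw [c1, c2, ey]
  have hx : (x:ℚ)^j * (y:ℚ)^(m-j) * (Nat.choose m j:ℚ) = (x:ℚ)^j * (y:ℚ)^(m-j) * ((Nat.factorial m : ℚ) / ((Nat.factorial j : ℚ) * (Nat.factorial (m-j) : ℚ))) := by rw [c2]
  rw [e2]
  field_simp

abbrev Quad := ℕ × ℕ × ℕ × ℕ

def QS (n : ℕ) : Finset Quad := range (n+1) ×ˢ range (n+1) ×ˢ range (n+1) ×ˢ range (n+1)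

def PF (n : ℕ) : Finset Quad :=
  (QS n).filter (fun x => 0 < x.1 ∧ 0 < x.2.1 ∧ 0 < x.2.2.1 ∧ 0 < x.2.2.2 ∧
    x.1 * x.2.2.1 + x.2.1 * x.2.2.2 = n)

def QF (n : ℕ) : Finset Quad :=
  (QS n).filter (fun x => 0 < x.1 ∧ x.1 < x.2.1 ∧ 0 < x.2.2.1 ∧ 0 < x.2.2.2 ∧
    x.1 * x.2.2.1 + x.2.1 * x.2.2.2 = n)

lemma nested4 (A : Finset ℕ) (F : Quad → ℚ) :
    ∑ a ∈ A, ∑ b ∈ A, ∑ c ∈ A, ∑ d ∈ A, F (a,b,c,d) = ∑ x ∈ A ×ˢ A ×ˢ A ×ˢ A, F x := by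
  simp [Finset.sum_product]

lemma coeff_g (k n : ℕ) : coeff n (g k) = ∑ u ∈ n.divisors, W k (n/u) := by
  simp [g, gb, coeff_mk, W]

lemma coeff_corr (b n : ℕ) :
    coeff n (gb 1 b - g b) = ∑ u ∈ n.divisors, ((u:ℚ) - 1) * W b (n/u) := by
  rw [map_sub, coeff_g]
  simp only [gb, coeff_mk, W, pow_one, Nat.factorial_one, Nat.cast_one, div_one]
  rw [← Finset.sum_sub_distrib]
  apply Finset.sum_congr rfl
  intro u hu
  ring

lemma coeff_g2 (a b n : ℕ) : coeff n (g2 a b) = ∑ x ∈ QF n, W a x.2.2.1 * W b x.2.2.2 := by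
  simp only [g2, gb2, coeff_mk, pow_zero, Nat.factorial_zero, Nat.cast_one, div_one, one_mul]
  rw [QF, Finset.sum_filter, QS, ← nested4]
  apply Finset.sum_congr rfl; intro u1 _
  apply Finset.sum_congr rfl; intro u2 _
  apply Finset.sum_congr rfl; intro v1 _
  apply Finset.sum_congr rfl; intro v2 _
  simp only [W]

lemma coeff_g_mul (k1 k2 n : ℕ) :
    coeff n (g k1 * g k2) = ∑ x ∈ PF n, W k1 x.2.2.1 * W k2 x.2.2.2 := by
  rw [coeff_mul]
  simp only [coeff_g]
  have step1 : ∑ p ∈ antidiagonal n, (∑ u ∈ p.1.divisors, W k1 (p.1/u)) * (∑ u ∈ p.2.divisors, W k2 (p.2/u))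
      = ∑ p ∈ antidiagonal n, ∑ y ∈ p.1.divisors ×ˢ p.2.divisors, W k1 (p.1/y.1) * W k2 (p.2/y.2) := by
    apply Finset.sum_congr rfl
    intro p _
    rw [Finset.sum_mul_sum]
    rw [Finset.sum_product]
  rw [step1, ← Finset.sum_sigma (antidiagonal n) (fun p => p.1.divisors ×ˢ p.2.divisors)
      (fun z => W k1 (z.1.1/z.2.1) * W k2 (z.1.2/z.2.2))]
  apply Finset.sum_nbij' (i := fun z => (z.2.1, z.2.2, z.1.1/z.2.1, z.1.2/z.2.2))
    (j := fun x => ⟨(x.1*x.2.2.1, x.2.1*x.2.2.2), (x.1, x.2.1)⟩)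
  · rintro ⟨⟨m1, m2⟩, u1, u2⟩ hz
    simp only [Finset.mem_sigma, Finset.mem_antidiagonal, Finset.mem_product, Nat.mem_divisors] at hz
    obtain ⟨hm, ⟨hd1, hm1⟩, hd2, hm2⟩ := hz
    replace hm := HasAntidiagonal.mem_antidiagonal.mp hm
    have hu1 : 0 < u1 := Nat.pos_of_dvd_of_pos hd1 (Nat.pos_of_ne_zero hm1)
    have hu2 : 0 < u2 := Nat.pos_of_dvd_of_pos hd2 (Nat.pos_of_ne_zero hm2)
    have e1 : u1 * (m1 / u1) = m1 := Nat.mul_div_cancel' hd1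
    have e2 : u2 * (m2 / u2) = m2 := Nat.mul_div_cancel' hd2
    simp only [PF, QS, Finset.mem_filter, Finset.mem_product, Finset.mem_range]
    have hv1 : 0 < m1 / u1 := Nat.div_pos (Nat.le_of_dvd (Nat.pos_of_ne_zero hm1) hd1) hu1
    have hv2 : 0 < m2 / u2 := Nat.div_pos (Nat.le_of_dvd (Nat.pos_of_ne_zero hm2) hd2) hu2
    have hle1 : u1 ≤ m1 := Nat.le_of_dvd (Nat.pos_of_ne_zero hm1) hd1
    have hle2 : u2 ≤ m2 := Nat.le_of_dvd (Nat.pos_of_ne_zero hm2) hd2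
    have hle3 : m1 / u1 ≤ m1 := Nat.div_le_self _ _
    have hle4 : m2 / u2 ≤ m2 := Nat.div_le_self _ _
    refine ⟨⟨?_, ?_, ?_, ?_⟩, hu1, hu2, hv1, hv2, ?_⟩
    · omega
    · omega
    · omega
    · omega
    · rw [e1, e2]; exact hm
  · rintro ⟨u1, u2, v1, v2⟩ hx
    simp only [PF, QS, Finset.mem_filter, Finset.mem_product, Finset.mem_range] at hx
    obtain ⟨-, hu1, hu2, hv1, hv2, hn⟩ := hx
    simp only [Finset.mem_sigma, Finset.mem_antidiagonal, Finset.mem_product, Nat.mem_divisors]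
    exact ⟨HasAntidiagonal.mem_antidiagonal.mpr hn, ⟨Dvd.intro _ rfl, by positivity⟩, Dvd.intro _ rfl, by positivity⟩
  · rintro ⟨⟨m1, m2⟩, u1, u2⟩ hz
    simp only [Finset.mem_sigma, Finset.mem_antidiagonal, Finset.mem_product, Nat.mem_divisors] at hz
    obtain ⟨hm, ⟨hd1, hm1⟩, hd2, hm2⟩ := hz
    simp only [Nat.mul_div_cancel' hd1, Nat.mul_div_cancel' hd2]
  · rintro ⟨u1, u2, v1, v2⟩ hx
    simp only [PF, QS, Finset.mem_filter, Finset.mem_product, Finset.mem_range] at hx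
    obtain ⟨-, hu1, hu2, hv1, hv2, hn⟩ := hx
    simp [Nat.mul_div_cancel_left _ hu1, Nat.mul_div_cancel_left _ hu2]
  · rintro ⟨⟨m1, m2⟩, u1, u2⟩ hz
    rfl

lemma QF_to_lt (a b n : ℕ) :
    ∑ x ∈ QF n, W a x.2.2.1 * W b x.2.2.2
      = ∑ x ∈ (PF n).filter (fun x => x.2.2.2 < x.2.2.1),
          ((x.2.2.1 - x.2.2.2 : ℕ):ℚ)^(a-1)/(Nat.factorial (a-1) : ℚ) * W b x.2.2.2 := by
  apply Finset.sum_nbij' (i := fun x => (x.1, x.2.1 - x.1, x.2.2.1 + x.2.2.2, x.2.2.2))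
    (j := fun x => (x.1, x.1 + x.2.1, x.2.2.1 - x.2.2.2, x.2.2.2))
  · rintro ⟨u1, u2, v1, v2⟩ hx
    simp only [QF, QS, Finset.mem_filter, Finset.mem_product, Finset.mem_range] at hx
    obtain ⟨-, hu1, hu12, hv1, hv2, hn⟩ := hx
    obtain ⟨d, hd⟩ : ∃ d, u2 = u1 + d := ⟨u2 - u1, by omega⟩
    have hb1 : u1 ≤ u1 * v1 := Nat.le_mul_of_pos_right _ hv1
    have hb2 : u2 ≤ u2 * v2 := Nat.le_mul_of_pos_right _ hv2
    have hb3 : v1 ≤ u1 * v1 := Nat.le_mul_of_pos_left _ hu1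
    have hb4 : 2 * v2 ≤ u2 * v2 := Nat.mul_le_mul_right v2 (by omega)
    have heq : u1 * (v1 + v2) + (u2 - u1) * v2 = u1 * v1 + u2 * v2 := by
      have hdu : u2 - u1 = d := by omega
      rw [hdu, hd]; ring
    simp only [PF, QS, Finset.mem_filter, Finset.mem_product, Finset.mem_range]
    refine ⟨⟨⟨?_, ?_, ?_, ?_⟩, ?_, ?_, ?_, ?_, by rw [heq]; exact hn⟩, ?_⟩ <;> omega
  · rintro ⟨u1, u2, v1, v2⟩ hx
    simp only [PF, QS, Finset.mem_filter, Finset.mem_product, Finset.mem_range] at hx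
    obtain ⟨⟨-, hu1, hu2, hv1, hv2, hn⟩, hvlt⟩ := hx
    obtain ⟨e, he⟩ : ∃ e, v1 = v2 + e := ⟨v1 - v2, by omega⟩
    have he1 : 0 < e := by omega
    have hb1 : 2 * u1 ≤ u1 * v1 := by
      calc 2 * u1 = u1 * 2 := by ring
      _ ≤ u1 * v1 := Nat.mul_le_mul_left u1 (by omega)
    have hb2 : u2 ≤ u2 * v2 := Nat.le_mul_of_pos_right _ hv2
    have hb3 : v1 ≤ u1 * v1 := Nat.le_mul_of_pos_left _ hu1
    have heq : u1 * (v1 - v2) + (u1 + u2) * v2 = u1 * v1 + u2 * v2 := by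
      have : v1 - v2 = e := by omega
      rw [this, he]; ring
    simp only [QF, QS, Finset.mem_filter, Finset.mem_product, Finset.mem_range]
    refine ⟨⟨?_, ?_, ?_, ?_⟩, ?_, ?_, ?_, ?_, by rw [heq]; exact hn⟩ <;> omega
  · rintro ⟨u1, u2, v1, v2⟩ hx
    simp only [QF, QS, Finset.mem_filter, Finset.mem_product, Finset.mem_range] at hx
    obtain ⟨-, hu1, hu12, hv1, hv2, hn⟩ := hx
    have e1 : u1 + (u2 - u1) = u2 := by omega
    have e2 : v1 + v2 - v2 = v1 := by omega
    simp only [e1, e2]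
  · rintro ⟨u1, u2, v1, v2⟩ hx
    simp only [PF, QS, Finset.mem_filter, Finset.mem_product, Finset.mem_range] at hx
    obtain ⟨⟨-, hu1, hu2, hv1, hv2, hn⟩, hvlt⟩ := hx
    have e1 : u1 + u2 - u1 = u2 := by omega
    have e2 : v1 - v2 + v2 = v1 := by omega
    simp only [e1, e2]
  · rintro ⟨u1, u2, v1, v2⟩ hx
    simp only
    have : v1 + v2 - v2 = v1 := by omega
    rw [this]
    rfl

lemma swap_lt (k1 k2 n : ℕ) :
    ∑ x ∈ (PF n).filter (fun x => x.2.2.1 < x.2.2.2), W k1 x.2.2.1 * W k2 x.2.2.2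
      = ∑ x ∈ (PF n).filter (fun x => x.2.2.2 < x.2.2.1), W k2 x.2.2.1 * W k1 x.2.2.2 := by
  apply Finset.sum_nbij' (i := fun x => (x.2.1, x.1, x.2.2.2, x.2.2.1))
    (j := fun x => (x.2.1, x.1, x.2.2.2, x.2.2.1))
  · rintro ⟨u1, u2, v1, v2⟩ hx
    simp only [PF, QS, Finset.mem_filter, Finset.mem_product, Finset.mem_range] at hx ⊢
    obtain ⟨⟨⟨b1, b2, b3, b4⟩, hu1, hu2, hv1, hv2, hn⟩, hlt⟩ := hx
    exact ⟨⟨⟨b2, b1, b4, b3⟩, hu2, hu1, hv2, hv1, by rw [add_comm]; exact hn⟩, hlt⟩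
  · rintro ⟨u1, u2, v1, v2⟩ hx
    simp only [PF, QS, Finset.mem_filter, Finset.mem_product, Finset.mem_range] at hx ⊢
    obtain ⟨⟨⟨b1, b2, b3, b4⟩, hu1, hu2, hv1, hv2, hn⟩, hlt⟩ := hx
    exact ⟨⟨⟨b2, b1, b4, b3⟩, hu2, hu1, hv2, hv1, by rw [add_comm]; exact hn⟩, hlt⟩
  · rintro ⟨u1, u2, v1, v2⟩ _; rfl
  · rintro ⟨u1, u2, v1, v2⟩ _; rfl
  · rintro ⟨u1, u2, v1, v2⟩ _; simp only; ring

lemma diag_eq (n : ℕ) (h : ℕ → ℚ) :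
    ∑ x ∈ (PF n).filter (fun x => x.2.2.1 = x.2.2.2), h x.2.2.1
      = ∑ u ∈ n.divisors, ((u:ℚ) - 1) * h (n/u) := by
  have step : ∀ u ∈ n.divisors, ((u:ℚ) - 1) * h (n/u) = ∑ _c ∈ Finset.Ico 1 u, h (n/u) := by
    intro u hu
    have hu1 : 1 ≤ u := (Nat.pos_of_mem_divisors hu)
    rw [Finset.sum_const, Nat.card_Ico]
    have : ((u:ℚ) - 1) = ((u - 1 : ℕ) : ℚ) := by
      push_cast [hu1]; ring
    rw [this, nsmul_eq_mul]
  rw [Finset.sum_congr rfl step]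
  rw [← Finset.sum_sigma (n.divisors) (fun u => Finset.Ico 1 u) (fun z => h (n/z.1))]
  symm
  apply Finset.sum_nbij' (i := fun z => (z.2, z.1 - z.2, n/z.1, n/z.1))
    (j := fun x => (⟨x.1 + x.2.1, x.1⟩ : Σ _u : ℕ, ℕ))
  · rintro ⟨u, c⟩ hz
    simp only [Finset.mem_sigma, Nat.mem_divisors, Finset.mem_Ico] at hz
    obtain ⟨⟨hdvd, hn0⟩, hc1, hcu⟩ := hz
    have hn : 0 < n := Nat.pos_of_ne_zero hn0
    have hun : u ≤ n := Nat.le_of_dvd hn hdvd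
    have hv : 0 < n / u := Nat.div_pos hun (by omega)
    have hvn : n / u ≤ n := Nat.div_le_self _ _
    have he : u * (n / u) = n := Nat.mul_div_cancel' hdvd
    have heq : c * (n/u) + (u - c) * (n/u) = n := by
      have : c * (n/u) + (u - c) * (n/u) = (c + (u - c)) * (n/u) := by ring
      rw [this]
      have : c + (u - c) = u := by omega
      rw [this, he]
    simp only [PF, QS, Finset.mem_filter, Finset.mem_product, Finset.mem_range]
    refine ⟨⟨⟨?_, ?_, ?_, ?_⟩, ?_, ?_, ?_, ?_, heq⟩, trivial⟩ <;> omega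
  · rintro ⟨u1, u2, v1, v2⟩ hx
    simp only [PF, QS, Finset.mem_filter, Finset.mem_product, Finset.mem_range] at hx
    obtain ⟨⟨-, hu1, hu2, hv1, hv2, hn⟩, hveq⟩ := hx
    subst hveq
    have he : (u1 + u2) * v1 = n := by rw [add_mul]; exact hn
    simp only [Finset.mem_sigma, Nat.mem_divisors, Finset.mem_Ico]
    have hpos : 0 < (u1 + u2) * v1 := Nat.mul_pos (by omega) hv1
    refine ⟨⟨⟨v1, he.symm⟩, by omega⟩, by omega, by omega⟩
  · rintro ⟨u, c⟩ hz
    simp only [Finset.mem_sigma, Nat.mem_divisors, Finset.mem_Ico] at hz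
    obtain ⟨⟨hdvd, hn0⟩, hc1, hcu⟩ := hz
    have e : c + (u - c) = u := by omega
    rw [e]
  · rintro ⟨u1, u2, v1, v2⟩ hx
    simp only [PF, QS, Finset.mem_filter, Finset.mem_product, Finset.mem_range] at hx
    obtain ⟨⟨-, hu1, hu2, hv1, hv2, hn⟩, hveq⟩ := hx
    subst hveq
    have he : (u1 + u2) * v1 = n := by rw [add_mul]; exact hn
    have hv : n / (u1 + u2) = v1 := by
      rw [← he]; exact Nat.mul_div_cancel_left _ (by omega)
    have e1 : u1 + u2 - u1 = u2 := by omega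
    simp only [e1, hv]
  · rintro ⟨u, c⟩ hz
    rfl

lemma Wmul_diag (k1 k2 : ℕ) (h1 : 1 ≤ k1) (h2 : 1 ≤ k2) (v : ℕ) :
    W k1 v * W k2 v = (Nat.choose (k1+k2-2) (k2-1) : ℚ) * W (k1+k2-1) v := by
  simp only [W]
  have e : (k1+k2-1) - 1 = (k1-1) + (k2-1) := by omega
  rw [e, pow_add, Nat.cast_choose ℚ (by omega : k2-1 ≤ k1+k2-2)]
  have e2 : k1+k2-2 - (k2-1) = k1-1 := by omega
  have e3 : k1+k2-2 = (k1-1) + (k2-1) := by omega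
  rw [e2, e3]
  have f1 : ((k1-1).factorial : ℚ) ≠ 0 := Nat.cast_ne_zero.mpr (Nat.factorial_ne_zero _)
  have f2 : ((k2-1).factorial : ℚ) ≠ 0 := Nat.cast_ne_zero.mpr (Nat.factorial_ne_zero _)
  have f3 : (((k1-1)+(k2-1)).factorial : ℚ) ≠ 0 := Nat.cast_ne_zero.mpr (Nat.factorial_ne_zero _)
  field_simp

theorem stmt_13' (k1 k2 : ℕ) (h1 : 1 ≤ k1) (h2 : 1 ≤ k2) :
    g k1 * g k2 =
      ∑ a ∈ Finset.Icc 1 (k1 + k2 - 1),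
        ((Nat.choose (k1 + k2 - a - 1) (k1 - 1) : ℚ)
          + (Nat.choose (k1 + k2 - a - 1) (k2 - 1) : ℚ)) • (g2 a (k1+k2-a) + (if a = 1 then (1/2 : ℚ) else 0) • (gb 1 (k1+k2-a) - g (k1+k2-a))) := by
  ext n
  rw [coeff_g_mul, map_sum]
  -- RHS coefficient expansion
  have hco : ∀ a ∈ Finset.Icc 1 (k1+k2-1),
      coeff n ((((k1+k2-a-1).choose (k1-1) : ℚ) + ((k1+k2-a-1).choose (k2-1) : ℚ)) • (g2 a (k1+k2-a) + (if a = 1 then (1/2 : ℚ) else 0) • (gb 1 (k1+k2-a) - g (k1+k2-a))))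
      = (((k1+k2-a-1).choose (k1-1) : ℚ) + ((k1+k2-a-1).choose (k2-1) : ℚ)) *
          ((∑ x ∈ QF n, W a x.2.2.1 * W (k1+k2-a) x.2.2.2)
            + (if a = 1 then (1/2:ℚ) else 0) * (∑ u ∈ n.divisors, ((u:ℚ)-1) * W (k1+k2-a) (n/u))) := by
    intro a _
    rw [map_smul, smul_eq_mul]
    congr 1
    rw [map_add, map_smul, smul_eq_mul, coeff_g2, coeff_corr]
  rw [Finset.sum_congr rfl hco]
  -- split RHS sum
  have hsplitR : ∑ a ∈ Finset.Icc 1 (k1+k2-1),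
      (((k1+k2-a-1).choose (k1-1) : ℚ) + ((k1+k2-a-1).choose (k2-1) : ℚ)) *
        ((∑ x ∈ QF n, W a x.2.2.1 * W (k1+k2-a) x.2.2.2)
          + (if a = 1 then (1/2:ℚ) else 0) * (∑ u ∈ n.divisors, ((u:ℚ)-1) * W (k1+k2-a) (n/u)))
      = (∑ a ∈ Finset.Icc 1 (k1+k2-1),
          (((k1+k2-a-1).choose (k1-1) : ℚ) + ((k1+k2-a-1).choose (k2-1) : ℚ)) *
            (∑ x ∈ QF n, W a x.2.2.1 * W (k1+k2-a) x.2.2.2))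
        + (((k1+k2-2).choose (k1-1) : ℚ) + ((k1+k2-2).choose (k2-1) : ℚ)) * (1/2) *
            (∑ u ∈ n.divisors, ((u:ℚ)-1) * W (k1+k2-1) (n/u)) := by
    have e1 : ∀ a ∈ Finset.Icc 1 (k1+k2-1),
        (((k1+k2-a-1).choose (k1-1) : ℚ) + ((k1+k2-a-1).choose (k2-1) : ℚ)) *
          ((∑ x ∈ QF n, W a x.2.2.1 * W (k1+k2-a) x.2.2.2)
            + (if a = 1 then (1/2:ℚ) else 0) * (∑ u ∈ n.divisors, ((u:ℚ)-1) * W (k1+k2-a) (n/u)))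
        = (((k1+k2-a-1).choose (k1-1) : ℚ) + ((k1+k2-a-1).choose (k2-1) : ℚ)) *
            (∑ x ∈ QF n, W a x.2.2.1 * W (k1+k2-a) x.2.2.2)
          + (((k1+k2-a-1).choose (k1-1) : ℚ) + ((k1+k2-a-1).choose (k2-1) : ℚ)) *
            ((if a = 1 then (1/2:ℚ) else 0) * (∑ u ∈ n.divisors, ((u:ℚ)-1) * W (k1+k2-a) (n/u))) := by
      intro a _; ring
    rw [Finset.sum_congr rfl e1, Finset.sum_add_distrib]
    congr 1
    rw [Finset.sum_eq_single_of_mem 1 (by simp only [Finset.mem_Icc]; omega)]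
    · have e2 : k1+k2-1-1 = k1+k2-2 := by omega
      rw [if_pos rfl, e2]
      ring
    · intro b _ hb1
      rw [if_neg hb1]
      ring
  rw [hsplitR]
  -- LHS split
  rw [← Finset.sum_filter_add_sum_filter_not (PF n) (fun x => x.2.2.1 < x.2.2.2)
      (fun x => W k1 x.2.2.1 * W k2 x.2.2.2)]
  have hset1 : ((PF n).filter (fun x => ¬ x.2.2.1 < x.2.2.2)).filter (fun x => x.2.2.1 = x.2.2.2)
      = (PF n).filter (fun x => x.2.2.1 = x.2.2.2) := by
    rw [Finset.filter_filter]
    apply Finset.filter_congr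
    intro x _
    constructor
    · exact fun h => h.2
    · exact fun h => ⟨by omega, h⟩
  have hset2 : ((PF n).filter (fun x => ¬ x.2.2.1 < x.2.2.2)).filter (fun x => ¬ x.2.2.1 = x.2.2.2)
      = (PF n).filter (fun x => x.2.2.2 < x.2.2.1) := by
    rw [Finset.filter_filter]
    apply Finset.filter_congr
    intro x _
    constructor
    · exact fun h => by omega
    · exact fun h => by omega
  have hsplit2 : ∑ x ∈ (PF n).filter (fun x => ¬ x.2.2.1 < x.2.2.2), W k1 x.2.2.1 * W k2 x.2.2.2
      = (∑ x ∈ (PF n).filter (fun x => x.2.2.1 = x.2.2.2), W k1 x.2.2.1 * W k2 x.2.2.2)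
        + ∑ x ∈ (PF n).filter (fun x => x.2.2.2 < x.2.2.1), W k1 x.2.2.1 * W k2 x.2.2.2 := by
    rw [← Finset.sum_filter_add_sum_filter_not ((PF n).filter (fun x => ¬ x.2.2.1 < x.2.2.2))
        (fun x => x.2.2.1 = x.2.2.2) (fun x => W k1 x.2.2.1 * W k2 x.2.2.2), hset1, hset2]
  rw [hsplit2]
  -- diagonal part
  have hdiag : ∑ x ∈ (PF n).filter (fun x => x.2.2.1 = x.2.2.2), W k1 x.2.2.1 * W k2 x.2.2.2
      = ((k1+k2-2).choose (k2-1) : ℚ) * ∑ u ∈ n.divisors, ((u:ℚ)-1) * W (k1+k2-1) (n/u) := by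
    have point : ∀ x ∈ (PF n).filter (fun x => x.2.2.1 = x.2.2.2),
        W k1 x.2.2.1 * W k2 x.2.2.2 = ((k1+k2-2).choose (k2-1) : ℚ) * W (k1+k2-1) x.2.2.1 := by
      intro x hx
      have hv : x.2.2.1 = x.2.2.2 := (Finset.mem_filter.mp hx).2
      rw [← hv, Wmul_diag k1 k2 h1 h2]
    rw [Finset.sum_congr rfl point, ← Finset.mul_sum, diag_eq n (fun v => W (k1+k2-1) v)]
  rw [hdiag]
  -- the greater part
  have hgt1 : ∑ x ∈ (PF n).filter (fun x => x.2.2.2 < x.2.2.1), W k1 x.2.2.1 * W k2 x.2.2.2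
      = ∑ a ∈ Finset.Icc 1 (k1+k2-1), ((k1+k2-a-1).choose (k2-1) : ℚ) *
          ∑ x ∈ QF n, W a x.2.2.1 * W (k1+k2-a) x.2.2.2 := by
    have point : ∀ x ∈ (PF n).filter (fun x => x.2.2.2 < x.2.2.1),
        W k1 x.2.2.1 * W k2 x.2.2.2
          = ∑ a ∈ Finset.Icc 1 (k1+k2-1), ((k1+k2-a-1).choose (k2-1) : ℚ) *
              (((x.2.2.1 - x.2.2.2 : ℕ):ℚ)^(a-1)/(Nat.factorial (a-1):ℚ) * W (k1+k2-a) x.2.2.2) := by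
      intro x hx
      have hv : x.2.2.2 < x.2.2.1 := (Finset.mem_filter.mp hx).2
      have hb := binom k1 k2 h1 h2 (x.2.2.1 - x.2.2.2) x.2.2.2
      have e : x.2.2.1 - x.2.2.2 + x.2.2.2 = x.2.2.1 := by omega
      rw [e] at hb
      exact hb
    rw [Finset.sum_congr rfl point, Finset.sum_comm]
    apply Finset.sum_congr rfl
    intro a _
    rw [← Finset.mul_sum, ← QF_to_lt]
  -- the less part
  have hlt1 : ∑ x ∈ (PF n).filter (fun x => x.2.2.1 < x.2.2.2), W k1 x.2.2.1 * W k2 x.2.2.2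
      = ∑ a ∈ Finset.Icc 1 (k1+k2-1), ((k1+k2-a-1).choose (k1-1) : ℚ) *
          ∑ x ∈ QF n, W a x.2.2.1 * W (k1+k2-a) x.2.2.2 := by
    rw [swap_lt]
    have point : ∀ x ∈ (PF n).filter (fun x => x.2.2.2 < x.2.2.1),
        W k2 x.2.2.1 * W k1 x.2.2.2
          = ∑ a ∈ Finset.Icc 1 (k1+k2-1), ((k1+k2-a-1).choose (k1-1) : ℚ) *
              (((x.2.2.1 - x.2.2.2 : ℕ):ℚ)^(a-1)/(Nat.factorial (a-1):ℚ) * W (k1+k2-a) x.2.2.2) := by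
      intro x hx
      have hv : x.2.2.2 < x.2.2.1 := (Finset.mem_filter.mp hx).2
      have hb := binom k2 k1 h2 h1 (x.2.2.1 - x.2.2.2) x.2.2.2
      have e : x.2.2.1 - x.2.2.2 + x.2.2.2 = x.2.2.1 := by omega
      rw [e] at hb
      have ecomm : k2 + k1 = k1 + k2 := by ring
      rw [ecomm] at hb
      exact hb
    rw [Finset.sum_congr rfl point, Finset.sum_comm]
    apply Finset.sum_congr rfl
    intro a _
    rw [← Finset.mul_sum, ← QF_to_lt]
  rw [hgt1, hlt1]
  -- final algebra
  have hsym : ((k1+k2-2).choose (k2-1) : ℚ)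
      = (1/2) * (((k1+k2-2).choose (k1-1) : ℚ) + ((k1+k2-2).choose (k2-1) : ℚ)) := by
    have : (k1+k2-2).choose (k1-1) = (k1+k2-2).choose (k2-1) := by
      rw [← Nat.choose_symm (by omega : k1-1 ≤ k1+k2-2)]
      congr 1
      omega
    rw [this]
    ring
  have hS : (∑ a ∈ Finset.Icc 1 (k1+k2-1), ((k1+k2-a-1).choose (k1-1) : ℚ) *
          ∑ x ∈ QF n, W a x.2.2.1 * W (k1+k2-a) x.2.2.2)
        + (∑ a ∈ Finset.Icc 1 (k1+k2-1), ((k1+k2-a-1).choose (k2-1) : ℚ) *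
          ∑ x ∈ QF n, W a x.2.2.1 * W (k1+k2-a) x.2.2.2)
      = ∑ a ∈ Finset.Icc 1 (k1+k2-1),
          (((k1+k2-a-1).choose (k1-1) : ℚ) + ((k1+k2-a-1).choose (k2-1) : ℚ)) *
            ∑ x ∈ QF n, W a x.2.2.1 * W (k1+k2-a) x.2.2.2 := by
    rw [← Finset.sum_add_distrib]
    apply Finset.sum_congr rfl
    intro a _
    ring
  have hD : ((k1+k2-2).choose (k2-1) : ℚ) * (∑ u ∈ n.divisors, ((u:ℚ)-1) * W (k1+k2-1) (n/u))
      = (((k1+k2-2).choose (k1-1) : ℚ) + ((k1+k2-2).choose (k2-1) : ℚ)) * (1/2) *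
          (∑ u ∈ n.divisors, ((u:ℚ)-1) * W (k1+k2-1) (n/u)) := by
    linear_combination (∑ u ∈ n.divisors, ((u:ℚ)-1) * W (k1+k2-1) (n/u)) * hsym
  linarith [hS, hD]

/-- The shuffle-type product formula
`g^sh_{k₁} g^sh_{k₂} = Σ_{a+b=k₁+k₂} (C(b−1,k₁−1)+C(b−1,k₂−1)) g^sh_{a,b}`. -/
theorem stmt_13 (k1 k2 : ℕ) (h1 : 1 ≤ k1) (h2 : 1 ≤ k2) :
    g k1 * g k2 =
      ∑ a ∈ Finset.Icc 1 (k1 + k2 - 1),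
        ((Nat.choose (k1 + k2 - a - 1) (k1 - 1) : ℚ)
          + (Nat.choose (k1 + k2 - a - 1) (k2 - 1) : ℚ)) • gsh2 a (k1 + k2 - a) := by
  have h := stmt_13' k1 k2 h1 h2
  simpa [gsh2] using h
end

section
/- For all k_1, k_2 ≥ 2, the series g^{(0,1)}_{k_1,k_2} lies in the ℚ-linear span of the series g^sh indexed by compositions of weight at most k_1 + k_2 + 1; i.e., g^{(0,1)}_{k_1,k_2} is a ℚ-linear combination of the series 1, g_m (m ≤ k_1+k_2+1), g^sh_{a,b} (a+b ≤ k_1+k_2+1), and g^sh_{a,b,c} (a+b+c ≤ k_1+k_2+1). -/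
open Finset PowerSeries

/-- The spanning set: `1`, the `g^sh` of depth ≤ 3 and weight ≤ N. -/
def gshSpanSet (N : ℕ) : Set (PowerSeries ℚ) :=
  {1} ∪ {f | ∃ m, 1 ≤ m ∧ m ≤ N ∧ f = g m}
      ∪ {f | ∃ a b, 1 ≤ a ∧ 1 ≤ b ∧ a + b ≤ N ∧ f = gsh2 a b}
      ∪ {f | ∃ a b c, 1 ≤ a ∧ 1 ≤ b ∧ 1 ≤ c ∧ a + b + c ≤ N ∧ f = gsh3 a b c}

namespace Stmt14Aux


abbrev P2 : Type := (ℕ × ℕ) × (ℕ × ℕ)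
abbrev P3 : Type := (ℕ × ℕ × ℕ) × (ℕ × ℕ × ℕ)
abbrev PM : Type := (ℕ × ℕ) × P2

/-- Index set for depth-2 sums: `0 < u1 < u2`, `v1, v2 > 0`, `u1*v1 + u2*v2 = n`. -/
def D2 (n : ℕ) : Finset P2 :=
  ((range (n+1) ×ˢ range (n+1)) ×ˢ (range (n+1) ×ˢ range (n+1))).filter
    (fun p => 0 < p.1.1 ∧ p.1.1 < p.1.2 ∧ 0 < p.2.1 ∧ 0 < p.2.2 ∧
      p.1.1 * p.2.1 + p.1.2 * p.2.2 = n)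

def D3 (n : ℕ) : Finset P3 :=
  ((range (n+1) ×ˢ range (n+1) ×ˢ range (n+1)) ×ˢ
      (range (n+1) ×ˢ range (n+1) ×ˢ range (n+1))).filter
    (fun p => 0 < p.1.1 ∧ p.1.1 < p.1.2.1 ∧ p.1.2.1 < p.1.2.2 ∧ 0 < p.2.1 ∧ 0 < p.2.2.1 ∧
      0 < p.2.2.2 ∧ p.1.1 * p.2.1 + p.1.2.1 * p.2.2.1 + p.1.2.2 * p.2.2.2 = n)

def DM (n : ℕ) : Finset PM :=
  ((range (n+1) ×ˢ range (n+1)) ×ˢ (range (n+1) ×ˢ range (n+1)) ×ˢ (range (n+1) ×ˢ range (n+1))).filter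
    (fun p => 0 < p.1.1 ∧ 0 < p.1.2 ∧ 0 < p.2.1.1 ∧ p.2.1.1 < p.2.1.2 ∧ 0 < p.2.2.1 ∧
      0 < p.2.2.2 ∧ p.1.1 * p.1.2 + p.2.1.1 * p.2.2.1 + p.2.1.2 * p.2.2.2 = n)

lemma mem_D2 {n : ℕ} {p : P2} : p ∈ D2 n ↔ (0 < p.1.1 ∧ p.1.1 < p.1.2 ∧ 0 < p.2.1 ∧ 0 < p.2.2 ∧
    p.1.1 * p.2.1 + p.1.2 * p.2.2 = n) := by
  obtain ⟨⟨u1, u2⟩, v1, v2⟩ := p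
  simp only [D2, Finset.mem_filter, Finset.mem_product, Finset.mem_range]
  constructor
  · tauto
  · rintro ⟨h1, h2, h3, h4, h5⟩
    have e1 : u1 ≤ u1 * v1 := Nat.le_mul_of_pos_right _ h3
    have e2 : v1 ≤ u1 * v1 := Nat.le_mul_of_pos_left _ h1
    have e3 : u2 ≤ u2 * v2 := Nat.le_mul_of_pos_right _ h4
    have e4 : v2 ≤ u2 * v2 := Nat.le_mul_of_pos_left _ (h1.trans h2)
    refine ⟨⟨⟨by omega, by omega⟩, by omega, by omega⟩, h1, h2, h3, h4, h5⟩

lemma mem_D3 {n : ℕ} {p : P3} : p ∈ D3 n ↔ (0 < p.1.1 ∧ p.1.1 < p.1.2.1 ∧ p.1.2.1 < p.1.2.2 ∧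
    0 < p.2.1 ∧ 0 < p.2.2.1 ∧ 0 < p.2.2.2 ∧
    p.1.1 * p.2.1 + p.1.2.1 * p.2.2.1 + p.1.2.2 * p.2.2.2 = n) := by
  obtain ⟨⟨t1, t2, t3⟩, s1, s2, s3⟩ := p
  simp only [D3, Finset.mem_filter, Finset.mem_product, Finset.mem_range]
  constructor
  · tauto
  · rintro ⟨h1, h2, h3, h4, h5, h6, h7⟩
    have e1 : t1 ≤ t1 * s1 := Nat.le_mul_of_pos_right _ h4
    have e2 : s1 ≤ t1 * s1 := Nat.le_mul_of_pos_left _ h1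
    have e3 : t2 ≤ t2 * s2 := Nat.le_mul_of_pos_right _ h5
    have e4 : s2 ≤ t2 * s2 := Nat.le_mul_of_pos_left _ (h1.trans h2)
    have e5 : t3 ≤ t3 * s3 := Nat.le_mul_of_pos_right _ h6
    have e6 : s3 ≤ t3 * s3 := Nat.le_mul_of_pos_left _ ((h1.trans h2).trans h3)
    refine ⟨⟨⟨by omega, by omega, by omega⟩, by omega, by omega, by omega⟩, h1, h2, h3, h4, h5, h6, h7⟩

lemma mem_DM {n : ℕ} {p : PM} : p ∈ DM n ↔ (0 < p.1.1 ∧ 0 < p.1.2 ∧ 0 < p.2.1.1 ∧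
    p.2.1.1 < p.2.1.2 ∧ 0 < p.2.2.1 ∧ 0 < p.2.2.2 ∧
    p.1.1 * p.1.2 + p.2.1.1 * p.2.2.1 + p.2.1.2 * p.2.2.2 = n) := by
  obtain ⟨⟨w, x⟩, ⟨u1, u2⟩, v1, v2⟩ := p
  simp only [DM, Finset.mem_filter, Finset.mem_product, Finset.mem_range]
  constructor
  · tauto
  · rintro ⟨h1, h2, h3, h4, h5, h6, h7⟩
    have e1 : w ≤ w * x := Nat.le_mul_of_pos_right _ h2
    have e2 : x ≤ w * x := Nat.le_mul_of_pos_left _ h1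
    have e3 : u1 ≤ u1 * v1 := Nat.le_mul_of_pos_right _ h5
    have e4 : v1 ≤ u1 * v1 := Nat.le_mul_of_pos_left _ h3
    have e5 : u2 ≤ u2 * v2 := Nat.le_mul_of_pos_right _ h6
    have e6 : v2 ≤ u2 * v2 := Nat.le_mul_of_pos_left _ (h3.trans h4)
    refine ⟨⟨⟨by omega, by omega⟩, ⟨by omega, by omega⟩, by omega, by omega⟩, h1, h2, h3, h4, h5, h6, h7⟩

/-- Partition-conjugation involution in depth 2. -/
def conj2 : P2 → P2 := fun p => ((p.2.2, p.2.1 + p.2.2), (p.1.2 - p.1.1, p.1.1))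

/-- Partition-conjugation involution in depth 3. -/
def conj3 : P3 → P3 := fun p =>
  ((p.2.2.2, p.2.2.1 + p.2.2.2, p.2.1 + p.2.2.1 + p.2.2.2),
   (p.1.2.2 - p.1.2.1, p.1.2.1 - p.1.1, p.1.1))

/-- Conjugation acting on the depth-2 part of the master index. -/
def conjM : PM → PM := fun p => (p.1, conj2 p.2)

lemma conj2_mem {n : ℕ} {p : P2} (hp : p ∈ D2 n) : conj2 p ∈ D2 n := by
  obtain ⟨⟨u1, u2⟩, v1, v2⟩ := p
  rw [mem_D2] at hp
  dsimp only at hp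
  obtain ⟨h1, h2, h3, h4, h5⟩ := hp
  obtain ⟨d, rfl⟩ : ∃ d, u2 = u1 + (d + 1) := ⟨u2 - u1 - 1, by omega⟩
  rw [mem_D2]
  dsimp only [conj2]
  have e1 : u1 + (d + 1) - u1 = d + 1 := by omega
  refine ⟨h4, by omega, by omega, h1, ?_⟩
  rw [e1, ← h5]; ring

lemma conj2_conj2 {n : ℕ} {p : P2} (hp : p ∈ D2 n) : conj2 (conj2 p) = p := by
  obtain ⟨⟨u1, u2⟩, v1, v2⟩ := p
  rw [mem_D2] at hp
  dsimp only at hp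
  obtain ⟨h1, h2, h3, h4, h5⟩ := hp
  dsimp only [conj2]
  simp only [Prod.mk.injEq, true_and, and_true]
  omega

lemma sumD2_conj (n : ℕ) (F : P2 → ℚ) : ∑ p ∈ D2 n, F (conj2 p) = ∑ p ∈ D2 n, F p :=
  Finset.sum_nbij' conj2 conj2 (fun _ hp => conj2_mem hp) (fun _ hp => conj2_mem hp)
    (fun _ hp => conj2_conj2 hp) (fun _ hp => conj2_conj2 hp) (fun _ _ => rfl)

lemma conj3_mem {n : ℕ} {p : P3} (hp : p ∈ D3 n) : conj3 p ∈ D3 n := by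
  obtain ⟨⟨t1, t2, t3⟩, s1, s2, s3⟩ := p
  rw [mem_D3] at hp
  dsimp only at hp
  obtain ⟨h1, h2, h3, h4, h5, h6, h7⟩ := hp
  obtain ⟨d, rfl⟩ : ∃ d, t2 = t1 + (d + 1) := ⟨t2 - t1 - 1, by omega⟩
  obtain ⟨e, rfl⟩ : ∃ e, t3 = t1 + (d + 1) + (e + 1) := ⟨t3 - (t1 + (d + 1)) - 1, by omega⟩
  rw [mem_D3]
  dsimp only [conj3]
  have e1 : t1 + (d + 1) + (e + 1) - (t1 + (d + 1)) = e + 1 := by omega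
  have e2 : t1 + (d + 1) - t1 = d + 1 := by omega
  refine ⟨h6, by omega, by omega, by omega, by omega, h1, ?_⟩
  rw [e1, e2, ← h7]; ring

lemma conj3_conj3 {n : ℕ} {p : P3} (hp : p ∈ D3 n) : conj3 (conj3 p) = p := by
  obtain ⟨⟨t1, t2, t3⟩, s1, s2, s3⟩ := p
  rw [mem_D3] at hp
  dsimp only at hp
  obtain ⟨h1, h2, h3, h4, h5, h6, h7⟩ := hp
  dsimp only [conj3]
  simp only [Prod.mk.injEq, true_and, and_true]
  omega

lemma sumD3_conj (n : ℕ) (F : P3 → ℚ) : ∑ p ∈ D3 n, F (conj3 p) = ∑ p ∈ D3 n, F p :=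
  Finset.sum_nbij' conj3 conj3 (fun _ hp => conj3_mem hp) (fun _ hp => conj3_mem hp)
    (fun _ hp => conj3_conj3 hp) (fun _ hp => conj3_conj3 hp) (fun _ _ => rfl)

lemma conjM_mem {n : ℕ} {p : PM} (hp : p ∈ DM n) : conjM p ∈ DM n := by
  obtain ⟨⟨w, x⟩, ⟨u1, u2⟩, v1, v2⟩ := p
  rw [mem_DM] at hp
  dsimp only at hp
  obtain ⟨h1, h2, h3, h4, h5, h6, h7⟩ := hp
  obtain ⟨d, rfl⟩ : ∃ d, u2 = u1 + (d + 1) := ⟨u2 - u1 - 1, by omega⟩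
  rw [mem_DM]
  dsimp only [conjM, conj2]
  have e1 : u1 + (d + 1) - u1 = d + 1 := by omega
  refine ⟨h1, h2, h6, by omega, by omega, h3, ?_⟩
  rw [e1, ← h7]; ring

lemma conjM_conjM {n : ℕ} {p : PM} (hp : p ∈ DM n) : conjM (conjM p) = p := by
  obtain ⟨⟨w, x⟩, ⟨u1, u2⟩, v1, v2⟩ := p
  rw [mem_DM] at hp
  dsimp only at hp
  obtain ⟨h1, h2, h3, h4, h5, h6, h7⟩ := hp
  dsimp only [conjM, conj2]
  simp only [Prod.mk.injEq, true_and, and_true]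
  omega

lemma sumDM_conj (n : ℕ) (F : PM → ℚ) : ∑ p ∈ DM n, F (conjM p) = ∑ p ∈ DM n, F p :=
  Finset.sum_nbij' conjM conjM (fun _ hp => conjM_mem hp) (fun _ hp => conjM_mem hp)
    (fun _ hp => conjM_conjM hp) (fun _ hp => conjM_conjM hp) (fun _ _ => rfl)
section Split

lemma piece1 (n : ℕ) (F : (ℕ×ℕ) → (ℕ×ℕ) → (ℕ×ℕ) → ℚ) :
    ∑ p ∈ (DM n).filter (fun p => p.1.1 < p.2.1.1), F p.1 p.2.1 p.2.2
      = ∑ q ∈ D3 n, F (q.1.1, q.2.1) (q.1.2.1, q.1.2.2) (q.2.2.1, q.2.2.2) := by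
  refine Finset.sum_nbij' (fun p => ((p.1.1, p.2.1.1, p.2.1.2), (p.1.2, p.2.2.1, p.2.2.2)))
    (fun q => ((q.1.1, q.2.1), ((q.1.2.1, q.1.2.2), (q.2.2.1, q.2.2.2)))) ?_ ?_ ?_ ?_ ?_
  · intro p hp
    obtain ⟨⟨w, x⟩, ⟨u1, u2⟩, v1, v2⟩ := p
    rw [Finset.mem_filter, mem_DM] at hp
    dsimp only at hp
    obtain ⟨⟨h1, h2, h3, h4, h5, h6, h7⟩, hc⟩ := hp
    rw [mem_D3]
    dsimp only
    exact ⟨h1, hc, h4, h2, h5, h6, h7⟩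
  · intro q hq
    obtain ⟨⟨t1, t2, t3⟩, s1, s2, s3⟩ := q
    rw [mem_D3] at hq
    dsimp only at hq
    obtain ⟨h1, h2, h3, h4, h5, h6, h7⟩ := hq
    rw [Finset.mem_filter, mem_DM]
    dsimp only
    exact ⟨⟨h1, h4, by omega, h3, h5, h6, h7⟩, h2⟩
  · intro p _; rfl
  · intro q _; rfl
  · intro p _; rfl

lemma piece2 (n : ℕ) (F : (ℕ×ℕ) → (ℕ×ℕ) → (ℕ×ℕ) → ℚ) :
    ∑ p ∈ (DM n).filter (fun p => p.2.1.1 < p.1.1 ∧ p.1.1 < p.2.1.2), F p.1 p.2.1 p.2.2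
      = ∑ q ∈ D3 n, F (q.1.2.1, q.2.2.1) (q.1.1, q.1.2.2) (q.2.1, q.2.2.2) := by
  refine Finset.sum_nbij' (fun p => ((p.2.1.1, p.1.1, p.2.1.2), (p.2.2.1, p.1.2, p.2.2.2)))
    (fun q => ((q.1.2.1, q.2.2.1), ((q.1.1, q.1.2.2), (q.2.1, q.2.2.2)))) ?_ ?_ ?_ ?_ ?_
  · intro p hp
    obtain ⟨⟨w, x⟩, ⟨u1, u2⟩, v1, v2⟩ := p
    rw [Finset.mem_filter, mem_DM] at hp
    dsimp only at hp
    obtain ⟨⟨h1, h2, h3, h4, h5, h6, h7⟩, hc1, hc2⟩ := hp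
    rw [mem_D3]
    dsimp only
    exact ⟨h3, hc1, hc2, h5, h2, h6, by linarith⟩
  · intro q hq
    obtain ⟨⟨t1, t2, t3⟩, s1, s2, s3⟩ := q
    rw [mem_D3] at hq
    dsimp only at hq
    obtain ⟨h1, h2, h3, h4, h5, h6, h7⟩ := hq
    rw [Finset.mem_filter, mem_DM]
    dsimp only
    exact ⟨⟨by omega, h5, h1, by omega, h4, h6, by linarith⟩, h2, h3⟩
  · intro p _; rfl
  · intro q _; rfl
  · intro p _; rfl

lemma piece3 (n : ℕ) (F : (ℕ×ℕ) → (ℕ×ℕ) → (ℕ×ℕ) → ℚ) :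
    ∑ p ∈ (DM n).filter (fun p => p.2.1.2 < p.1.1), F p.1 p.2.1 p.2.2
      = ∑ q ∈ D3 n, F (q.1.2.2, q.2.2.2) (q.1.1, q.1.2.1) (q.2.1, q.2.2.1) := by
  refine Finset.sum_nbij' (fun p => ((p.2.1.1, p.2.1.2, p.1.1), (p.2.2.1, p.2.2.2, p.1.2)))
    (fun q => ((q.1.2.2, q.2.2.2), ((q.1.1, q.1.2.1), (q.2.1, q.2.2.1)))) ?_ ?_ ?_ ?_ ?_
  · intro p hp
    obtain ⟨⟨w, x⟩, ⟨u1, u2⟩, v1, v2⟩ := p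
    rw [Finset.mem_filter, mem_DM] at hp
    dsimp only at hp
    obtain ⟨⟨h1, h2, h3, h4, h5, h6, h7⟩, hc⟩ := hp
    rw [mem_D3]
    dsimp only
    exact ⟨h3, h4, hc, h5, h6, h2, by linarith⟩
  · intro q hq
    obtain ⟨⟨t1, t2, t3⟩, s1, s2, s3⟩ := q
    rw [mem_D3] at hq
    dsimp only at hq
    obtain ⟨h1, h2, h3, h4, h5, h6, h7⟩ := hq
    rw [Finset.mem_filter, mem_DM]
    dsimp only
    exact ⟨⟨by omega, h6, h1, h2, h4, h5, by linarith⟩, h3⟩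
  · intro p _; rfl
  · intro q _; rfl
  · intro p _; rfl

lemma piece4 (n : ℕ) (F : (ℕ×ℕ) → (ℕ×ℕ) → (ℕ×ℕ) → ℚ) :
    ∑ p ∈ (DM n).filter (fun p => p.1.1 = p.2.1.1), F p.1 p.2.1 p.2.2
      = ∑ q ∈ (D2 n).sigma (fun p => Ico 1 p.2.1),
          F (q.1.1.1, q.1.2.1 - q.2) q.1.1 (q.2, q.1.2.2) := by
  refine Finset.sum_nbij' (fun p => ⟨(p.2.1, (p.1.2 + p.2.2.1, p.2.2.2)), p.2.2.1⟩)
    (fun q => ((q.1.1.1, q.1.2.1 - q.2), (q.1.1, (q.2, q.1.2.2)))) ?_ ?_ ?_ ?_ ?_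
  · intro p hp
    obtain ⟨⟨w, x⟩, ⟨u1, u2⟩, v1, v2⟩ := p
    rw [Finset.mem_filter, mem_DM] at hp
    dsimp only at hp
    obtain ⟨⟨h1, h2, h3, h4, h5, h6, h7⟩, hc⟩ := hp
    subst hc
    rw [Finset.mem_sigma, mem_D2, Finset.mem_Ico]
    dsimp only
    refine ⟨⟨h3, h4, by omega, h6, ?_⟩, by omega, by omega⟩
    rw [Nat.mul_add]
    linarith
  · intro q hq
    obtain ⟨⟨⟨u1, u2⟩, W, v2⟩, v1⟩ := q
    rw [Finset.mem_sigma, mem_D2, Finset.mem_Ico] at hq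
    dsimp only at hq
    obtain ⟨⟨h1, h2, h3, h4, h5⟩, h6, h7⟩ := hq
    rw [Finset.mem_filter, mem_DM]
    dsimp only
    have key : u1 * (W - v1) + u1 * v1 = u1 * W := by
      rw [← Nat.mul_add]
      congr 1
      omega
    exact ⟨⟨h1, by omega, h1, h2, by omega, h4, by linarith⟩, rfl⟩
  · intro p hp
    obtain ⟨⟨w, x⟩, ⟨u1, u2⟩, v1, v2⟩ := p
    rw [Finset.mem_filter, mem_DM] at hp
    dsimp only at hp
    obtain ⟨⟨h1, h2, h3, h4, h5, h6, h7⟩, hc⟩ := hp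
    subst hc
    simp only [Prod.mk.injEq, true_and, and_true]
    omega
  · intro q hq
    obtain ⟨⟨⟨u1, u2⟩, W, v2⟩, v1⟩ := q
    rw [Finset.mem_sigma, mem_D2, Finset.mem_Ico] at hq
    dsimp only at hq
    obtain ⟨⟨h1, h2, h3, h4, h5⟩, h6, h7⟩ := hq
    simp only [Sigma.mk.inj_iff, Prod.mk.injEq, heq_eq_eq, true_and, and_true]
    omega
  · intro p hp
    obtain ⟨⟨w, x⟩, ⟨u1, u2⟩, v1, v2⟩ := p
    rw [Finset.mem_filter, mem_DM] at hp
    dsimp only at hp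
    obtain ⟨⟨h1, h2, h3, h4, h5, h6, h7⟩, hc⟩ := hp
    subst hc
    dsimp only
    rw [Nat.add_sub_cancel]

lemma piece5 (n : ℕ) (F : (ℕ×ℕ) → (ℕ×ℕ) → (ℕ×ℕ) → ℚ) :
    ∑ p ∈ (DM n).filter (fun p => p.1.1 = p.2.1.2), F p.1 p.2.1 p.2.2
      = ∑ q ∈ (D2 n).sigma (fun p => Ico 1 p.2.2),
          F (q.1.1.2, q.1.2.2 - q.2) q.1.1 (q.1.2.1, q.2) := by
  refine Finset.sum_nbij' (fun p => ⟨(p.2.1, (p.2.2.1, p.1.2 + p.2.2.2)), p.2.2.2⟩)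
    (fun q => ((q.1.1.2, q.1.2.2 - q.2), (q.1.1, (q.1.2.1, q.2)))) ?_ ?_ ?_ ?_ ?_
  · intro p hp
    obtain ⟨⟨w, x⟩, ⟨u1, u2⟩, v1, v2⟩ := p
    rw [Finset.mem_filter, mem_DM] at hp
    dsimp only at hp
    obtain ⟨⟨h1, h2, h3, h4, h5, h6, h7⟩, hc⟩ := hp
    subst hc
    rw [Finset.mem_sigma, mem_D2, Finset.mem_Ico]
    dsimp only
    refine ⟨⟨h3, h4, h5, by omega, ?_⟩, by omega, by omega⟩
    rw [Nat.mul_add]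
    linarith
  · intro q hq
    obtain ⟨⟨⟨u1, u2⟩, v1, W⟩, v2⟩ := q
    rw [Finset.mem_sigma, mem_D2, Finset.mem_Ico] at hq
    dsimp only at hq
    obtain ⟨⟨h1, h2, h3, h4, h5⟩, h6, h7⟩ := hq
    rw [Finset.mem_filter, mem_DM]
    dsimp only
    have key : u2 * (W - v2) + u2 * v2 = u2 * W := by
      rw [← Nat.mul_add]
      congr 1
      omega
    exact ⟨⟨by omega, by omega, h1, h2, h3, by omega, by linarith⟩, rfl⟩
  · intro p hp
    obtain ⟨⟨w, x⟩, ⟨u1, u2⟩, v1, v2⟩ := p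
    rw [Finset.mem_filter, mem_DM] at hp
    dsimp only at hp
    obtain ⟨⟨h1, h2, h3, h4, h5, h6, h7⟩, hc⟩ := hp
    subst hc
    simp only [Prod.mk.injEq, true_and, and_true]
    omega
  · intro q hq
    obtain ⟨⟨⟨u1, u2⟩, v1, W⟩, v2⟩ := q
    rw [Finset.mem_sigma, mem_D2, Finset.mem_Ico] at hq
    dsimp only at hq
    obtain ⟨⟨h1, h2, h3, h4, h5⟩, h6, h7⟩ := hq
    simp only [Sigma.mk.inj_iff, Prod.mk.injEq, heq_eq_eq, true_and, and_true]
    omega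
  · intro p hp
    obtain ⟨⟨w, x⟩, ⟨u1, u2⟩, v1, v2⟩ := p
    rw [Finset.mem_filter, mem_DM] at hp
    dsimp only at hp
    obtain ⟨⟨h1, h2, h3, h4, h5, h6, h7⟩, hc⟩ := hp
    subst hc
    dsimp only
    rw [Nat.add_sub_cancel]

lemma split5 (n : ℕ) (F : (ℕ×ℕ) → (ℕ×ℕ) → (ℕ×ℕ) → ℚ) :
    ∑ p ∈ DM n, F p.1 p.2.1 p.2.2
      = ∑ q ∈ D3 n, F (q.1.1, q.2.1) (q.1.2.1, q.1.2.2) (q.2.2.1, q.2.2.2)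
      + ∑ q ∈ D3 n, F (q.1.2.1, q.2.2.1) (q.1.1, q.1.2.2) (q.2.1, q.2.2.2)
      + ∑ q ∈ D3 n, F (q.1.2.2, q.2.2.2) (q.1.1, q.1.2.1) (q.2.1, q.2.2.1)
      + ∑ q ∈ (D2 n).sigma (fun p => Ico 1 p.2.1),
          F (q.1.1.1, q.1.2.1 - q.2) q.1.1 (q.2, q.1.2.2)
      + ∑ q ∈ (D2 n).sigma (fun p => Ico 1 p.2.2),
          F (q.1.1.2, q.1.2.2 - q.2) q.1.1 (q.1.2.1, q.2) := by
  have e1 : ((DM n).filter (fun p => ¬ p.1.1 < p.2.1.1)).filter (fun p => p.1.1 = p.2.1.1)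
      = (DM n).filter (fun p => p.1.1 = p.2.1.1) := by
    rw [Finset.filter_filter]
    exact Finset.filter_congr (fun p hp => ⟨fun h => h.2, fun h => ⟨by omega, h⟩⟩)
  have e2 : ((DM n).filter (fun p => ¬ p.1.1 < p.2.1.1)).filter (fun p => ¬ p.1.1 = p.2.1.1)
      = (DM n).filter (fun p => p.2.1.1 < p.1.1) := by
    rw [Finset.filter_filter]
    exact Finset.filter_congr (fun p hp => ⟨fun h => by omega, fun h => ⟨by omega, by omega⟩⟩)
  have e3 : ((DM n).filter (fun p => p.2.1.1 < p.1.1)).filter (fun p => p.1.1 < p.2.1.2)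
      = (DM n).filter (fun p => p.2.1.1 < p.1.1 ∧ p.1.1 < p.2.1.2) := by
    rw [Finset.filter_filter]
  have e4 : ((DM n).filter (fun p => p.2.1.1 < p.1.1)).filter (fun p => ¬ p.1.1 < p.2.1.2)
      = (DM n).filter (fun p => ¬ p.1.1 < p.2.1.2) := by
    rw [Finset.filter_filter]
    refine Finset.filter_congr (fun p hp => ⟨fun h => h.2, fun h => ⟨?_, h⟩⟩)
    have h4 := (mem_DM.mp hp).2.2.2.1
    omega
  have e5 : ((DM n).filter (fun p => ¬ p.1.1 < p.2.1.2)).filter (fun p => p.1.1 = p.2.1.2)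
      = (DM n).filter (fun p => p.1.1 = p.2.1.2) := by
    rw [Finset.filter_filter]
    exact Finset.filter_congr (fun p hp => ⟨fun h => h.2, fun h => ⟨by omega, h⟩⟩)
  have e6 : ((DM n).filter (fun p => ¬ p.1.1 < p.2.1.2)).filter (fun p => ¬ p.1.1 = p.2.1.2)
      = (DM n).filter (fun p => p.2.1.2 < p.1.1) := by
    rw [Finset.filter_filter]
    exact Finset.filter_congr (fun p hp => ⟨fun h => by omega, fun h => ⟨by omega, by omega⟩⟩)
  have h1 := (Finset.sum_filter_add_sum_filter_not (DM n) (fun p => p.1.1 < p.2.1.1)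
      (fun p => F p.1 p.2.1 p.2.2)).symm
  have h2 := (Finset.sum_filter_add_sum_filter_not
      ((DM n).filter (fun p => ¬ p.1.1 < p.2.1.1)) (fun p => p.1.1 = p.2.1.1)
      (fun p => F p.1 p.2.1 p.2.2)).symm
  have h3 := (Finset.sum_filter_add_sum_filter_not
      ((DM n).filter (fun p => p.2.1.1 < p.1.1)) (fun p => p.1.1 < p.2.1.2)
      (fun p => F p.1 p.2.1 p.2.2)).symm
  have h4 := (Finset.sum_filter_add_sum_filter_not
      ((DM n).filter (fun p => ¬ p.1.1 < p.2.1.2)) (fun p => p.1.1 = p.2.1.2)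
      (fun p => F p.1 p.2.1 p.2.2)).symm
  rw [e1, e2] at h2
  rw [e3, e4] at h3
  rw [e5, e6] at h4
  rw [h1, h2, h3, h4]
  rw [piece1 n F, piece2 n F, piece3 n F, piece4 n F, piece5 n F]
  ring

end Split
section Coeff

lemma coeff_gb2 (d1 d2 k1 k2 n : ℕ) :
    (PowerSeries.coeff n) (gb2 d1 d2 k1 k2)
      = ∑ p ∈ D2 n, ((p.1.1 : ℚ) ^ d1 / (Nat.factorial d1 : ℚ)) *
          ((p.1.2 : ℚ) ^ d2 / (Nat.factorial d2 : ℚ)) *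
          ((p.2.1 : ℚ) ^ (k1 - 1) / (Nat.factorial (k1 - 1) : ℚ)) *
          ((p.2.2 : ℚ) ^ (k2 - 1) / (Nat.factorial (k2 - 1) : ℚ)) := by
  simp only [gb2, coeff_mk, D2, Finset.sum_filter, Finset.sum_product]

lemma coeff_gb3 (d1 d2 d3 k1 k2 k3 n : ℕ) :
    (PowerSeries.coeff n) (gb3 d1 d2 d3 k1 k2 k3)
      = ∑ q ∈ D3 n, ((q.1.1 : ℚ) ^ d1 / (Nat.factorial d1 : ℚ)) *
          ((q.1.2.1 : ℚ) ^ d2 / (Nat.factorial d2 : ℚ)) *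
          ((q.1.2.2 : ℚ) ^ d3 / (Nat.factorial d3 : ℚ)) *
          ((q.2.1 : ℚ) ^ (k1 - 1) / (Nat.factorial (k1 - 1) : ℚ)) *
          ((q.2.2.1 : ℚ) ^ (k2 - 1) / (Nat.factorial (k2 - 1) : ℚ)) *
          ((q.2.2.2 : ℚ) ^ (k3 - 1) / (Nat.factorial (k3 - 1) : ℚ)) := by
  simp only [gb3, coeff_mk, D3, Finset.sum_filter, Finset.sum_product]

end Coeff

section Faulhaber

lemma exists_faulhaber (p : ℕ) (hp : 1 ≤ p) :
    ∃ s : ℕ → ℚ, ∀ W : ℕ, 0 < W →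
      ∑ v ∈ Finset.Ico 1 W, (v : ℚ) ^ p = ∑ j ∈ Finset.range (p + 1), s j * (W : ℚ) ^ (j + 1) := by
  refine ⟨fun j => bernoulli (p - j) * ((p + 1).choose (p - j)) / (p + 1), fun W hW => ?_⟩
  have h0 : ∑ v ∈ Finset.range W, (v : ℚ) ^ p = ∑ v ∈ Finset.Ico 1 W, (v : ℚ) ^ p := by
    rw [Finset.range_eq_Ico, Finset.sum_eq_sum_Ico_succ_bot hW]
    simp [zero_pow (by omega : p ≠ 0)]
  rw [← h0, sum_range_pow]
  conv_lhs => rw [← Finset.sum_range_reflect]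
  refine Finset.sum_congr rfl ?_
  intro j hj
  rw [Finset.mem_range] at hj
  have h1 : p + 1 - 1 - j = p - j := by omega
  have h2 : p + 1 - (p - j) = j + 1 := by omega
  rw [h1, h2]
  ring

end Faulhaber
section Vseries

noncomputable def V2 (e1 e2 f1 f2 : ℕ) : PowerSeries ℚ :=
  PowerSeries.mk fun n => ∑ p ∈ D2 n,
    (p.1.1 : ℚ) ^ e1 * (p.1.2 : ℚ) ^ e2 * (p.2.1 : ℚ) ^ f1 * (p.2.2 : ℚ) ^ f2

noncomputable def V3 (f1 f2 f3 : ℕ) : PowerSeries ℚ :=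
  PowerSeries.mk fun n => ∑ q ∈ D3 n,
    (q.2.1 : ℚ) ^ f1 * (q.2.2.1 : ℚ) ^ f2 * (q.2.2.2 : ℚ) ^ f3

lemma V2_eq (e1 e2 f1 f2 : ℕ) :
    V2 e1 e2 f1 f2 = ((e1.factorial * e2.factorial * f1.factorial * f2.factorial : ℕ) : ℚ) •
      gb2 e1 e2 (f1+1) (f2+1) := by
  ext n
  rw [V2, coeff_mk, map_smul, coeff_gb2, smul_eq_mul, Finset.mul_sum]
  refine Finset.sum_congr rfl fun p _ => ?_
  have h1 : (e1.factorial : ℚ) ≠ 0 := Nat.cast_ne_zero.mpr (Nat.factorial_ne_zero _)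
  have h2 : (e2.factorial : ℚ) ≠ 0 := Nat.cast_ne_zero.mpr (Nat.factorial_ne_zero _)
  have h3 : (f1.factorial : ℚ) ≠ 0 := Nat.cast_ne_zero.mpr (Nat.factorial_ne_zero _)
  have h4 : (f2.factorial : ℚ) ≠ 0 := Nat.cast_ne_zero.mpr (Nat.factorial_ne_zero _)
  simp only [Nat.add_sub_cancel]
  push_cast
  field_simp

lemma V3_eq (f1 f2 f3 : ℕ) :
    V3 f1 f2 f3 = ((f1.factorial * f2.factorial * f3.factorial : ℕ) : ℚ) •
      g3 (f1+1) (f2+1) (f3+1) := by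
  ext n
  rw [V3, coeff_mk, map_smul, g3, coeff_gb3, smul_eq_mul, Finset.mul_sum]
  refine Finset.sum_congr rfl fun p _ => ?_
  have h3 : (f1.factorial : ℚ) ≠ 0 := Nat.cast_ne_zero.mpr (Nat.factorial_ne_zero _)
  have h4 : (f2.factorial : ℚ) ≠ 0 := Nat.cast_ne_zero.mpr (Nat.factorial_ne_zero _)
  have h5 : (f3.factorial : ℚ) ≠ 0 := Nat.cast_ne_zero.mpr (Nat.factorial_ne_zero _)
  simp only [Nat.add_sub_cancel, pow_zero, Nat.factorial_zero, Nat.cast_one, div_one, one_mul]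
  push_cast
  field_simp

end Vseries
section Key

lemma keyn (A B n : ℕ) (hA : 1 ≤ A) (hB : 1 ≤ B) (s t : ℕ → ℚ)
    (hs : ∀ W : ℕ, 0 < W →
      ∑ v ∈ Finset.Ico 1 W, (v : ℚ) ^ A = ∑ j ∈ Finset.range (A+1), s j * (W : ℚ) ^ (j+1))
    (ht : ∀ W : ℕ, 0 < W →
      ∑ v ∈ Finset.Ico 1 W, (v : ℚ) ^ B = ∑ j ∈ Finset.range (B+1), t j * (W : ℚ) ^ (j+1)) :
    (∑ q ∈ D3 n, (q.2.2.1 : ℚ) ^ A * (q.2.2.2 : ℚ) ^ B)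
      + (∑ q ∈ D3 n, (q.2.1 : ℚ) ^ A * (q.2.2.2 : ℚ) ^ B)
      + (∑ q ∈ D3 n, (q.2.1 : ℚ) ^ A * (q.2.2.1 : ℚ) ^ B)
      + (∑ j ∈ Finset.range (A+1), s j * ∑ p ∈ D2 n, (p.2.1 : ℚ) ^ (j+1) * (p.2.2 : ℚ) ^ B)
      + (∑ j ∈ Finset.range (B+1), t j * ∑ p ∈ D2 n, (p.2.1 : ℚ) ^ A * (p.2.2 : ℚ) ^ (j+1))
    = (∑ i ∈ Finset.range (B+1), (B.choose i : ℚ) *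
          ∑ q ∈ D3 n, (q.2.1 : ℚ) ^ A * (q.2.2.1 : ℚ) ^ i * (q.2.2.2 : ℚ) ^ (B - i))
      + (∑ i ∈ Finset.range (A+1), (A.choose i : ℚ) *
          ∑ q ∈ D3 n, (q.2.1 : ℚ) ^ i * (q.2.2.1 : ℚ) ^ (A - i) * (q.2.2.2 : ℚ) ^ B)
      + (∑ q ∈ D3 n, (q.2.2.1 : ℚ) ^ A * (q.2.2.2 : ℚ) ^ B)
      + (∑ p ∈ D2 n, (p.1.2 : ℚ) * (p.2.1 : ℚ) ^ A * (p.2.2 : ℚ) ^ B)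
      - 2 * ∑ p ∈ D2 n, (p.2.1 : ℚ) ^ A * (p.2.2 : ℚ) ^ B := by
  -- the two splittings of the master sum
  have hsplitu := split5 n (fun _ _ v => (v.1 : ℚ) ^ A * (v.2 : ℚ) ^ B)
  have hsplitd := split5 n (fun _ u _ => ((u.2 : ℚ) - (u.1 : ℚ)) ^ A * (u.1 : ℚ) ^ B)
  dsimp only at hsplitu hsplitd
  -- master sums agree via conjugation
  have hM : ∑ p ∈ DM n, (p.2.2.1 : ℚ) ^ A * (p.2.2.2 : ℚ) ^ B
      = ∑ p ∈ DM n, ((p.2.1.2 : ℚ) - (p.2.1.1 : ℚ)) ^ A * (p.2.1.1 : ℚ) ^ B := by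
    rw [← sumDM_conj n (fun p => ((p.2.1.2 : ℚ) - (p.2.1.1 : ℚ)) ^ A * (p.2.1.1 : ℚ) ^ B)]
    refine Finset.sum_congr rfl fun p _ => ?_
    obtain ⟨⟨w, x⟩, ⟨u1, u2⟩, v1, v2⟩ := p
    dsimp only [conjM, conj2]
    push_cast
    ring
  -- piece 4 on the u-side : Faulhaber
  have hp4u : ∑ q ∈ (D2 n).sigma (fun p => Finset.Ico 1 p.2.1), (q.2 : ℚ) ^ A * (q.1.2.2 : ℚ) ^ B
      = ∑ j ∈ Finset.range (A+1), s j * ∑ p ∈ D2 n, (p.2.1 : ℚ) ^ (j+1) * (p.2.2 : ℚ) ^ B := by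
    rw [Finset.sum_sigma]
    have step1 : ∀ p ∈ D2 n, ∑ v1 ∈ Finset.Ico 1 p.2.1, (v1 : ℚ) ^ A * (p.2.2 : ℚ) ^ B
        = ∑ j ∈ Finset.range (A+1), s j * (p.2.1 : ℚ) ^ (j+1) * (p.2.2 : ℚ) ^ B := by
      intro p hp
      rw [← Finset.sum_mul, hs _ (mem_D2.mp hp).2.2.1, Finset.sum_mul]
    rw [Finset.sum_congr rfl step1, Finset.sum_comm]
    refine Finset.sum_congr rfl fun j _ => ?_
    rw [Finset.mul_sum]
    refine Finset.sum_congr rfl fun p _ => ?_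
    ring
  have hp5u : ∑ q ∈ (D2 n).sigma (fun p => Finset.Ico 1 p.2.2), (q.1.2.1 : ℚ) ^ A * (q.2 : ℚ) ^ B
      = ∑ j ∈ Finset.range (B+1), t j * ∑ p ∈ D2 n, (p.2.1 : ℚ) ^ A * (p.2.2 : ℚ) ^ (j+1) := by
    rw [Finset.sum_sigma]
    have step1 : ∀ p ∈ D2 n, ∑ v2 ∈ Finset.Ico 1 p.2.2, (p.2.1 : ℚ) ^ A * (v2 : ℚ) ^ B
        = ∑ j ∈ Finset.range (B+1), t j * ((p.2.1 : ℚ) ^ A * (p.2.2 : ℚ) ^ (j+1)) := by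
      intro p hp
      rw [← Finset.mul_sum, ht _ (mem_D2.mp hp).2.2.2.1, Finset.mul_sum]
      refine Finset.sum_congr rfl fun j _ => ?_
      ring
    rw [Finset.sum_congr rfl step1, Finset.sum_comm]
    refine Finset.sum_congr rfl fun j _ => ?_
    rw [Finset.mul_sum]
  -- piece 1 on the dual side : conjugate and binomial expansion
  have hp1d : ∑ q ∈ D3 n, ((q.1.2.2 : ℚ) - (q.1.2.1 : ℚ)) ^ A * (q.1.2.1 : ℚ) ^ B
      = ∑ i ∈ Finset.range (B+1), (B.choose i : ℚ) *
          ∑ q ∈ D3 n, (q.2.1 : ℚ) ^ A * (q.2.2.1 : ℚ) ^ i * (q.2.2.2 : ℚ) ^ (B - i) := by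
    rw [← sumD3_conj n (fun q => ((q.1.2.2 : ℚ) - (q.1.2.1 : ℚ)) ^ A * (q.1.2.1 : ℚ) ^ B)]
    have step1 : ∀ q ∈ D3 n,
        ((((conj3 q).1.2.2 : ℕ) : ℚ) - (((conj3 q).1.2.1 : ℕ) : ℚ)) ^ A * (((conj3 q).1.2.1 : ℕ) : ℚ) ^ B
        = ∑ i ∈ Finset.range (B+1),
            (B.choose i : ℚ) * ((q.2.1 : ℚ) ^ A * (q.2.2.1 : ℚ) ^ i * (q.2.2.2 : ℚ) ^ (B - i)) := by
      intro q _
      obtain ⟨⟨t1, t2, t3⟩, s1, s2, s3⟩ := q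
      dsimp only [conj3]
      have e1 : ((s1 + s2 + s3 : ℕ) : ℚ) - ((s2 + s3 : ℕ) : ℚ) = (s1 : ℚ) := by push_cast; ring
      rw [e1]
      have e2 : ((s2 + s3 : ℕ) : ℚ) = (s2 : ℚ) + (s3 : ℚ) := by push_cast; ring
      rw [e2, add_pow, Finset.mul_sum]
      refine Finset.sum_congr rfl fun i _ => ?_
      ring
    rw [Finset.sum_congr rfl step1, Finset.sum_comm]
    refine Finset.sum_congr rfl fun i _ => ?_
    rw [Finset.mul_sum]
  have hp2d : ∑ q ∈ D3 n, ((q.1.2.2 : ℚ) - (q.1.1 : ℚ)) ^ A * (q.1.1 : ℚ) ^ B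
      = ∑ i ∈ Finset.range (A+1), (A.choose i : ℚ) *
          ∑ q ∈ D3 n, (q.2.1 : ℚ) ^ i * (q.2.2.1 : ℚ) ^ (A - i) * (q.2.2.2 : ℚ) ^ B := by
    rw [← sumD3_conj n (fun q => ((q.1.2.2 : ℚ) - (q.1.1 : ℚ)) ^ A * (q.1.1 : ℚ) ^ B)]
    have step1 : ∀ q ∈ D3 n,
        ((((conj3 q).1.2.2 : ℕ) : ℚ) - (((conj3 q).1.1 : ℕ) : ℚ)) ^ A * (((conj3 q).1.1 : ℕ) : ℚ) ^ B
        = ∑ i ∈ Finset.range (A+1),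
            (A.choose i : ℚ) * ((q.2.1 : ℚ) ^ i * (q.2.2.1 : ℚ) ^ (A - i) * (q.2.2.2 : ℚ) ^ B) := by
      intro q _
      obtain ⟨⟨t1, t2, t3⟩, s1, s2, s3⟩ := q
      dsimp only [conj3]
      have e1 : ((s1 + s2 + s3 : ℕ) : ℚ) - ((s3 : ℕ) : ℚ) = (s1 : ℚ) + (s2 : ℚ) := by push_cast; ring
      rw [e1, add_pow, Finset.sum_mul]
      refine Finset.sum_congr rfl fun i _ => ?_
      ring
    rw [Finset.sum_congr rfl step1, Finset.sum_comm]
    refine Finset.sum_congr rfl fun i _ => ?_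
    rw [Finset.mul_sum]
  have hp3d : ∑ q ∈ D3 n, ((q.1.2.1 : ℚ) - (q.1.1 : ℚ)) ^ A * (q.1.1 : ℚ) ^ B
      = ∑ q ∈ D3 n, (q.2.2.1 : ℚ) ^ A * (q.2.2.2 : ℚ) ^ B := by
    rw [← sumD3_conj n (fun q => ((q.1.2.1 : ℚ) - (q.1.1 : ℚ)) ^ A * (q.1.1 : ℚ) ^ B)]
    refine Finset.sum_congr rfl fun q _ => ?_
    obtain ⟨⟨t1, t2, t3⟩, s1, s2, s3⟩ := q
    dsimp only [conj3]
    have e1 : ((s2 + s3 : ℕ) : ℚ) - ((s3 : ℕ) : ℚ) = (s2 : ℚ) := by push_cast; ring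
    rw [e1]
  -- pieces 4 and 5 on the dual side
  have hp4d : ∑ q ∈ (D2 n).sigma (fun p => Finset.Ico 1 p.2.1),
        ((q.1.1.2 : ℚ) - (q.1.1.1 : ℚ)) ^ A * (q.1.1.1 : ℚ) ^ B
      = ∑ p ∈ D2 n, ((p.2.1 : ℚ) - 1) * (((p.1.2 : ℚ) - (p.1.1 : ℚ)) ^ A * (p.1.1 : ℚ) ^ B) := by
    rw [Finset.sum_sigma]
    refine Finset.sum_congr rfl fun p hp => ?_
    dsimp only
    rw [Finset.sum_const, Nat.card_Ico, nsmul_eq_mul]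
    have h3 := (mem_D2.mp hp).2.2.1
    congr 1
    push_cast [Nat.cast_sub (by omega : 1 ≤ p.2.1)]
    ring
  have hp5d : ∑ q ∈ (D2 n).sigma (fun p => Finset.Ico 1 p.2.2),
        ((q.1.1.2 : ℚ) - (q.1.1.1 : ℚ)) ^ A * (q.1.1.1 : ℚ) ^ B
      = ∑ p ∈ D2 n, ((p.2.2 : ℚ) - 1) * (((p.1.2 : ℚ) - (p.1.1 : ℚ)) ^ A * (p.1.1 : ℚ) ^ B) := by
    rw [Finset.sum_sigma]
    refine Finset.sum_congr rfl fun p hp => ?_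
    dsimp only
    rw [Finset.sum_const, Nat.card_Ico, nsmul_eq_mul]
    have h4 := (mem_D2.mp hp).2.2.2.1
    congr 1
    push_cast [Nat.cast_sub (by omega : 1 ≤ p.2.2)]
    ring
  -- conjugate the combined pieces 4+5 on the dual side
  have hp45 : (∑ p ∈ D2 n, ((p.2.1 : ℚ) - 1) * (((p.1.2 : ℚ) - (p.1.1 : ℚ)) ^ A * (p.1.1 : ℚ) ^ B))
      + (∑ p ∈ D2 n, ((p.2.2 : ℚ) - 1) * (((p.1.2 : ℚ) - (p.1.1 : ℚ)) ^ A * (p.1.1 : ℚ) ^ B))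
      = (∑ p ∈ D2 n, (p.1.2 : ℚ) * (p.2.1 : ℚ) ^ A * (p.2.2 : ℚ) ^ B)
        - 2 * ∑ p ∈ D2 n, (p.2.1 : ℚ) ^ A * (p.2.2 : ℚ) ^ B := by
    have hconj : ∀ G : P2 → ℚ, ∑ p ∈ D2 n, G (conj2 p) = ∑ p ∈ D2 n, G p := sumD2_conj n
    have h1 : ∑ p ∈ D2 n, ((p.2.1 : ℚ) - 1) * (((p.1.2 : ℚ) - (p.1.1 : ℚ)) ^ A * (p.1.1 : ℚ) ^ B)
        = ∑ p ∈ D2 n, ((p.1.2 : ℚ) - (p.1.1 : ℚ) - 1) * ((p.2.1 : ℚ) ^ A * (p.2.2 : ℚ) ^ B) := by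
      rw [← hconj (fun p => ((p.2.1 : ℚ) - 1) * (((p.1.2 : ℚ) - (p.1.1 : ℚ)) ^ A * (p.1.1 : ℚ) ^ B))]
      refine Finset.sum_congr rfl fun p hp => ?_
      obtain ⟨h1', h2', h3', h4', h5'⟩ := mem_D2.mp hp
      obtain ⟨⟨u1, u2⟩, v1, v2⟩ := p
      dsimp only [conj2] at *
      rw [Nat.cast_sub (le_of_lt h2')]
      push_cast
      ring_nf
    have h2 : ∑ p ∈ D2 n, ((p.2.2 : ℚ) - 1) * (((p.1.2 : ℚ) - (p.1.1 : ℚ)) ^ A * (p.1.1 : ℚ) ^ B)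
        = ∑ p ∈ D2 n, ((p.1.1 : ℚ) - 1) * ((p.2.1 : ℚ) ^ A * (p.2.2 : ℚ) ^ B) := by
      rw [← hconj (fun p => ((p.2.2 : ℚ) - 1) * (((p.1.2 : ℚ) - (p.1.1 : ℚ)) ^ A * (p.1.1 : ℚ) ^ B))]
      refine Finset.sum_congr rfl fun p hp => ?_
      obtain ⟨h1', h2', h3', h4', h5'⟩ := mem_D2.mp hp
      obtain ⟨⟨u1, u2⟩, v1, v2⟩ := p
      dsimp only [conj2] at *
      push_cast
      ring
    rw [h1, h2, ← Finset.sum_add_distrib, Finset.mul_sum, ← Finset.sum_sub_distrib]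
    refine Finset.sum_congr rfl fun p _ => ?_
    ring
  -- put everything together
  rw [hp4u, hp5u] at hsplitu
  rw [hp1d, hp2d, hp3d, hp4d, hp5d] at hsplitd
  rw [hsplitu] at hM
  rw [hsplitd] at hM
  linarith [hM, hp45]

end Key
lemma keyW (A B : ℕ) (hA : 1 ≤ A) (hB : 1 ≤ B) (s t : ℕ → ℚ)
    (hs : ∀ W : ℕ, 0 < W →
      ∑ v ∈ Finset.Ico 1 W, (v : ℚ) ^ A = ∑ j ∈ Finset.range (A+1), s j * (W : ℚ) ^ (j+1))
    (ht : ∀ W : ℕ, 0 < W →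
      ∑ v ∈ Finset.Ico 1 W, (v : ℚ) ^ B = ∑ j ∈ Finset.range (B+1), t j * (W : ℚ) ^ (j+1)) :
    V3 0 A B + V3 A 0 B + V3 A B 0
      + (∑ j ∈ Finset.range (A+1), s j • V2 0 0 (j+1) B)
      + (∑ j ∈ Finset.range (B+1), t j • V2 0 0 A (j+1))
    = (∑ i ∈ Finset.range (B+1), (B.choose i : ℚ) • V3 A i (B - i))
      + (∑ i ∈ Finset.range (A+1), (A.choose i : ℚ) • V3 i (A - i) B)
      + V3 0 A B + V2 0 1 A B - (2:ℚ) • V2 0 0 A B := by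
  ext n
  have h := keyn A B n hA hB s t hs ht
  simp only [map_add, map_sub, map_sum, map_smul, smul_eq_mul, V2, V3, coeff_mk,
    pow_zero, pow_one, one_mul, mul_one]
  linear_combination h
section Assembly

lemma set_mem_gsh2 {N a b : ℕ} (h1 : 1 ≤ a) (h2 : 1 ≤ b) (h3 : a + b ≤ N) :
    gsh2 a b ∈ gshSpanSet N := by
  unfold gshSpanSet
  exact Set.mem_union_left _ (Set.mem_union_right _ ⟨a, b, h1, h2, h3, rfl⟩)

lemma set_mem_gsh3 {N a b c : ℕ} (h1 : 1 ≤ a) (h2 : 1 ≤ b) (h3 : 1 ≤ c) (h4 : a + b + c ≤ N) :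
    gsh3 a b c ∈ gshSpanSet N := by
  unfold gshSpanSet
  exact Set.mem_union_right _ ⟨a, b, c, h1, h2, h3, h4, rfl⟩

lemma gsh2_eq_g2 {a b : ℕ} (ha : a ≠ 1) : gsh2 a b = g2 a b := by
  rw [gsh2, if_neg ha, zero_smul, add_zero]

lemma gsh3_eq_g3 {a b c : ℕ} (ha : a ≠ 1) (hb : b ≠ 1) : gsh3 a b c = g3 a b c := by
  have hab : a * b ≠ 1 := by
    intro h
    exact ha (Nat.eq_one_of_mul_eq_one_right h)
  rw [gsh3, if_neg ha, if_neg hb, if_neg hab, zero_smul, zero_smul, zero_smul,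
    add_zero, add_zero, add_zero]

lemma memV_g2 {N a b : ℕ} (ha : 2 ≤ a) (hb : 1 ≤ b) (hw : a + b ≤ N) :
    g2 a b ∈ Submodule.span ℚ (gshSpanSet N) := by
  rw [← gsh2_eq_g2 (by omega)]
  exact Submodule.subset_span (set_mem_gsh2 (by omega) hb hw)

lemma memV_g3 {N a b c : ℕ} (ha : 2 ≤ a) (hb : 2 ≤ b) (hc : 1 ≤ c) (hw : a + b + c ≤ N) :
    g3 a b c ∈ Submodule.span ℚ (gshSpanSet N) := by
  rw [← gsh3_eq_g3 (by omega) (by omega)]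
  exact Submodule.subset_span (set_mem_gsh3 (by omega) (by omega) hc hw)

lemma memV_V2 {N f1 f2 : ℕ} (h1 : 1 ≤ f1) (hw : f1 + f2 + 2 ≤ N) :
    V2 0 0 f1 f2 ∈ Submodule.span ℚ (gshSpanSet N) := by
  rw [V2_eq]
  refine Submodule.smul_mem _ _ ?_
  exact memV_g2 (by omega) (by omega) (by omega)

lemma memV_V3 {N f1 f2 f3 : ℕ} (h1 : 1 ≤ f1) (h2 : 1 ≤ f2) (hw : f1 + f2 + f3 + 3 ≤ N) :
    V3 f1 f2 f3 ∈ Submodule.span ℚ (gshSpanSet N) := by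
  rw [V3_eq]
  refine Submodule.smul_mem _ _ ?_
  exact memV_g3 (by omega) (by omega) (by omega) (by omega)

end Assembly

end Stmt14Aux

open Stmt14Aux in
/-- `g^{(0,1)}_{k₁,k₂}` lies in the ℚ-span of the `g^sh` of weight ≤ k₁+k₂+1. -/
theorem stmt_14 (k1 k2 : ℕ) (h1 : 2 ≤ k1) (h2 : 2 ≤ k2) :
    gb2 0 1 k1 k2 ∈ Submodule.span ℚ (gshSpanSet (k1 + k2 + 1)) := by
  obtain ⟨a, rfl⟩ : ∃ a, k1 = a + 2 := ⟨k1 - 2, by omega⟩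
  obtain ⟨b, rfl⟩ : ∃ b, k2 = b + 2 := ⟨k2 - 2, by omega⟩
  set N : ℕ := a + 2 + (b + 2) + 1 with hN
  set V : Submodule ℚ (PowerSeries ℚ) := Submodule.span ℚ (gshSpanSet N) with hV
  obtain ⟨s, hs⟩ := exists_faulhaber (a + 1) (by omega)
  obtain ⟨t, ht⟩ := exists_faulhaber (b + 1) (by omega)
  have hkey := keyW (a + 1) (b + 1) (by omega) (by omega) s t hs ht
  -- peel boundary terms from the two binomial sums
  have peelB : ∑ i ∈ Finset.range ((b + 1) + 1), ((b + 1).choose i : ℚ) • V3 (a + 1) i ((b + 1) - i)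
      = V3 (a + 1) 0 (b + 1)
        + ∑ i ∈ Finset.range (b + 1), ((b + 1).choose (i + 1) : ℚ) • V3 (a + 1) (i + 1) ((b + 1) - (i + 1)) := by
    rw [Finset.sum_range_succ']
    simp only [Nat.choose_zero_right, Nat.cast_one, one_smul, Nat.sub_zero]
    abel
  have peelA : ∑ i ∈ Finset.range ((a + 1) + 1), ((a + 1).choose i : ℚ) • V3 i ((a + 1) - i) (b + 1)
      = V3 0 (a + 1) (b + 1) + V3 (a + 1) 0 (b + 1)
        + ∑ i ∈ Finset.range a, ((a + 1).choose (i + 1) : ℚ) • V3 (i + 1) ((a + 1) - (i + 1)) (b + 1) := by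
    rw [Finset.sum_range_succ, Finset.sum_range_succ']
    simp only [Nat.choose_zero_right, Nat.cast_one, one_smul, Nat.sub_zero,
      Nat.choose_self, Nat.sub_self]
    abel
  rw [peelB, peelA] at hkey
  -- solve for V2 0 1 (a+1) (b+1) + V3 0 (a+1) (b+1) + V3 (a+1) 0 (b+1)
  have hkey2 : V2 0 1 (a + 1) (b + 1) + V3 0 (a + 1) (b + 1) + V3 (a + 1) 0 (b + 1)
      = V3 (a + 1) (b + 1) 0
        + (∑ j ∈ Finset.range ((a + 1) + 1), s j • V2 0 0 (j + 1) (b + 1))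
        + (∑ j ∈ Finset.range ((b + 1) + 1), t j • V2 0 0 (a + 1) (j + 1))
        + (2 : ℚ) • V2 0 0 (a + 1) (b + 1)
        - (∑ i ∈ Finset.range (b + 1), ((b + 1).choose (i + 1) : ℚ) • V3 (a + 1) (i + 1) ((b + 1) - (i + 1)))
        - (∑ i ∈ Finset.range a, ((a + 1).choose (i + 1) : ℚ) • V3 (i + 1) ((a + 1) - (i + 1)) (b + 1)) := by
    linear_combination (norm := module) -hkey
  -- the right-hand side lies in the span
  have hmem1 : V2 0 1 (a + 1) (b + 1) + V3 0 (a + 1) (b + 1) + V3 (a + 1) 0 (b + 1) ∈ V := by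
    rw [hkey2]
    refine sub_mem (sub_mem (add_mem (add_mem (add_mem ?_ ?_) ?_) ?_) ?_) ?_
    · exact memV_V3 (by omega) (by omega) (by omega)
    · refine Submodule.sum_mem _ fun j hj => ?_
      rw [Finset.mem_range] at hj
      exact Submodule.smul_mem _ _ (memV_V2 (by omega) (by omega))
    · refine Submodule.sum_mem _ fun j hj => ?_
      rw [Finset.mem_range] at hj
      exact Submodule.smul_mem _ _ (memV_V2 (by omega) (by omega))
    · exact Submodule.smul_mem _ _ (memV_V2 (by omega) (by omega))
    · refine Submodule.sum_mem _ fun i hi => ?_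
      rw [Finset.mem_range] at hi
      exact Submodule.smul_mem _ _ (memV_V3 (by omega) (by omega) (by omega))
    · refine Submodule.sum_mem _ fun i hi => ?_
      rw [Finset.mem_range] at hi
      exact Submodule.smul_mem _ _ (memV_V3 (by omega) (by omega) (by omega))
  -- convert to the g-series form
  set c : ℚ := (((a + 1).factorial * (b + 1).factorial : ℕ) : ℚ) with hc
  have hcne : c ≠ 0 := by
    rw [hc]
    exact_mod_cast Nat.mul_ne_zero (Nat.factorial_ne_zero _) (Nat.factorial_ne_zero _)
  have hconv : V2 0 1 (a + 1) (b + 1) + V3 0 (a + 1) (b + 1) + V3 (a + 1) 0 (b + 1)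
      = c • (gb2 0 1 (a + 2) (b + 2) + g3 1 (a + 2) (b + 2) + g3 (a + 2) 1 (b + 2)) := by
    rw [V2_eq, V3_eq, V3_eq]
    simp only [Nat.factorial_zero, Nat.factorial_one, one_mul, mul_one,
      show a + 1 + 1 = a + 2 from rfl, show b + 1 + 1 = b + 2 from rfl,
      show (0:ℕ) + 1 = 1 from rfl]
    rw [hc]
    push_cast
    module
  have hmem2 : gb2 0 1 (a + 2) (b + 2) + g3 1 (a + 2) (b + 2) + g3 (a + 2) 1 (b + 2) ∈ V := by
    rw [hconv] at hmem1
    have := Submodule.smul_mem V c⁻¹ hmem1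
    rwa [smul_smul, inv_mul_cancel₀ hcne, one_smul] at this
  -- the definitional relation coming from the regularisation of gsh3
  have hdefeq : gb2 0 1 (a + 2) (b + 2) + (2:ℚ) • g3 1 (a + 2) (b + 2) + (2:ℚ) • g3 (a + 2) 1 (b + 2)
      = (2:ℚ) • gsh3 (a + 2) 1 (b + 2) + (2:ℚ) • gsh3 1 (a + 2) (b + 2)
        + (2:ℚ) • g2 (a + 2) (b + 2) := by
    rw [gsh3, gsh3]
    simp only [if_neg (show ¬ a + 2 = 1 by omega), if_pos (show (1:ℕ) = 1 from rfl),
      if_neg (show ¬ (a + 2) * 1 = 1 by omega), if_neg (show ¬ 1 * (a + 2) = 1 by omega),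
      zero_smul, add_zero, one_div, eq_self_iff_true, if_true]
    module
  have hmem3 : gb2 0 1 (a + 2) (b + 2) + (2:ℚ) • g3 1 (a + 2) (b + 2)
      + (2:ℚ) • g3 (a + 2) 1 (b + 2) ∈ V := by
    rw [hdefeq]
    refine add_mem (add_mem (Submodule.smul_mem _ _ ?_) (Submodule.smul_mem _ _ ?_))
      (Submodule.smul_mem _ _ ?_)
    · exact Submodule.subset_span (set_mem_gsh3 (by omega) (by omega) (by omega) (by omega))
    · exact Submodule.subset_span (set_mem_gsh3 (by omega) (by omega) (by omega) (by omega))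
    · exact memV_g2 (by omega) (by omega) (by omega)
  -- conclude
  have hfinal : gb2 0 1 (a + 2) (b + 2)
      = (2:ℚ) • (gb2 0 1 (a + 2) (b + 2) + g3 1 (a + 2) (b + 2) + g3 (a + 2) 1 (b + 2))
        - (gb2 0 1 (a + 2) (b + 2) + (2:ℚ) • g3 1 (a + 2) (b + 2)
            + (2:ℚ) • g3 (a + 2) 1 (b + 2)) := by
    module
  rw [hfinal]
  exact sub_mem (Submodule.smul_mem _ _ hmem2) hmem3
end

section
/- For all k_1, k_2 ≥ 2, the series g^{(1,0)}_{k_1,k_2} lies in the ℚ-linear span of the series g^sh of weight at most k_1 + k_2 + 1 (in depths 0 through 3). -/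
open Finset PowerSeries

set_option maxHeartbeats 1000000

namespace Stmt15

noncomputable def S1 (W : ℕ → ℕ → ℚ) : PowerSeries ℚ :=
  PowerSeries.mk fun n => ∑ u ∈ n.divisors, W u (n / u)

noncomputable def S2 (W : ℕ → ℕ → ℕ → ℕ → ℚ) : PowerSeries ℚ :=
  PowerSeries.mk fun n =>
    ∑ u1 ∈ Finset.range (n+1), ∑ u2 ∈ Finset.range (n+1),
    ∑ v1 ∈ Finset.range (n+1), ∑ v2 ∈ Finset.range (n+1),
      if 0 < u1 ∧ u1 < u2 ∧ 0 < v1 ∧ 0 < v2 ∧ u1 * v1 + u2 * v2 = n then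
        W u1 u2 v1 v2 else 0

noncomputable def S3 (W : ℕ → ℕ → ℕ → ℕ → ℕ → ℕ → ℚ) : PowerSeries ℚ :=
  PowerSeries.mk fun n =>
    ∑ u1 ∈ Finset.range (n+1), ∑ u2 ∈ Finset.range (n+1), ∑ u3 ∈ Finset.range (n+1),
    ∑ v1 ∈ Finset.range (n+1), ∑ v2 ∈ Finset.range (n+1), ∑ v3 ∈ Finset.range (n+1),
      if 0 < u1 ∧ u1 < u2 ∧ u2 < u3 ∧ 0 < v1 ∧ 0 < v2 ∧ 0 < v3 ∧
          u1 * v1 + u2 * v2 + u3 * v3 = n then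
        W u1 u2 u3 v1 v2 v3 else 0

def T4 (n : ℕ) : Finset ((ℕ × ℕ) × ℕ × ℕ) :=
  ((Finset.range (n+1) ×ˢ Finset.range (n+1)) ×ˢ (Finset.range (n+1) ×ˢ Finset.range (n+1))).filter
    fun x => 0 < x.1.1 ∧ x.1.1 < x.1.2 ∧ 0 < x.2.1 ∧ 0 < x.2.2 ∧
      x.1.1 * x.2.1 + x.1.2 * x.2.2 = n

def T6 (n : ℕ) : Finset ((ℕ × ℕ × ℕ) × ℕ × ℕ × ℕ) :=
  ((Finset.range (n+1) ×ˢ Finset.range (n+1) ×ˢ Finset.range (n+1)) ×ˢ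
      (Finset.range (n+1) ×ˢ Finset.range (n+1) ×ˢ Finset.range (n+1))).filter
    fun x => 0 < x.1.1 ∧ x.1.1 < x.1.2.1 ∧ x.1.2.1 < x.1.2.2 ∧
      0 < x.2.1 ∧ 0 < x.2.2.1 ∧ 0 < x.2.2.2 ∧
      x.1.1 * x.2.1 + x.1.2.1 * x.2.2.1 + x.1.2.2 * x.2.2.2 = n

lemma S1_coeff (W : ℕ → ℕ → ℚ) (n : ℕ) :
    PowerSeries.coeff n (S1 W) = ∑ x ∈ n.divisorsAntidiagonal, W x.1 x.2 := by
  rw [S1, PowerSeries.coeff_mk, Nat.sum_divisorsAntidiagonal (f := fun a b => W a b)]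

lemma S2_coeff (W : ℕ → ℕ → ℕ → ℕ → ℚ) (n : ℕ) :
    PowerSeries.coeff n (S2 W) = ∑ x ∈ T4 n, W x.1.1 x.1.2 x.2.1 x.2.2 := by
  rw [S2, PowerSeries.coeff_mk, T4, Finset.sum_filter]
  simp only [Finset.sum_product]

lemma S3_coeff (W : ℕ → ℕ → ℕ → ℕ → ℕ → ℕ → ℚ) (n : ℕ) :
    PowerSeries.coeff n (S3 W) =
      ∑ x ∈ T6 n, W x.1.1 x.1.2.1 x.1.2.2 x.2.1 x.2.2.1 x.2.2.2 := by
  rw [S3, PowerSeries.coeff_mk, T6, Finset.sum_filter]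
  simp only [Finset.sum_product]

lemma mem_T4_iff {n u1 u2 v1 v2 : ℕ} :
    ((u1,u2),(v1,v2)) ∈ T4 n ↔
      (0 < u1 ∧ u1 < u2 ∧ 0 < v1 ∧ 0 < v2 ∧ u1*v1+u2*v2 = n) := by
  simp only [T4, Finset.mem_filter, Finset.mem_product, Finset.mem_range]
  constructor
  · rintro ⟨-, h⟩; exact h
  · rintro ⟨h1,h2,h3,h4,h5⟩
    have e1 : u1 ≤ u1*v1 := Nat.le_mul_of_pos_right _ h3
    have e2 : u2 ≤ u2*v2 := Nat.le_mul_of_pos_right _ h4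
    have e3 : v1 ≤ u1*v1 := Nat.le_mul_of_pos_left _ h1
    have e4 : v2 ≤ u2*v2 := Nat.le_mul_of_pos_left _ (h1.trans h2)
    exact ⟨⟨⟨by omega, by omega⟩, by omega, by omega⟩, h1,h2,h3,h4,h5⟩

lemma mem_T6_iff {n u1 u2 u3 v1 v2 v3 : ℕ} :
    ((u1,u2,u3),(v1,v2,v3)) ∈ T6 n ↔
      (0 < u1 ∧ u1 < u2 ∧ u2 < u3 ∧ 0 < v1 ∧ 0 < v2 ∧ 0 < v3 ∧
        u1*v1+u2*v2+u3*v3 = n) := by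
  simp only [T6, Finset.mem_filter, Finset.mem_product, Finset.mem_range]
  constructor
  · rintro ⟨-, h⟩; exact h
  · rintro ⟨h1,h2,h3,h4,h5,h6,h7⟩
    have e1 : u1 ≤ u1*v1 := Nat.le_mul_of_pos_right _ h4
    have e2 : u2 ≤ u2*v2 := Nat.le_mul_of_pos_right _ h5
    have e3 : u3 ≤ u3*v3 := Nat.le_mul_of_pos_right _ h6
    have e4 : v1 ≤ u1*v1 := Nat.le_mul_of_pos_left _ h1
    have e5 : v2 ≤ u2*v2 := Nat.le_mul_of_pos_left _ (h1.trans h2)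
    have e6 : v3 ≤ u3*v3 := Nat.le_mul_of_pos_left _ (h1.trans (h2.trans h3))
    exact ⟨⟨⟨by omega, by omega, by omega⟩, by omega, by omega, by omega⟩,
      h1,h2,h3,h4,h5,h6,h7⟩

lemma S1_congr {W W' : ℕ → ℕ → ℚ}
    (h : ∀ u v, 0 < u → 0 < v → W u v = W' u v) : S1 W = S1 W' := by
  ext n
  rw [S1_coeff, S1_coeff]
  refine Finset.sum_congr rfl fun x hx => ?_
  rw [Nat.mem_divisorsAntidiagonal] at hx
  have h1 : 0 < x.1 := Nat.pos_of_ne_zero fun h0 => hx.2 (by rw [← hx.1, h0, zero_mul])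
  have h2 : 0 < x.2 := Nat.pos_of_ne_zero fun h0 => hx.2 (by rw [← hx.1, h0, mul_zero])
  exact h _ _ h1 h2

lemma S2_congr {W W' : ℕ → ℕ → ℕ → ℕ → ℚ}
    (h : ∀ u1 u2 v1 v2, 0 < u1 → u1 < u2 → 0 < v1 → 0 < v2 →
      W u1 u2 v1 v2 = W' u1 u2 v1 v2) : S2 W = S2 W' := by
  ext n
  rw [S2_coeff, S2_coeff]
  refine Finset.sum_congr rfl fun x hx => ?_
  rcases x with ⟨⟨u1,u2⟩,v1,v2⟩
  rw [mem_T4_iff] at hx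
  exact h _ _ _ _ hx.1 hx.2.1 hx.2.2.1 hx.2.2.2.1

lemma S3_congr {W W' : ℕ → ℕ → ℕ → ℕ → ℕ → ℕ → ℚ}
    (h : ∀ u1 u2 u3 v1 v2 v3, 0 < u1 → u1 < u2 → u2 < u3 → 0 < v1 → 0 < v2 → 0 < v3 →
      W u1 u2 u3 v1 v2 v3 = W' u1 u2 u3 v1 v2 v3) : S3 W = S3 W' := by
  ext n
  rw [S3_coeff, S3_coeff]
  refine Finset.sum_congr rfl fun x hx => ?_
  rcases x with ⟨⟨u1,u2,u3⟩,v1,v2,v3⟩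
  rw [mem_T6_iff] at hx
  exact h _ _ _ _ _ _ hx.1 hx.2.1 hx.2.2.1 hx.2.2.2.1 hx.2.2.2.2.1 hx.2.2.2.2.2.1

lemma S1_add (W W' : ℕ → ℕ → ℚ) :
    S1 (fun u v => W u v + W' u v) = S1 W + S1 W' := by
  ext n; simp [S1_coeff, Finset.sum_add_distrib]

lemma S1_sub (W W' : ℕ → ℕ → ℚ) :
    S1 (fun u v => W u v - W' u v) = S1 W - S1 W' := by
  ext n; simp [S1_coeff, Finset.sum_sub_distrib]

lemma S1_smul (c : ℚ) (W : ℕ → ℕ → ℚ) :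
    S1 (fun u v => c * W u v) = c • S1 W := by
  ext n; simp [S1_coeff, Finset.mul_sum]

lemma S1_sum {ι : Type} (s : Finset ι) (W : ι → ℕ → ℕ → ℚ) :
    S1 (fun u v => ∑ j ∈ s, W j u v) = ∑ j ∈ s, S1 (W j) := by
  ext n; simp [S1_coeff]; exact Finset.sum_comm

lemma S2_add (W W' : ℕ → ℕ → ℕ → ℕ → ℚ) :
    S2 (fun u1 u2 v1 v2 => W u1 u2 v1 v2 + W' u1 u2 v1 v2) = S2 W + S2 W' := by
  ext n; simp [S2_coeff, Finset.sum_add_distrib]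

lemma S2_sub (W W' : ℕ → ℕ → ℕ → ℕ → ℚ) :
    S2 (fun u1 u2 v1 v2 => W u1 u2 v1 v2 - W' u1 u2 v1 v2) = S2 W - S2 W' := by
  ext n; simp [S2_coeff, Finset.sum_sub_distrib]

lemma S2_smul (c : ℚ) (W : ℕ → ℕ → ℕ → ℕ → ℚ) :
    S2 (fun u1 u2 v1 v2 => c * W u1 u2 v1 v2) = c • S2 W := by
  ext n; simp [S2_coeff, Finset.mul_sum]

lemma S2_sum {ι : Type} (s : Finset ι) (W : ι → ℕ → ℕ → ℕ → ℕ → ℚ) :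
    S2 (fun u1 u2 v1 v2 => ∑ j ∈ s, W j u1 u2 v1 v2) = ∑ j ∈ s, S2 (W j) := by
  ext n; simp [S2_coeff]; exact Finset.sum_comm

lemma S3_sum {ι : Type} (s : Finset ι) (W : ι → ℕ → ℕ → ℕ → ℕ → ℕ → ℕ → ℚ) :
    S3 (fun u1 u2 u3 v1 v2 v3 => ∑ j ∈ s, W j u1 u2 u3 v1 v2 v3) = ∑ j ∈ s, S3 (W j) := by
  ext n; simp [S3_coeff]; exact Finset.sum_comm

lemma S2_swap (W : ℕ → ℕ → ℕ → ℕ → ℚ) :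
    S2 W = S2 (fun u1 u2 v1 v2 => W v2 (v1+v2) (u2-u1) u1) := by
  ext n
  rw [S2_coeff, S2_coeff]
  refine Finset.sum_nbij'
    (i := fun x => ((x.2.2, x.2.1 + x.2.2), (x.1.2 - x.1.1, x.1.1)))
    (j := fun x => ((x.2.2, x.2.1 + x.2.2), (x.1.2 - x.1.1, x.1.1)))
    ?_ ?_ ?_ ?_ ?_
  · rintro ⟨⟨u1,u2⟩,v1,v2⟩ hx
    dsimp only
    rw [mem_T4_iff] at hx ⊢
    obtain ⟨h1,h2,h3,h4,h5⟩ := hx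
    obtain ⟨d, hd, hdp⟩ : ∃ d, u2 = u1 + d ∧ 0 < d := ⟨u2-u1, by omega, by omega⟩
    subst hd
    refine ⟨h4, by omega, by omega, h1, ?_⟩
    simp only [Nat.add_sub_cancel_left]
    rw [← h5]; ring
  · rintro ⟨⟨u1,u2⟩,v1,v2⟩ hx
    dsimp only
    rw [mem_T4_iff] at hx ⊢
    obtain ⟨h1,h2,h3,h4,h5⟩ := hx
    obtain ⟨d, hd, hdp⟩ : ∃ d, u2 = u1 + d ∧ 0 < d := ⟨u2-u1, by omega, by omega⟩
    subst hd
    refine ⟨h4, by omega, by omega, h1, ?_⟩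
    simp only [Nat.add_sub_cancel_left]
    rw [← h5]; ring
  · rintro ⟨⟨u1,u2⟩,v1,v2⟩ hx
    rw [mem_T4_iff] at hx
    have e1 : u2 - u1 + u1 = u2 := by omega
    have e2 : v1 + v2 - v2 = v1 := by omega
    simp [e1, e2]
  · rintro ⟨⟨u1,u2⟩,v1,v2⟩ hx
    rw [mem_T4_iff] at hx
    have e1 : u2 - u1 + u1 = u2 := by omega
    have e2 : v1 + v2 - v2 = v1 := by omega
    simp [e1, e2]
  · rintro ⟨⟨u1,u2⟩,v1,v2⟩ hx
    rw [mem_T4_iff] at hx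
    have e1 : u2 - u1 + u1 = u2 := by omega
    have e2 : v1 + v2 - v2 = v1 := by omega
    dsimp only
    rw [e1, e2]

lemma S3_swap (W : ℕ → ℕ → ℕ → ℕ → ℕ → ℕ → ℚ) :
    S3 W = S3 (fun u1 u2 u3 v1 v2 v3 =>
      W v3 (v2+v3) (v1+v2+v3) (u3-u2) (u2-u1) u1) := by
  ext n
  rw [S3_coeff, S3_coeff]
  refine Finset.sum_nbij'
    (i := fun x => ((x.2.2.2, x.2.2.1 + x.2.2.2, x.2.1 + x.2.2.1 + x.2.2.2),
      (x.1.2.2 - x.1.2.1, x.1.2.1 - x.1.1, x.1.1)))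
    (j := fun x => ((x.2.2.2, x.2.2.1 + x.2.2.2, x.2.1 + x.2.2.1 + x.2.2.2),
      (x.1.2.2 - x.1.2.1, x.1.2.1 - x.1.1, x.1.1)))
    ?_ ?_ ?_ ?_ ?_
  · rintro ⟨⟨u1,u2,u3⟩,v1,v2,v3⟩ hx
    dsimp only
    rw [mem_T6_iff] at hx ⊢
    obtain ⟨h1,h2,h3,h4,h5,h6,h7⟩ := hx
    obtain ⟨d, hd, hdp⟩ : ∃ d, u2 = u1 + d ∧ 0 < d := ⟨u2-u1, by omega, by omega⟩
    obtain ⟨e, he, hep⟩ : ∃ e, u3 = u2 + e ∧ 0 < e := ⟨u3-u2, by omega, by omega⟩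
    subst he; subst hd
    refine ⟨h6, by omega, by omega, ?_, ?_, h1, ?_⟩
    · simpa using hep
    · simp only [Nat.add_sub_cancel_left]; omega
    · have e1 : u1 + d + e - (u1 + d) = e := by omega
      have e2 : u1 + d - u1 = d := by omega
      rw [e1, e2, ← h7]; ring
  · rintro ⟨⟨u1,u2,u3⟩,v1,v2,v3⟩ hx
    dsimp only
    rw [mem_T6_iff] at hx ⊢
    obtain ⟨h1,h2,h3,h4,h5,h6,h7⟩ := hx
    obtain ⟨d, hd, hdp⟩ : ∃ d, u2 = u1 + d ∧ 0 < d := ⟨u2-u1, by omega, by omega⟩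
    obtain ⟨e, he, hep⟩ : ∃ e, u3 = u2 + e ∧ 0 < e := ⟨u3-u2, by omega, by omega⟩
    subst he; subst hd
    refine ⟨h6, by omega, by omega, ?_, ?_, h1, ?_⟩
    · simpa using hep
    · simp only [Nat.add_sub_cancel_left]; omega
    · have e1 : u1 + d + e - (u1 + d) = e := by omega
      have e2 : u1 + d - u1 = d := by omega
      rw [e1, e2, ← h7]; ring
  · rintro ⟨⟨u1,u2,u3⟩,v1,v2,v3⟩ hx
    rw [mem_T6_iff] at hx
    have e1 : v1 + v2 + v3 - (v2 + v3) = v1 := by omega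
    have e2 : v2 + v3 - v3 = v2 := by omega
    have e3 : u3 - u2 + (u2 - u1) + u1 = u3 := by omega
    have e4 : u2 - u1 + u1 = u2 := by omega
    simp [e1, e2, e3, e4]
  · rintro ⟨⟨u1,u2,u3⟩,v1,v2,v3⟩ hx
    rw [mem_T6_iff] at hx
    have e1 : v1 + v2 + v3 - (v2 + v3) = v1 := by omega
    have e2 : v2 + v3 - v3 = v2 := by omega
    have e3 : u3 - u2 + (u2 - u1) + u1 = u3 := by omega
    have e4 : u2 - u1 + u1 = u2 := by omega
    simp [e1, e2, e3, e4]
  · rintro ⟨⟨u1,u2,u3⟩,v1,v2,v3⟩ hx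
    rw [mem_T6_iff] at hx
    have e1 : v1 + v2 + v3 - (v2 + v3) = v1 := by omega
    have e2 : v2 + v3 - v3 = v2 := by omega
    have e3 : u3 - u2 + (u2 - u1) + u1 = u3 := by omega
    have e4 : u2 - u1 + u1 = u2 := by omega
    dsimp only
    rw [e1, e2, e3, e4]

def P4 (n : ℕ) : Finset ((ℕ × ℕ) × ℕ × ℕ) :=
  ((Finset.range (n+1) ×ˢ Finset.range (n+1)) ×ˢ (Finset.range (n+1) ×ˢ Finset.range (n+1))).filter
    fun x => 0 < x.1.1 ∧ 0 < x.1.2 ∧ 0 < x.2.1 ∧ 0 < x.2.2 ∧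
      x.1.1 * x.1.2 + x.2.1 * x.2.2 = n

lemma mem_P4_iff {n u v u' v' : ℕ} :
    ((u,v),(u',v')) ∈ P4 n ↔
      (0 < u ∧ 0 < v ∧ 0 < u' ∧ 0 < v' ∧ u*v+u'*v' = n) := by
  simp only [P4, Finset.mem_filter, Finset.mem_product, Finset.mem_range]
  constructor
  · rintro ⟨-, h⟩; exact h
  · rintro ⟨h1,h2,h3,h4,h5⟩
    have e1 : u ≤ u*v := Nat.le_mul_of_pos_right _ h2
    have e2 : v ≤ u*v := Nat.le_mul_of_pos_left _ h1
    have e3 : u' ≤ u'*v' := Nat.le_mul_of_pos_right _ h4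
    have e4 : v' ≤ u'*v' := Nat.le_mul_of_pos_left _ h3
    exact ⟨⟨⟨by omega, by omega⟩, by omega, by omega⟩, h1,h2,h3,h4,h5⟩

lemma sum_split3 {α : Type} (s : Finset α) (f : α → ℚ) (a b : α → ℕ) :
    ∑ x ∈ s, f x = (∑ x ∈ s.filter (fun x => a x < b x), f x)
      + (∑ x ∈ s.filter (fun x => b x < a x), f x)
      + (∑ x ∈ s.filter (fun x => a x = b x), f x) := by
  classical
  simp only [Finset.sum_filter, ← Finset.sum_add_distrib]
  apply Finset.sum_congr rfl
  intro x _
  split_ifs <;> first | omega | ring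

lemma sum_split5 {α : Type} (s : Finset α) (f : α → ℚ) (a b c : α → ℕ)
    (hbc : ∀ x ∈ s, b x < c x) :
    ∑ x ∈ s, f x = (∑ x ∈ s.filter (fun x => a x < b x), f x)
      + (∑ x ∈ s.filter (fun x => a x = b x), f x)
      + (∑ x ∈ s.filter (fun x => b x < a x ∧ a x < c x), f x)
      + (∑ x ∈ s.filter (fun x => a x = c x), f x)
      + (∑ x ∈ s.filter (fun x => c x < a x), f x) := by
  classical
  simp only [Finset.sum_filter, ← Finset.sum_add_distrib]
  apply Finset.sum_congr rfl
  intro x hx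
  have := hbc x hx
  split_ifs <;> first | omega | ring

lemma coeff_mul_S1S1 (W W' : ℕ → ℕ → ℚ) (n : ℕ) :
    PowerSeries.coeff n (S1 W * S1 W') =
      ∑ x ∈ P4 n, W x.1.1 x.1.2 * W' x.2.1 x.2.2 := by
  rw [PowerSeries.coeff_mul]
  simp only [S1_coeff, Finset.sum_mul_sum]
  simp only [← Finset.sum_product']
  rw [Finset.sum_sigma' (Finset.HasAntidiagonal.antidiagonal n)
    (fun p => p.1.divisorsAntidiagonal ×ˢ p.2.divisorsAntidiagonal)
    (fun _ z => W z.1.1 z.1.2 * W' z.2.1 z.2.2)]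
  refine Finset.sum_nbij' (i := fun z => z.2)
    (j := fun x => ⟨(x.1.1*x.1.2, x.2.1*x.2.2), x⟩) ?_ ?_ ?_ ?_ ?_
  · rintro ⟨⟨p1,p2⟩, ⟨⟨u,v⟩,u',v'⟩⟩ ha
    simp only [Finset.mem_sigma, Finset.HasAntidiagonal.mem_antidiagonal, Finset.mem_product,
      Nat.mem_divisorsAntidiagonal] at ha
    obtain ⟨hp, ⟨huv, hp1⟩, ⟨huv', hp2⟩⟩ := ha
    dsimp only
    rw [mem_P4_iff]
    have h1 : 0 < u := Nat.pos_of_ne_zero fun h0 => hp1 (by rw [← huv, h0, zero_mul])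
    have h2 : 0 < v := Nat.pos_of_ne_zero fun h0 => hp1 (by rw [← huv, h0, mul_zero])
    have h3 : 0 < u' := Nat.pos_of_ne_zero fun h0 => hp2 (by rw [← huv', h0, zero_mul])
    have h4 : 0 < v' := Nat.pos_of_ne_zero fun h0 => hp2 (by rw [← huv', h0, mul_zero])
    exact ⟨h1,h2,h3,h4, by rw [huv, huv', hp]⟩
  · rintro ⟨⟨u,v⟩,u',v'⟩ hx
    rw [mem_P4_iff] at hx
    obtain ⟨h1,h2,h3,h4,h5⟩ := hx
    simp only [Finset.mem_sigma, Finset.HasAntidiagonal.mem_antidiagonal, Finset.mem_product,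
      Nat.mem_divisorsAntidiagonal]
    refine ⟨h5, ⟨trivial, Nat.mul_ne_zero (by omega) (by omega)⟩,
      trivial, Nat.mul_ne_zero (by omega) (by omega)⟩
  · rintro ⟨⟨p1,p2⟩, ⟨⟨u,v⟩,u',v'⟩⟩ ha
    simp only [Finset.mem_sigma, Finset.HasAntidiagonal.mem_antidiagonal, Finset.mem_product,
      Nat.mem_divisorsAntidiagonal] at ha
    obtain ⟨hp, ⟨huv, hp1⟩, ⟨huv', hp2⟩⟩ := ha
    simp only
    rw [huv, huv']
  · rintro x hx
    rfl
  · rintro z hz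
    rfl

lemma U11 (W W' : ℕ → ℕ → ℚ) :
    S1 W * S1 W' = S2 (fun u1 u2 v1 v2 => W u1 v1 * W' u2 v2)
      + S2 (fun u1 u2 v1 v2 => W' u1 v1 * W u2 v2)
      + S1 (fun u w => ∑ v ∈ Finset.Ico 1 w, W u v * W' u (w - v)) := by
  ext n
  rw [map_add, map_add, coeff_mul_S1S1, S2_coeff, S2_coeff, S1_coeff]
  have hsplit := sum_split3 (P4 n) (fun x => W x.1.1 x.1.2 * W' x.2.1 x.2.2)
    (fun x => x.1.1) (fun x => x.2.1)
  rw [hsplit]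
  congr 1
  congr 1
  · -- u < u' case
    refine Finset.sum_nbij' (i := fun x => ((x.1.1, x.2.1),(x.1.2, x.2.2)))
      (j := fun y => ((y.1.1, y.2.1),(y.1.2, y.2.2))) ?_ ?_ ?_ ?_ ?_
    · rintro ⟨⟨u,v⟩,u',v'⟩ hx
      simp only [Finset.mem_filter] at hx
      obtain ⟨hx, hlt⟩ := hx
      rw [mem_P4_iff] at hx
      have hlt' : u < u' := hlt
      show ((u,u'),(v,v')) ∈ T4 n
      rw [mem_T4_iff]
      exact ⟨hx.1, hlt', hx.2.1, hx.2.2.2.1, by omega⟩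
    · rintro ⟨⟨u1,u2⟩,v1,v2⟩ hy
      rw [mem_T4_iff] at hy
      simp only [Finset.mem_filter]
      refine ⟨?_, hy.2.1⟩
      show ((u1,v1),(u2,v2)) ∈ P4 n
      rw [mem_P4_iff]
      exact ⟨hy.1, hy.2.2.1, hy.1.trans hy.2.1, hy.2.2.2.1, by omega⟩
    · rintro ⟨⟨u,v⟩,u',v'⟩ _; rfl
    · rintro ⟨⟨u1,u2⟩,v1,v2⟩ _; rfl
    · rintro ⟨⟨u,v⟩,u',v'⟩ _; rfl
  · -- u' < u case
    refine Finset.sum_nbij' (i := fun x => ((x.2.1, x.1.1),(x.2.2, x.1.2)))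
      (j := fun y => ((y.1.2, y.2.2),(y.1.1, y.2.1))) ?_ ?_ ?_ ?_ ?_
    · rintro ⟨⟨u,v⟩,u',v'⟩ hx
      simp only [Finset.mem_filter] at hx
      obtain ⟨hx, hlt⟩ := hx
      rw [mem_P4_iff] at hx
      have hlt' : u' < u := hlt
      show ((u',u),(v',v)) ∈ T4 n
      rw [mem_T4_iff]
      exact ⟨hx.2.2.1, hlt', hx.2.2.2.1, hx.2.1, by omega⟩
    · rintro ⟨⟨u1,u2⟩,v1,v2⟩ hy
      rw [mem_T4_iff] at hy
      simp only [Finset.mem_filter]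
      refine ⟨?_, hy.2.1⟩
      show ((u2,v2),(u1,v1)) ∈ P4 n
      rw [mem_P4_iff]
      exact ⟨hy.1.trans hy.2.1, hy.2.2.2.1, hy.1, hy.2.2.1, by omega⟩
    · rintro ⟨⟨u,v⟩,u',v'⟩ _; rfl
    · rintro ⟨⟨u1,u2⟩,v1,v2⟩ _; rfl
    · rintro ⟨⟨u,v⟩,u',v'⟩ _; exact mul_comm _ _
  · -- u = u' case
    rw [Finset.sum_sigma' n.divisorsAntidiagonal (fun x => Finset.Ico 1 x.2)
      (fun x v => W x.1 v * W' x.1 (x.2 - v))]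
    refine (Finset.sum_nbij' (i := fun z => ((z.1.1, z.2),(z.1.1, z.1.2 - z.2)))
      (j := fun x => ⟨(x.1.1, x.1.2 + x.2.2), x.1.2⟩) ?_ ?_ ?_ ?_ ?_).symm
    · rintro ⟨⟨u,w⟩, v⟩ hz
      simp only [Finset.mem_sigma, Nat.mem_divisorsAntidiagonal, Finset.mem_Ico] at hz
      obtain ⟨⟨huw, hn⟩, hv1, hvw⟩ := hz
      simp only [Finset.mem_filter]
      have h1 : 0 < u := Nat.pos_of_ne_zero fun h0 => hn (by rw [← huw, h0, zero_mul])
      refine ⟨?_, by trivial⟩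
      show ((u,v),(u,w-v)) ∈ P4 n
      rw [mem_P4_iff]
      refine ⟨h1, by omega, h1, by omega, ?_⟩
      have hvv : v + (w - v) = w := by omega
      rw [← Nat.mul_add, hvv, huw]
    · rintro ⟨⟨u,v⟩,u',v'⟩ hx
      simp only [Finset.mem_filter] at hx
      obtain ⟨hx, heq⟩ := hx
      rw [mem_P4_iff] at hx
      obtain ⟨h1,h2,h3,h4,h5⟩ := hx
      have heq' : u = u' := heq
      have h5' : u * v + u * v' = n := by rw [← heq'] at h5; exact h5
      show (⟨(u, v + v'), v⟩ : (_ : ℕ × ℕ) × ℕ) ∈ _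
      simp only [Finset.mem_sigma, Nat.mem_divisorsAntidiagonal, Finset.mem_Ico]
      have h6 : u * (v + v') = u * v + u * v' := Nat.mul_add u v v'
      have h7 : 0 < u * v := Nat.mul_pos h1 h2
      refine ⟨⟨by omega, by omega⟩, by omega, by omega⟩
    · rintro ⟨⟨u,w⟩, v⟩ hz
      simp only [Finset.mem_sigma, Nat.mem_divisorsAntidiagonal, Finset.mem_Ico] at hz
      have hvv : v + (w - v) = w := by omega
      simp [hvv]
    · rintro ⟨⟨u,v⟩,u',v'⟩ hx
      simp only [Finset.mem_filter] at hx
      obtain ⟨-, heq⟩ := hx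
      have heq' : u = u' := heq
      have hvv : v + v' - v = v' := by omega
      simp [hvv, heq']
    · rintro ⟨⟨u,w⟩, v⟩ hz
      rfl

def P6 (n : ℕ) : Finset ((ℕ × ℕ) × ((ℕ × ℕ) × ℕ × ℕ)) :=
  ((Finset.range (n+1) ×ˢ Finset.range (n+1)) ×ˢ
    ((Finset.range (n+1) ×ˢ Finset.range (n+1)) ×ˢ (Finset.range (n+1) ×ˢ Finset.range (n+1)))).filter
    fun x => 0 < x.1.1 ∧ 0 < x.1.2 ∧ 0 < x.2.1.1 ∧ x.2.1.1 < x.2.1.2 ∧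
      0 < x.2.2.1 ∧ 0 < x.2.2.2 ∧
      x.1.1 * x.1.2 + (x.2.1.1 * x.2.2.1 + x.2.1.2 * x.2.2.2) = n

lemma mem_P6_iff {n u v u1 u2 v1 v2 : ℕ} :
    ((u,v),((u1,u2),(v1,v2))) ∈ P6 n ↔
      (0 < u ∧ 0 < v ∧ 0 < u1 ∧ u1 < u2 ∧ 0 < v1 ∧ 0 < v2 ∧
        u*v + (u1*v1 + u2*v2) = n) := by
  simp only [P6, Finset.mem_filter, Finset.mem_product, Finset.mem_range]
  constructor
  · rintro ⟨-, h⟩; exact h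
  · rintro ⟨h1,h2,h3,h4,h5,h6,h7⟩
    have e1 : u ≤ u*v := Nat.le_mul_of_pos_right _ h2
    have e2 : v ≤ u*v := Nat.le_mul_of_pos_left _ h1
    have e3 : u1 ≤ u1*v1 := Nat.le_mul_of_pos_right _ h5
    have e4 : v1 ≤ u1*v1 := Nat.le_mul_of_pos_left _ h3
    have e5 : u2 ≤ u2*v2 := Nat.le_mul_of_pos_right _ h6
    have e6 : v2 ≤ u2*v2 := Nat.le_mul_of_pos_left _ (h3.trans h4)
    exact ⟨⟨⟨by omega, by omega⟩, ⟨by omega, by omega⟩, by omega, by omega⟩,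
      h1,h2,h3,h4,h5,h6,h7⟩

lemma coeff_mul_S1S2 (W : ℕ → ℕ → ℚ) (V : ℕ → ℕ → ℕ → ℕ → ℚ) (n : ℕ) :
    PowerSeries.coeff n (S1 W * S2 V) =
      ∑ x ∈ P6 n, W x.1.1 x.1.2 * V x.2.1.1 x.2.1.2 x.2.2.1 x.2.2.2 := by
  rw [PowerSeries.coeff_mul]
  simp only [S1_coeff, S2_coeff, Finset.sum_mul_sum]
  simp only [← Finset.sum_product']
  rw [Finset.sum_sigma' (Finset.HasAntidiagonal.antidiagonal n)
    (fun p => p.1.divisorsAntidiagonal ×ˢ T4 p.2)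
    (fun _ z => W z.1.1 z.1.2 * V z.2.1.1 z.2.1.2 z.2.2.1 z.2.2.2)]
  refine Finset.sum_nbij' (i := fun z => z.2)
    (j := fun x => ⟨(x.1.1*x.1.2, x.2.1.1*x.2.2.1 + x.2.1.2*x.2.2.2), x⟩) ?_ ?_ ?_ ?_ ?_
  · rintro ⟨⟨p1,p2⟩, ⟨⟨u,v⟩,⟨⟨u1,u2⟩,v1,v2⟩⟩⟩ ha
    simp only [Finset.mem_sigma, Finset.HasAntidiagonal.mem_antidiagonal, Finset.mem_product,
      Nat.mem_divisorsAntidiagonal] at ha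
    obtain ⟨hp, ⟨⟨huv, hp1⟩, ht⟩⟩ := ha
    rw [mem_T4_iff] at ht
    have h1 : 0 < u := Nat.pos_of_ne_zero fun h0 => hp1 (by rw [← huv, h0, zero_mul])
    have h2 : 0 < v := Nat.pos_of_ne_zero fun h0 => hp1 (by rw [← huv, h0, mul_zero])
    show ((u,v),((u1,u2),(v1,v2))) ∈ P6 n
    rw [mem_P6_iff]
    exact ⟨h1, h2, ht.1, ht.2.1, ht.2.2.1, ht.2.2.2.1,
      by rw [huv, ht.2.2.2.2, hp]⟩
  · rintro ⟨⟨u,v⟩,⟨⟨u1,u2⟩,v1,v2⟩⟩ hx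
    rw [mem_P6_iff] at hx
    obtain ⟨h1,h2,h3,h4,h5,h6,h7⟩ := hx
    show (⟨(u*v, u1*v1+u2*v2), ((u,v),((u1,u2),(v1,v2)))⟩ :
      (_ : ℕ × ℕ) × ((ℕ × ℕ) × ((ℕ × ℕ) × ℕ × ℕ))) ∈ _
    simp only [Finset.mem_sigma, Finset.HasAntidiagonal.mem_antidiagonal, Finset.mem_product,
      Nat.mem_divisorsAntidiagonal]
    refine ⟨h7, ⟨trivial, Nat.mul_ne_zero (by omega) (by omega)⟩, ?_⟩
    rw [mem_T4_iff]
    exact ⟨h3,h4,h5,h6,rfl⟩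
  · rintro ⟨⟨p1,p2⟩, ⟨⟨u,v⟩,⟨⟨u1,u2⟩,v1,v2⟩⟩⟩ ha
    simp only [Finset.mem_sigma, Finset.HasAntidiagonal.mem_antidiagonal, Finset.mem_product,
      Nat.mem_divisorsAntidiagonal] at ha
    obtain ⟨hp, ⟨⟨huv, hp1⟩, ht⟩⟩ := ha
    rw [mem_T4_iff] at ht
    simp only
    rw [huv, ht.2.2.2.2]
  · rintro x hx; rfl
  · rintro z hz; rfl

lemma U12 (W : ℕ → ℕ → ℚ) (V : ℕ → ℕ → ℕ → ℕ → ℚ) :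
    S1 W * S2 V =
      S3 (fun a b c x y z => W a x * V b c y z)
      + S2 (fun u1 u2 w v2 => ∑ v ∈ Finset.Ico 1 w, W u1 v * V u1 u2 (w - v) v2)
      + S3 (fun a b c x y z => W b y * V a c x z)
      + S2 (fun u1 u2 v1 w => ∑ v ∈ Finset.Ico 1 w, W u2 v * V u1 u2 v1 (w - v))
      + S3 (fun a b c x y z => W c z * V a b x y) := by
  ext n
  rw [map_add, map_add, map_add, map_add, coeff_mul_S1S2,
    S3_coeff, S3_coeff, S3_coeff, S2_coeff, S2_coeff]
  have hsplit := sum_split5 (P6 n)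
    (fun x => W x.1.1 x.1.2 * V x.2.1.1 x.2.1.2 x.2.2.1 x.2.2.2)
    (fun x => x.1.1) (fun x => x.2.1.1) (fun x => x.2.1.2)
    (fun x hx => by
      rcases x with ⟨⟨u,v⟩,⟨⟨u1,u2⟩,v1,v2⟩⟩
      rw [mem_P6_iff] at hx
      exact hx.2.2.2.1)
  rw [hsplit]
  congr 1
  congr 1
  congr 1
  congr 1
  · -- u < u1 case
    refine Finset.sum_nbij'
      (i := fun x => ((x.1.1, x.2.1.1, x.2.1.2),(x.1.2, x.2.2.1, x.2.2.2)))
      (j := fun y => ((y.1.1, y.2.1),((y.1.2.1, y.1.2.2),(y.2.2.1, y.2.2.2)))) ?_ ?_ ?_ ?_ ?_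
    · rintro ⟨⟨u,v⟩,⟨⟨u1,u2⟩,v1,v2⟩⟩ hx
      simp only [Finset.mem_filter] at hx
      obtain ⟨hx, hlt⟩ := hx
      rw [mem_P6_iff] at hx
      have hlt' : u < u1 := hlt
      show ((u,u1,u2),(v,v1,v2)) ∈ T6 n
      rw [mem_T6_iff]
      exact ⟨hx.1, hlt', hx.2.2.2.1, hx.2.1, hx.2.2.2.2.1, hx.2.2.2.2.2.1, by omega⟩
    · rintro ⟨⟨u1,u2,u3⟩,v1,v2,v3⟩ hy
      rw [mem_T6_iff] at hy
      simp only [Finset.mem_filter]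
      refine ⟨?_, hy.2.1⟩
      show ((u1,v1),((u2,u3),(v2,v3))) ∈ P6 n
      rw [mem_P6_iff]
      exact ⟨hy.1, hy.2.2.2.1, hy.1.trans hy.2.1, hy.2.2.1,
        hy.2.2.2.2.1, hy.2.2.2.2.2.1, by omega⟩
    · rintro ⟨⟨u,v⟩,⟨⟨u1,u2⟩,v1,v2⟩⟩ _; rfl
    · rintro ⟨⟨u1,u2,u3⟩,v1,v2,v3⟩ _; rfl
    · rintro ⟨⟨u,v⟩,⟨⟨u1,u2⟩,v1,v2⟩⟩ _; rfl
  · -- u = u1 case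
    rw [Finset.sum_sigma' (T4 n) (fun y => Finset.Ico 1 y.2.1)
      (fun y v => W y.1.1 v * V y.1.1 y.1.2 (y.2.1 - v) y.2.2)]
    refine (Finset.sum_nbij'
      (i := fun z => ((z.1.1.1, z.2),((z.1.1.1, z.1.1.2),(z.1.2.1 - z.2, z.1.2.2))))
      (j := fun x => ⟨((x.2.1.1, x.2.1.2),(x.1.2 + x.2.2.1, x.2.2.2)), x.1.2⟩)
      ?_ ?_ ?_ ?_ ?_).symm
    · rintro ⟨⟨⟨u1,u2⟩,w,v2⟩, v⟩ hz
      simp only [Finset.mem_sigma, Finset.mem_Ico] at hz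
      obtain ⟨ht, hv1, hvw⟩ := hz
      rw [mem_T4_iff] at ht
      obtain ⟨h1,h2,h3,h4,h5⟩ := ht
      simp only [Finset.mem_filter]
      refine ⟨?_, by trivial⟩
      show ((u1,v),((u1,u2),(w-v,v2))) ∈ P6 n
      rw [mem_P6_iff]
      refine ⟨h1, by omega, h1, h2, by omega, h4, ?_⟩
      have hvv : v + (w - v) = w := by omega
      have h6 : u1 * v + u1 * (w - v) = u1 * w := by rw [← Nat.mul_add, hvv]
      omega
    · rintro ⟨⟨u,v⟩,⟨⟨u1,u2⟩,v1,v2⟩⟩ hx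
      simp only [Finset.mem_filter] at hx
      obtain ⟨hx, heq⟩ := hx
      rw [mem_P6_iff] at hx
      obtain ⟨h1,h2,h3,h4,h5,h6,h7⟩ := hx
      have heq' : u = u1 := heq
      have h7' : u1 * v + (u1*v1 + u2*v2) = n := by rw [heq'] at h7; exact h7
      show (⟨((u1,u2),(v+v1,v2)), v⟩ : (_ : (ℕ×ℕ) × ℕ × ℕ) × ℕ) ∈ _
      simp only [Finset.mem_sigma, Finset.mem_Ico]
      refine ⟨?_, by omega, by omega⟩
      rw [mem_T4_iff]
      have h8 : u1 * (v + v1) = u1 * v + u1 * v1 := Nat.mul_add u1 v v1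
      exact ⟨h3, h4, by omega, h6, by omega⟩
    · rintro ⟨⟨⟨u1,u2⟩,w,v2⟩, v⟩ hz
      simp only [Finset.mem_sigma, Finset.mem_Ico] at hz
      have hvv : v + (w - v) = w := by omega
      simp [hvv]
    · rintro ⟨⟨u,v⟩,⟨⟨u1,u2⟩,v1,v2⟩⟩ hx
      simp only [Finset.mem_filter] at hx
      obtain ⟨-, heq⟩ := hx
      have heq' : u = u1 := heq
      have hvv : v + v1 - v = v1 := by omega
      simp [hvv, heq']
    · rintro ⟨⟨⟨u1,u2⟩,w,v2⟩, v⟩ hz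
      rfl
  · -- u1 < u < u2 case
    refine Finset.sum_nbij'
      (i := fun x => ((x.2.1.1, x.1.1, x.2.1.2),(x.2.2.1, x.1.2, x.2.2.2)))
      (j := fun y => ((y.1.2.1, y.2.2.1),((y.1.1, y.1.2.2),(y.2.1, y.2.2.2)))) ?_ ?_ ?_ ?_ ?_
    · rintro ⟨⟨u,v⟩,⟨⟨u1,u2⟩,v1,v2⟩⟩ hx
      simp only [Finset.mem_filter] at hx
      obtain ⟨hx, hlt⟩ := hx
      rw [mem_P6_iff] at hx
      have hlt1 : u1 < u := hlt.1
      have hlt2 : u < u2 := hlt.2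
      show ((u1,u,u2),(v1,v,v2)) ∈ T6 n
      rw [mem_T6_iff]
      exact ⟨hx.2.2.1, hlt1, hlt2, hx.2.2.2.2.1, hx.2.1, hx.2.2.2.2.2.1, by omega⟩
    · rintro ⟨⟨u1,u2,u3⟩,v1,v2,v3⟩ hy
      rw [mem_T6_iff] at hy
      simp only [Finset.mem_filter]
      refine ⟨?_, ?_⟩
      · show ((u2,v2),((u1,u3),(v1,v3))) ∈ P6 n
        rw [mem_P6_iff]
        exact ⟨hy.1.trans hy.2.1, hy.2.2.2.2.1, hy.1, hy.2.1.trans hy.2.2.1,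
          hy.2.2.2.1, hy.2.2.2.2.2.1, by omega⟩
      · exact ⟨hy.2.1, hy.2.2.1⟩
    · rintro ⟨⟨u,v⟩,⟨⟨u1,u2⟩,v1,v2⟩⟩ _; rfl
    · rintro ⟨⟨u1,u2,u3⟩,v1,v2,v3⟩ _; rfl
    · rintro ⟨⟨u,v⟩,⟨⟨u1,u2⟩,v1,v2⟩⟩ _; rfl
  · -- u = u2 case
    rw [Finset.sum_sigma' (T4 n) (fun y => Finset.Ico 1 y.2.2)
      (fun y v => W y.1.2 v * V y.1.1 y.1.2 y.2.1 (y.2.2 - v))]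
    refine (Finset.sum_nbij'
      (i := fun z => ((z.1.1.2, z.2),((z.1.1.1, z.1.1.2),(z.1.2.1, z.1.2.2 - z.2))))
      (j := fun x => ⟨((x.2.1.1, x.2.1.2),(x.2.2.1, x.1.2 + x.2.2.2)), x.1.2⟩)
      ?_ ?_ ?_ ?_ ?_).symm
    · rintro ⟨⟨⟨u1,u2⟩,v1,w⟩, v⟩ hz
      simp only [Finset.mem_sigma, Finset.mem_Ico] at hz
      obtain ⟨ht, hv1, hvw⟩ := hz
      rw [mem_T4_iff] at ht
      obtain ⟨h1,h2,h3,h4,h5⟩ := ht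
      simp only [Finset.mem_filter]
      refine ⟨?_, by trivial⟩
      show ((u2,v),((u1,u2),(v1,w-v))) ∈ P6 n
      rw [mem_P6_iff]
      refine ⟨by omega, by omega, h1, h2, h3, by omega, ?_⟩
      have hvv : v + (w - v) = w := by omega
      have h6 : u2 * v + u2 * (w - v) = u2 * w := by rw [← Nat.mul_add, hvv]
      omega
    · rintro ⟨⟨u,v⟩,⟨⟨u1,u2⟩,v1,v2⟩⟩ hx
      simp only [Finset.mem_filter] at hx
      obtain ⟨hx, heq⟩ := hx
      rw [mem_P6_iff] at hx
      obtain ⟨h1,h2,h3,h4,h5,h6,h7⟩ := hx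
      have heq' : u = u2 := heq
      have h7' : u2 * v + (u1*v1 + u2*v2) = n := by rw [heq'] at h7; exact h7
      show (⟨((u1,u2),(v1,v+v2)), v⟩ : (_ : (ℕ×ℕ) × ℕ × ℕ) × ℕ) ∈ _
      simp only [Finset.mem_sigma, Finset.mem_Ico]
      refine ⟨?_, by omega, by omega⟩
      rw [mem_T4_iff]
      have h8 : u2 * (v + v2) = u2 * v + u2 * v2 := Nat.mul_add u2 v v2
      exact ⟨h3, h4, h5, by omega, by omega⟩
    · rintro ⟨⟨⟨u1,u2⟩,v1,w⟩, v⟩ hz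
      simp only [Finset.mem_sigma, Finset.mem_Ico] at hz
      have hvv : v + (w - v) = w := by omega
      simp [hvv]
    · rintro ⟨⟨u,v⟩,⟨⟨u1,u2⟩,v1,v2⟩⟩ hx
      simp only [Finset.mem_filter] at hx
      obtain ⟨-, heq⟩ := hx
      have heq' : u = u2 := heq
      have hvv : v + v2 - v = v2 := by omega
      simp [hvv, heq']
    · rintro ⟨⟨⟨u1,u2⟩,v1,w⟩, v⟩ hz
      rfl
  · -- u2 < u case
    refine Finset.sum_nbij'
      (i := fun x => ((x.2.1.1, x.2.1.2, x.1.1),(x.2.2.1, x.2.2.2, x.1.2)))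
      (j := fun y => ((y.1.2.2, y.2.2.2),((y.1.1, y.1.2.1),(y.2.1, y.2.2.1)))) ?_ ?_ ?_ ?_ ?_
    · rintro ⟨⟨u,v⟩,⟨⟨u1,u2⟩,v1,v2⟩⟩ hx
      simp only [Finset.mem_filter] at hx
      obtain ⟨hx, hlt⟩ := hx
      rw [mem_P6_iff] at hx
      have hlt' : u2 < u := hlt
      show ((u1,u2,u),(v1,v2,v)) ∈ T6 n
      rw [mem_T6_iff]
      exact ⟨hx.2.2.1, hx.2.2.2.1, hlt', hx.2.2.2.2.1, hx.2.2.2.2.2.1, hx.2.1, by omega⟩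
    · rintro ⟨⟨u1,u2,u3⟩,v1,v2,v3⟩ hy
      rw [mem_T6_iff] at hy
      simp only [Finset.mem_filter]
      refine ⟨?_, hy.2.2.1⟩
      show ((u3,v3),((u1,u2),(v1,v2))) ∈ P6 n
      rw [mem_P6_iff]
      exact ⟨(hy.1.trans hy.2.1).trans hy.2.2.1, hy.2.2.2.2.2.1, hy.1, hy.2.1,
        hy.2.2.2.1, hy.2.2.2.2.1, by omega⟩
    · rintro ⟨⟨u,v⟩,⟨⟨u1,u2⟩,v1,v2⟩⟩ _; rfl
    · rintro ⟨⟨u1,u2,u3⟩,v1,v2,v3⟩ _; rfl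
    · rintro ⟨⟨u,v⟩,⟨⟨u1,u2⟩,v1,v2⟩⟩ _; rfl


/-- binomial expansion with factorial normalisation -/
lemma addpow_fact (x y : ℚ) (p : ℕ) :
    (x + y)^p / (Nat.factorial p : ℚ) =
      ∑ j ∈ Finset.range (p+1),
        (x^j / (Nat.factorial j : ℚ)) * (y^(p-j) / (Nat.factorial (p-j) : ℚ)) := by
  rw [add_pow, Finset.sum_div]
  refine Finset.sum_congr rfl fun j hj => ?_
  have hjp : j ≤ p := Nat.lt_succ_iff.mp (Finset.mem_range.mp hj)
  rw [Nat.cast_choose ℚ hjp]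
  have h1 : (Nat.factorial j : ℚ) ≠ 0 := Nat.cast_ne_zero.mpr (Nat.factorial_ne_zero j)
  have h2 : (Nat.factorial (p-j) : ℚ) ≠ 0 := Nat.cast_ne_zero.mpr (Nat.factorial_ne_zero (p-j))
  have h3 : (Nat.factorial p : ℚ) ≠ 0 := Nat.cast_ne_zero.mpr (Nat.factorial_ne_zero p)
  field_simp

/-- expansion of a polynomial evaluation as a sum of monomials up to degree D -/
lemma poly_expand (P : Polynomial ℚ) (D : ℕ) (hD : P.natDegree ≤ D) (x : ℚ) :
    P.eval x = ∑ e ∈ Finset.range (D+1), P.coeff e * x^e :=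
  Polynomial.eval_eq_sum_range' (Nat.lt_succ_of_le hD) x

/-- Faulhaber: the power sum as a polynomial -/
lemma faulhaber_poly (m : ℕ) :
    ∃ P : Polynomial ℚ, P.natDegree ≤ m + 1 ∧
      ∀ w : ℕ, (∑ v ∈ Finset.range w, (v:ℚ)^m) = P.eval (w:ℚ) := by
  refine ⟨∑ i ∈ Finset.range (m+1),
    Polynomial.C (bernoulli i * ((m+1).choose i) / (m+1)) * Polynomial.X ^ (m+1-i), ?_, ?_⟩
  · refine (Polynomial.natDegree_sum_le _ _).trans ?_
    rw [Finset.fold_max_le]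
    refine ⟨Nat.zero_le _, fun i _ => ?_⟩
    refine (Polynomial.natDegree_mul_le).trans ?_
    simp only [Polynomial.natDegree_C, Polynomial.natDegree_X_pow, zero_add]
    omega
  · intro w
    rw [sum_range_pow w m]
    rw [Polynomial.eval_finset_sum]
    refine Finset.sum_congr rfl fun i _ => ?_
    simp [mul_div_assoc, div_mul_eq_mul_div]
    push_cast
    ring

/-- the convolution sums are polynomials in `w` -/
lemma conv_poly (p q : ℕ) :
    ∃ P : Polynomial ℚ, P.natDegree ≤ p + q + 1 ∧
      ∀ w : ℕ, 0 < w →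
        (∑ v ∈ Finset.Ico 1 w, (v:ℚ)^p * (((w - v : ℕ)):ℚ)^q) = P.eval (w:ℚ) := by
  have hF : ∀ m : ℕ, ∃ P : Polynomial ℚ, P.natDegree ≤ m + 1 ∧
      ∀ w : ℕ, 0 < w → (∑ v ∈ Finset.Ico 1 w, (v:ℚ)^m) = P.eval (w:ℚ) := by
    intro m
    obtain ⟨P, hdeg, hP⟩ := faulhaber_poly m
    refine ⟨P - Polynomial.C (if m = 0 then (1:ℚ) else 0), ?_, ?_⟩
    · refine (Polynomial.natDegree_sub_le _ _).trans ?_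
      exact max_le hdeg (by split_ifs <;> simp)
    · intro w hw
      have hsum : (∑ v ∈ Finset.range w, (v:ℚ)^m)
          = (0:ℚ)^m + ∑ v ∈ Finset.Ico 1 w, (v:ℚ)^m := by
        rw [Finset.range_eq_Ico, Finset.sum_eq_sum_Ico_succ_bot hw]
        norm_num
      have h0 : ((0:ℚ))^m = (if m = 0 then (1:ℚ) else 0) := by
        split_ifs with h
        · simp [h]
        · exact zero_pow h
      rw [Polynomial.eval_sub, Polynomial.eval_C, ← hP w]
      rw [hsum, h0]
      ring
  -- expand (w-v)^q binomially
  choose F hFdeg hFval using hF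
  refine ⟨∑ i ∈ Finset.range (q+1),
    Polynomial.C (((q.choose i : ℚ)) * (-1)^(q-i)) * Polynomial.X ^ i * F (p+q-i), ?_, ?_⟩
  · refine (Polynomial.natDegree_sum_le _ _).trans ?_
    rw [Finset.fold_max_le]
    refine ⟨Nat.zero_le _, fun i hi => ?_⟩
    have hi' : i ≤ q := Nat.lt_succ_iff.mp (Finset.mem_range.mp hi)
    refine (Polynomial.natDegree_mul_le).trans ?_
    have := hFdeg (p+q-i)
    have h2 : (Polynomial.C (((q.choose i : ℚ)) * (-1)^(q-i)) * Polynomial.X ^ i).natDegree ≤ i :=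
      le_of_le_of_eq (Polynomial.natDegree_C_mul_le _ _) (Polynomial.natDegree_X_pow i)
    omega
  · intro w hw
    have hstep : ∀ v ∈ Finset.Ico 1 w,
        (v:ℚ)^p * (((w - v : ℕ)):ℚ)^q =
          ∑ i ∈ Finset.range (q+1),
            ((q.choose i : ℚ)) * (-1)^(q-i) * (w:ℚ)^i * (v:ℚ)^(p+q-i) := by
      intro v hv
      rw [Finset.mem_Ico] at hv
      have hvw : v ≤ w := le_of_lt hv.2
      have hcast : (((w - v : ℕ)):ℚ) = (w:ℚ) - (v:ℚ) := by
        push_cast [hvw]; ring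
      rw [hcast]
      have : ((w:ℚ) - v)^q = ((w:ℚ) + (-(v:ℚ)))^q := by ring_nf
      rw [this, add_pow]
      rw [Finset.mul_sum]
      refine Finset.sum_congr rfl fun i hi => ?_
      have hi' : i ≤ q := Nat.lt_succ_iff.mp (Finset.mem_range.mp hi)
      have hsplit : p + q - i = p + (q - i) := by omega
      rw [neg_pow, hsplit, pow_add]
      ring
    rw [Finset.sum_congr rfl hstep, Finset.sum_comm]
    rw [Polynomial.eval_finset_sum]
    refine Finset.sum_congr rfl fun i hi => ?_
    rw [Polynomial.eval_mul, Polynomial.eval_mul, Polynomial.eval_C, Polynomial.eval_pow,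
      Polynomial.eval_X, ← hFval (p+q-i) w hw, Finset.mul_sum]
    try refine Finset.sum_congr rfl fun v hv => ?_
    try ring

/-- generalized convolution with a polynomial left factor -/
lemma conv_polyP (P : Polynomial ℚ) (D q : ℕ) (hD : P.natDegree ≤ D) :
    ∃ Q : Polynomial ℚ, Q.natDegree ≤ D + q + 1 ∧
      ∀ w : ℕ, 0 < w →
        (∑ v ∈ Finset.Ico 1 w, P.eval (v:ℚ) * (((w - v : ℕ)):ℚ)^q) = Q.eval (w:ℚ) := by
  have h := fun e => conv_poly e q
  choose F hFdeg hFval using h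
  refine ⟨∑ e ∈ Finset.range (D+1), Polynomial.C (P.coeff e) * F e, ?_, ?_⟩
  · refine (Polynomial.natDegree_sum_le _ _).trans ?_
    rw [Finset.fold_max_le]
    refine ⟨Nat.zero_le _, fun e he => ?_⟩
    have he' : e ≤ D := Nat.lt_succ_iff.mp (Finset.mem_range.mp he)
    have := (Polynomial.natDegree_C_mul_le (P.coeff e) (F e)).trans (hFdeg e)
    simp only [Function.comp_apply]
    omega
  · intro w hw
    rw [Polynomial.eval_finset_sum]
    have hstep : ∀ v ∈ Finset.Ico 1 w,
        P.eval (v:ℚ) * (((w - v : ℕ)):ℚ)^q =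
          ∑ e ∈ Finset.range (D+1), P.coeff e * ((v:ℚ)^e * (((w - v : ℕ)):ℚ)^q) := by
      intro v _
      rw [poly_expand P D hD, Finset.sum_mul]
      refine Finset.sum_congr rfl fun e _ => by ring
    rw [Finset.sum_congr rfl hstep, Finset.sum_comm]
    refine Finset.sum_congr rfl fun e _ => ?_
    rw [Polynomial.eval_mul, Polynomial.eval_C, ← hFval e w hw, Finset.mul_sum]

lemma S1_swap (W : ℕ → ℕ → ℚ) : S1 W = S1 (fun u v => W v u) := by
  ext n
  rw [S1_coeff, S1_coeff]
  refine Finset.sum_nbij' (i := fun x => (x.2, x.1)) (j := fun x => (x.2, x.1))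
    ?_ ?_ ?_ ?_ ?_
  · rintro ⟨u,v⟩ hx
    rw [Nat.mem_divisorsAntidiagonal] at hx ⊢
    exact ⟨by rw [← hx.1]; ring, hx.2⟩
  · rintro ⟨u,v⟩ hx
    rw [Nat.mem_divisorsAntidiagonal] at hx ⊢
    exact ⟨by rw [← hx.1]; ring, hx.2⟩
  · rintro ⟨u,v⟩ _; rfl
  · rintro ⟨u,v⟩ _; rfl
  · rintro ⟨u,v⟩ _; rfl

/-! ### identification of the basic series with S-forms -/

lemma gb_S1 (d k : ℕ) : gb d k =
    S1 (fun u v => ((u : ℚ) ^ d / (Nat.factorial d : ℚ)) *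
      ((v:ℚ) ^ (k - 1) / (Nat.factorial (k - 1) : ℚ))) := rfl

lemma gb2_S2 (d1 d2 k1 k2 : ℕ) : gb2 d1 d2 k1 k2 =
    S2 (fun u1 u2 v1 v2 =>
      ((u1 : ℚ) ^ d1 / (Nat.factorial d1 : ℚ)) *
      ((u2 : ℚ) ^ d2 / (Nat.factorial d2 : ℚ)) *
      ((v1 : ℚ) ^ (k1 - 1) / (Nat.factorial (k1 - 1) : ℚ)) *
      ((v2 : ℚ) ^ (k2 - 1) / (Nat.factorial (k2 - 1) : ℚ))) := rfl

lemma gb3_S3 (d1 d2 d3 k1 k2 k3 : ℕ) : gb3 d1 d2 d3 k1 k2 k3 =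
    S3 (fun u1 u2 u3 v1 v2 v3 =>
      ((u1 : ℚ) ^ d1 / (Nat.factorial d1 : ℚ)) *
      ((u2 : ℚ) ^ d2 / (Nat.factorial d2 : ℚ)) *
      ((u3 : ℚ) ^ d3 / (Nat.factorial d3 : ℚ)) *
      ((v1 : ℚ) ^ (k1 - 1) / (Nat.factorial (k1 - 1) : ℚ)) *
      ((v2 : ℚ) ^ (k2 - 1) / (Nat.factorial (k2 - 1) : ℚ)) *
      ((v3 : ℚ) ^ (k3 - 1) / (Nat.factorial (k3 - 1) : ℚ))) := rfl

lemma g_S1 (k : ℕ) : g k = S1 (fun _ v => (v:ℚ) ^ (k-1) / (Nat.factorial (k-1) : ℚ)) := by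
  rw [g, gb_S1]
  exact S1_congr fun u v _ _ => by norm_num

lemma g2_S2 (a b : ℕ) : g2 a b = S2 (fun _ _ v1 v2 =>
    ((v1:ℚ) ^ (a-1) / (Nat.factorial (a-1) : ℚ)) *
    ((v2:ℚ) ^ (b-1) / (Nat.factorial (b-1) : ℚ))) := by
  rw [g2, gb2_S2]
  exact S2_congr fun u1 u2 v1 v2 _ _ _ _ => by norm_num

lemma g3_S3 (a b c : ℕ) : g3 a b c = S3 (fun _ _ _ v1 v2 v3 =>
    ((v1:ℚ) ^ (a-1) / (Nat.factorial (a-1) : ℚ)) *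
    ((v2:ℚ) ^ (b-1) / (Nat.factorial (b-1) : ℚ)) *
    ((v3:ℚ) ^ (c-1) / (Nat.factorial (c-1) : ℚ))) := by
  rw [g3, gb3_S3]
  exact S3_congr fun u1 u2 u3 v1 v2 v3 _ _ _ _ _ _ => by norm_num

/-! ### the span -/

noncomputable def Sp (N : ℕ) : Submodule ℚ (PowerSeries ℚ) :=
  Submodule.span ℚ (gshSpanSet N)

lemma mem_g {N m : ℕ} (h1 : 1 ≤ m) (h2 : m ≤ N) : g m ∈ Sp N :=
  Submodule.subset_span (Or.inl (Or.inl (Or.inr ⟨m, h1, h2, rfl⟩)))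

lemma mem_gsh2 {N a b : ℕ} (h1 : 1 ≤ a) (h2 : 1 ≤ b) (h3 : a + b ≤ N) :
    gsh2 a b ∈ Sp N :=
  Submodule.subset_span (Or.inl (Or.inr ⟨a, b, h1, h2, h3, rfl⟩))

lemma mem_gsh3 {N a b c : ℕ} (h1 : 1 ≤ a) (h2 : 1 ≤ b) (h3 : 1 ≤ c)
    (h4 : a + b + c ≤ N) : gsh3 a b c ∈ Sp N :=
  Submodule.subset_span (Or.inr ⟨a, b, c, h1, h2, h3, h4, rfl⟩)

lemma Sp_mono {N N' : ℕ} (h : N ≤ N') : Sp N ≤ Sp N' := by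
  apply Submodule.span_mono
  rintro f (((hf | ⟨m,hm1,hm2,hm3⟩) | ⟨a,b,h1,h2,h3,h4⟩) | ⟨a,b,c,h1,h2,h3,h4,h5⟩)
  · exact Or.inl (Or.inl (Or.inl hf))
  · exact Or.inl (Or.inl (Or.inr ⟨m, hm1, hm2.trans h, hm3⟩))
  · exact Or.inl (Or.inr ⟨a, b, h1, h2, h3.trans h, h4⟩)
  · exact Or.inr ⟨a, b, c, h1, h2, h3, h4.trans h, h5⟩

/-- span lemma for depth-one series with polynomial weight -/
lemma span_S1_poly (P : Polynomial ℚ) (D N : ℕ) (hD : P.natDegree ≤ D)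
    (hDN : D + 1 ≤ N) : S1 (fun _ w => P.eval (w:ℚ)) ∈ Sp N := by
  have h1 : S1 (fun _ w => P.eval (w:ℚ))
      = S1 (fun _ w => ∑ e ∈ Finset.range (D+1),
          (P.coeff e * Nat.factorial e) * ((w:ℚ)^e / (Nat.factorial e : ℚ))) := by
    apply S1_congr
    intro u w _ _
    rw [poly_expand P D hD]
    refine Finset.sum_congr rfl fun e _ => ?_
    have : (Nat.factorial e : ℚ) ≠ 0 := Nat.cast_ne_zero.mpr (Nat.factorial_ne_zero e)
    field_simp
  rw [h1, S1_sum]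
  apply Submodule.sum_mem
  intro e he
  have he' : e ≤ D := Nat.lt_succ_iff.mp (Finset.mem_range.mp he)
  have h2 : S1 (fun u w => (P.coeff e * Nat.factorial e) *
      ((w:ℚ)^e / (Nat.factorial e : ℚ)))
      = (P.coeff e * Nat.factorial e) • g (e+1) := by
    rw [g_S1 (e+1), ← S1_smul]
    refine S1_congr fun u w _ _ => ?_
    have : (Nat.factorial e : ℚ) ≠ 0 := Nat.cast_ne_zero.mpr (Nat.factorial_ne_zero e)
    simp only [Nat.add_sub_cancel]
    try field_simp
    try ring
  rw [h2]
  exact Submodule.smul_mem _ _ (mem_g (by omega) (by omega))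

lemma g1_eq : g 1 = S1 (fun _ _ => (1:ℚ)) := by
  rw [g_S1]
  exact S1_congr fun u v _ _ => by norm_num

lemma gsh2_one (b : ℕ) : gsh2 1 b = g2 1 b + (1/2 : ℚ) • (gb 1 b - g b) := by
  rw [gsh2, if_pos rfl]

lemma gsh2_ne {a : ℕ} (b : ℕ) (h : a ≠ 1) : gsh2 a b = g2 a b := by
  rw [gsh2, if_neg h, zero_smul, add_zero]

/-- the explicit formula for `g^{(1)}_k` in terms of depth ≤ 2 plain series -/
lemma E1L (k : ℕ) (hk : 1 ≤ k) :
    ∃ P : Polynomial ℚ, P.natDegree ≤ k ∧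
      gb 1 k = g2 k 1 + S1 (fun _ w => P.eval (w:ℚ)) + g k
        - ∑ j ∈ Finset.range k, g2 (j+1) (k-j) := by
  have hk1 : k - 1 + 1 = k := by omega
  -- the direct (u-)stuffle
  obtain ⟨Q, hQdeg, hQ⟩ := conv_polyP (Polynomial.C ((Nat.factorial (k-1) : ℚ)⁻¹))
    0 (k-1) (by simp)
  have hU0 := U11 (fun _ _ => (1:ℚ)) (fun _ v => (v:ℚ)^(k-1) / (Nat.factorial (k-1) : ℚ))
  rw [← g1_eq, ← g_S1] at hU0
  have hU : g 1 * g k = g2 1 k + g2 k 1 + S1 (fun _ w => Q.eval (w:ℚ)) := by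
    rw [hU0]
    congr 1
    congr 1
    · rw [g2_S2]
      exact S2_congr fun u1 u2 v1 v2 _ _ _ _ => by norm_num
    · rw [g2_S2]
      exact S2_congr fun u1 u2 v1 v2 _ _ _ _ => by norm_num
    · apply S1_congr
      intro u w _ hw
      rw [← hQ w hw]
      refine Finset.sum_congr rfl fun v _ => ?_
      rw [Polynomial.eval_C]
      ring
  -- the swapped (m-)stuffle
  have hM0 := U11 (fun _ _ => (1:ℚ)) (fun u _ => (u:ℚ)^(k-1) / (Nat.factorial (k-1) : ℚ))
  have hgT : g k = S1 (fun u _ => (u:ℚ)^(k-1) / (Nat.factorial (k-1) : ℚ)) := by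
    rw [g_S1, S1_swap]
  rw [← g1_eq, ← hgT] at hM0
  have hA : S2 (fun u1 u2 v1 v2 => (1:ℚ) * ((u2:ℚ)^(k-1) / (Nat.factorial (k-1) : ℚ)))
      = ∑ j ∈ Finset.range k, g2 (j+1) (k-j) := by
    rw [S2_swap]
    have h1 : S2 (fun u1 u2 v1 v2 =>
        (1:ℚ) * ((((v1+v2 : ℕ)):ℚ)^(k-1) / (Nat.factorial (k-1) : ℚ)))
        = S2 (fun u1 u2 v1 v2 => ∑ j ∈ Finset.range k,
            ((v1:ℚ)^j / (Nat.factorial j : ℚ)) *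
            ((v2:ℚ)^(k-1-j) / (Nat.factorial (k-1-j) : ℚ))) := by
      apply S2_congr
      intro u1 u2 v1 v2 _ _ _ _
      rw [one_mul]
      push_cast
      rw [addpow_fact (v1:ℚ) (v2:ℚ) (k-1), hk1]
    rw [h1, S2_sum]
    refine Finset.sum_congr rfl fun j hj => ?_
    have hj' : j ≤ k - 1 := by
      have := Finset.mem_range.mp hj; omega
    rw [g2_S2]
    apply S2_congr
    intro u1 u2 v1 v2 _ _ _ _
    have e1 : (j+1) - 1 = j := by omega
    have e2 : (k-j) - 1 = k-1-j := by omega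
    rw [e1, e2]
  have hB : S2 (fun u1 u2 v1 v2 => ((u1:ℚ)^(k-1) / (Nat.factorial (k-1) : ℚ)) * (1:ℚ))
      = g2 1 k := by
    rw [S2_swap, g2_S2]
    apply S2_congr
    intro u1 u2 v1 v2 _ _ _ _
    norm_num
  have hC : S1 (fun u w => ∑ v ∈ Finset.Ico 1 w,
        (1:ℚ) * ((u:ℚ)^(k-1) / (Nat.factorial (k-1) : ℚ)))
      = gb 1 k - g k := by
    have h1 : S1 (fun u w => ∑ v ∈ Finset.Ico 1 w,
          (1:ℚ) * ((u:ℚ)^(k-1) / (Nat.factorial (k-1) : ℚ)))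
        = S1 (fun u w => (((w - 1 : ℕ)):ℚ) * ((u:ℚ)^(k-1) / (Nat.factorial (k-1) : ℚ))) := by
      apply S1_congr
      intro u w _ _
      rw [Finset.sum_const, Nat.card_Ico, nsmul_eq_mul, one_mul]
    rw [h1, S1_swap]
    have h2 : S1 (fun u w => (((u - 1 : ℕ)):ℚ) * ((w:ℚ)^(k-1) / (Nat.factorial (k-1) : ℚ)))
        = S1 (fun u w => ((u:ℚ)^1 / (Nat.factorial 1 : ℚ)) * ((w:ℚ)^(k-1) / (Nat.factorial (k-1) : ℚ))
            - (w:ℚ)^(k-1) / (Nat.factorial (k-1) : ℚ)) := by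
      apply S1_congr
      intro u w hu _
      have : ((u - 1 : ℕ) : ℚ) = (u:ℚ) - 1 := by push_cast [hu]; ring
      rw [this]
      norm_num
      ring
    rw [h2, S1_sub, ← gb_S1, ← g_S1]
  rw [hA, hB, hC] at hM0
  refine ⟨Q, (by omega : Q.natDegree ≤ k), ?_⟩
  linear_combination hU - hM0

/-- `g^{(1)}_k` lies in the span of weight `k+1` -/
lemma L1 (k : ℕ) (hk : 1 ≤ k) : gb 1 k ∈ Sp (k+1) := by
  rcases Nat.eq_or_lt_of_le hk with h1 | h2
  · -- k = 1 : gb 1 1 = g 2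
    have hk1 : k = 1 := h1.symm
    subst hk1
    have h : gb 1 1 = g 2 := by
      rw [gb_S1, S1_swap, g_S1]
      exact S1_congr fun u v _ _ => by norm_num
    rw [h]
    exact mem_g (by omega) (by omega)
  · have hk2 : 2 ≤ k := h2
    obtain ⟨P, hPdeg, hE⟩ := E1L k hk
    have hsplit : ∑ j ∈ Finset.range k, g2 (j+1) (k-j)
        = g2 1 k + ∑ j ∈ Finset.Ico 1 k, g2 (j+1) (k-j) := by
      rw [Finset.range_eq_Ico, Finset.sum_eq_sum_Ico_succ_bot (by omega : 0 < k)]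
      norm_num
    rw [hsplit] at hE
    -- A := the span part
    set A := g2 k 1 + S1 (fun _ w => P.eval (w:ℚ)) + g k
      - ∑ j ∈ Finset.Ico 1 k, g2 (j+1) (k-j) with hA
    have hAmem : A ∈ Sp (k+1) := by
      apply Submodule.sub_mem
      apply Submodule.add_mem
      apply Submodule.add_mem
      · rw [← gsh2_ne 1 (by omega : k ≠ 1)]
        exact mem_gsh2 (by omega) (by omega) (by omega)
      · exact span_S1_poly P k (k+1) hPdeg (by omega)
      · exact mem_g (by omega) (by omega)
      · apply Submodule.sum_mem
        intro j hj
        rw [Finset.mem_Ico] at hj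
        rw [← gsh2_ne (k-j) (by omega : j+1 ≠ 1)]
        exact mem_gsh2 (by omega) (by omega) (by omega)
    have hG := gsh2_one k
    have hC12 : (PowerSeries.C (R := ℚ)) (1/2 : ℚ) * 2 = 1 := by
      rw [← map_ofNat (PowerSeries.C (R := ℚ)) 2, ← map_mul]
      norm_num
    have key : gb 1 k = (2:ℚ) • A - (2:ℚ) • gsh2 1 k - g k := by
      rw [smul_eq_C_mul, smul_eq_C_mul, map_ofNat]
      rw [smul_eq_C_mul] at hG
      linear_combination (2 : PowerSeries ℚ) * hE - 2 * hA + 2 * hG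
        + (gb 1 k - g k) * hC12
    rw [key]
    apply Submodule.sub_mem
    apply Submodule.sub_mem
    · exact Submodule.smul_mem _ _ hAmem
    · exact Submodule.smul_mem _ _ (mem_gsh2 (by omega) (by omega) (by omega))
    · exact mem_g (by omega) (by omega)

lemma g2mem {N a b : ℕ} (ha : 1 ≤ a) (hb : 1 ≤ b) (hN : a + b ≤ N) : g2 a b ∈ Sp N := by
  rcases eq_or_ne a 1 with h | h
  · subst h
    have hkey : g2 1 b = gsh2 1 b - (1/2 : ℚ) • (gb 1 b - g b) := by
      rw [gsh2_one b, add_sub_cancel_right]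
    rw [hkey]
    refine Submodule.sub_mem _ (mem_gsh2 (by omega) hb hN) ?_
    refine Submodule.smul_mem _ _ (Submodule.sub_mem _ ?_ (mem_g hb (by omega)))
    exact Sp_mono (by omega) (L1 b hb)
  · rw [← gsh2_ne b h]
    exact mem_gsh2 ha hb hN

lemma span_S1_upoly (P : Polynomial ℚ) (D N : ℕ) (hD : P.natDegree ≤ D)
    (hDN : D + 2 ≤ N) : S1 (fun u w => (u:ℚ) * P.eval (w:ℚ)) ∈ Sp N := by
  have h1 : S1 (fun u w => (u:ℚ) * P.eval (w:ℚ))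
      = S1 (fun u w => ∑ e ∈ Finset.range (D+1),
          (P.coeff e * Nat.factorial e) *
            (((u:ℚ)^1 / (Nat.factorial 1 : ℚ)) * ((w:ℚ)^e / (Nat.factorial e : ℚ)))) := by
    apply S1_congr
    intro u w _ _
    rw [poly_expand P D hD, Finset.mul_sum]
    refine Finset.sum_congr rfl fun e _ => ?_
    have : (Nat.factorial e : ℚ) ≠ 0 := Nat.cast_ne_zero.mpr (Nat.factorial_ne_zero e)
    field_simp
    ring
  rw [h1, S1_sum]
  apply Submodule.sum_mem
  intro e he
  have he' : e ≤ D := Nat.lt_succ_iff.mp (Finset.mem_range.mp he)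
  have h2 : S1 (fun u w => (P.coeff e * Nat.factorial e) *
      (((u:ℚ)^1 / (Nat.factorial 1 : ℚ)) * ((w:ℚ)^e / (Nat.factorial e : ℚ))))
      = (P.coeff e * Nat.factorial e) • gb 1 (e+1) := by
    rw [gb_S1, ← S1_smul]
    refine S1_congr fun u w _ _ => ?_
    simp only [Nat.add_sub_cancel]
  rw [h2]
  refine Submodule.smul_mem _ _ (Sp_mono (by omega) (L1 (e+1) (by omega)))

lemma span_S2_P_left (P : Polynomial ℚ) (D r N : ℕ) (hD : P.natDegree ≤ D)
    (hN : D + r + 2 ≤ N) :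
    S2 (fun _ _ v1 v2 => P.eval (v1:ℚ) * ((v2:ℚ)^r / (Nat.factorial r : ℚ))) ∈ Sp N := by
  have h1 : S2 (fun _ _ v1 v2 => P.eval (v1:ℚ) * ((v2:ℚ)^r / (Nat.factorial r : ℚ)))
      = S2 (fun _ _ v1 v2 => ∑ e ∈ Finset.range (D+1),
          (P.coeff e * Nat.factorial e) *
            (((v1:ℚ)^e / (Nat.factorial e : ℚ)) * ((v2:ℚ)^r / (Nat.factorial r : ℚ)))) := by
    apply S2_congr
    intro u1 u2 v1 v2 _ _ _ _
    rw [poly_expand P D hD, Finset.sum_mul]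
    refine Finset.sum_congr rfl fun e _ => ?_
    have : (Nat.factorial e : ℚ) ≠ 0 := Nat.cast_ne_zero.mpr (Nat.factorial_ne_zero e)
    field_simp
  rw [h1, S2_sum]
  apply Submodule.sum_mem
  intro e he
  have he' : e ≤ D := Nat.lt_succ_iff.mp (Finset.mem_range.mp he)
  have h2 : S2 (fun _ _ v1 v2 => (P.coeff e * Nat.factorial e) *
      (((v1:ℚ)^e / (Nat.factorial e : ℚ)) * ((v2:ℚ)^r / (Nat.factorial r : ℚ))))
      = (P.coeff e * Nat.factorial e) • g2 (e+1) (r+1) := by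
    rw [g2_S2, ← S2_smul]
    refine S2_congr fun u1 u2 v1 v2 _ _ _ _ => ?_
    simp only [Nat.add_sub_cancel]
    try ring
  rw [h2]
  exact Submodule.smul_mem _ _ (g2mem (by omega) (by omega) (by omega))

lemma span_S2_P_right (P : Polynomial ℚ) (D r N : ℕ) (hD : P.natDegree ≤ D)
    (hN : D + r + 2 ≤ N) :
    S2 (fun _ _ v1 v2 => ((v1:ℚ)^r / (Nat.factorial r : ℚ)) * P.eval (v2:ℚ)) ∈ Sp N := by
  have h1 : S2 (fun _ _ v1 v2 => ((v1:ℚ)^r / (Nat.factorial r : ℚ)) * P.eval (v2:ℚ))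
      = S2 (fun _ _ v1 v2 => ∑ e ∈ Finset.range (D+1),
          (P.coeff e * Nat.factorial e) *
            (((v1:ℚ)^r / (Nat.factorial r : ℚ)) * ((v2:ℚ)^e / (Nat.factorial e : ℚ)))) := by
    apply S2_congr
    intro u1 u2 v1 v2 _ _ _ _
    rw [poly_expand P D hD, Finset.mul_sum]
    refine Finset.sum_congr rfl fun e _ => ?_
    have : (Nat.factorial e : ℚ) ≠ 0 := Nat.cast_ne_zero.mpr (Nat.factorial_ne_zero e)
    field_simp
  rw [h1, S2_sum]
  apply Submodule.sum_mem
  intro e he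
  have he' : e ≤ D := Nat.lt_succ_iff.mp (Finset.mem_range.mp he)
  have h2 : S2 (fun _ _ v1 v2 => (P.coeff e * Nat.factorial e) *
      (((v1:ℚ)^r / (Nat.factorial r : ℚ)) * ((v2:ℚ)^e / (Nat.factorial e : ℚ))))
      = (P.coeff e * Nat.factorial e) • g2 (r+1) (e+1) := by
    rw [g2_S2, ← S2_smul]
    refine S2_congr fun u1 u2 v1 v2 _ _ _ _ => ?_
    simp only [Nat.add_sub_cancel]
    try ring
  rw [h2]
  exact Submodule.smul_mem _ _ (g2mem (by omega) (by omega) (by omega))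

/-! ### gsh3 conversions -/

lemma gsh3_one_left {a : ℕ} (b : ℕ) (h : a ≠ 1) :
    gsh3 1 a b = g3 1 a b + (1/2 : ℚ) • (gb2 1 0 a b - g2 a b) := by
  rw [gsh3, if_pos rfl, if_neg h, if_neg (by simpa using h : ¬ (1 * a = 1))]
  simp only [zero_smul, add_zero]

lemma gsh3_one_mid {a : ℕ} (b : ℕ) (h : a ≠ 1) :
    gsh3 a 1 b = g3 a 1 b + (1/2 : ℚ) • (gb2 0 1 a b - gb2 1 0 a b - g2 a b) := by
  rw [gsh3, if_neg h, if_pos rfl, if_neg (by simpa using h : ¬ (a * 1 = 1))]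
  simp only [zero_smul, add_zero, zero_add]

lemma gsh3_plain {a b : ℕ} (c : ℕ) (h1 : a ≠ 1) (h2 : b ≠ 1) :
    gsh3 a b c = g3 a b c := by
  rw [gsh3, if_neg h1, if_neg h2, if_neg (by
    intro hab
    exact h1 (Nat.dvd_one.mp ⟨b, hab.symm⟩))]
  simp only [zero_smul, add_zero]

/-! ### products of depth-one series -/

lemma prod_g_g {a b N : ℕ} (ha : 1 ≤ a) (hb : 1 ≤ b) (hN : a + b ≤ N) :
    g a * g b - g2 a b - g2 b a ∈ Sp N := by
  obtain ⟨Q, hQdeg, hQ⟩ := conv_polyP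
    (Polynomial.C ((Nat.factorial (a-1) : ℚ)⁻¹ * (Nat.factorial (b-1) : ℚ)⁻¹)
      * Polynomial.X ^ (a-1))
    (a-1) (b-1)
    (le_of_le_of_eq (Polynomial.natDegree_C_mul_le _ _) (Polynomial.natDegree_X_pow _))
  have hU := U11 (fun _ v => (v:ℚ)^(a-1) / (Nat.factorial (a-1) : ℚ))
    (fun _ v => (v:ℚ)^(b-1) / (Nat.factorial (b-1) : ℚ))
  rw [← g_S1, ← g_S1] at hU
  have e1 : S2 (fun u1 u2 v1 v2 => ((v1:ℚ)^(a-1) / (Nat.factorial (a-1) : ℚ)) *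
      ((v2:ℚ)^(b-1) / (Nat.factorial (b-1) : ℚ))) = g2 a b := (g2_S2 a b).symm
  have e2 : S2 (fun u1 u2 v1 v2 => ((v1:ℚ)^(b-1) / (Nat.factorial (b-1) : ℚ)) *
      ((v2:ℚ)^(a-1) / (Nat.factorial (a-1) : ℚ))) = g2 b a := (g2_S2 b a).symm
  have e3 : S1 (fun u w => ∑ v ∈ Finset.Ico 1 w,
        ((v:ℚ)^(a-1) / (Nat.factorial (a-1) : ℚ)) *
        ((((w - v : ℕ)):ℚ)^(b-1) / (Nat.factorial (b-1) : ℚ)))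
      = S1 (fun _ w => Q.eval (w:ℚ)) := by
    apply S1_congr
    intro u w _ hw
    rw [← hQ w hw]
    refine Finset.sum_congr rfl fun v _ => ?_
    simp only [Polynomial.eval_mul, Polynomial.eval_C, Polynomial.eval_pow, Polynomial.eval_X]
    ring
  rw [e1, e2, e3] at hU
  have : g a * g b - g2 a b - g2 b a = S1 (fun _ w => Q.eval (w:ℚ)) := by
    linear_combination hU
  rw [this]
  exact span_S1_poly Q (a+b-1) N (by omega) (by omega)

lemma prod_S1poly_g (P : Polynomial ℚ) (D b N : ℕ) (hD : P.natDegree ≤ D) (hb : 1 ≤ b)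
    (hN : D + 1 + b ≤ N) :
    S1 (fun _ w => P.eval (w:ℚ)) * g b ∈ Sp N := by
  obtain ⟨Q, hQdeg, hQ⟩ := conv_polyP
    (Polynomial.C ((Nat.factorial (b-1) : ℚ)⁻¹) * P) D (b-1)
    ((Polynomial.natDegree_C_mul_le _ _).trans hD)
  have hU := U11 (fun _ w => P.eval (w:ℚ))
    (fun _ v => (v:ℚ)^(b-1) / (Nat.factorial (b-1) : ℚ))
  rw [← g_S1] at hU
  have e3 : S1 (fun u w => ∑ v ∈ Finset.Ico 1 w,
        P.eval (v:ℚ) * ((((w - v : ℕ)):ℚ)^(b-1) / (Nat.factorial (b-1) : ℚ)))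
      = S1 (fun _ w => Q.eval (w:ℚ)) := by
    apply S1_congr
    intro u w _ hw
    rw [← hQ w hw]
    refine Finset.sum_congr rfl fun v _ => ?_
    simp only [Polynomial.eval_mul, Polynomial.eval_C]
    ring
  rw [e3] at hU
  rw [hU]
  refine Submodule.add_mem _ (Submodule.add_mem _ ?_ ?_) ?_
  · exact span_S2_P_left P D (b-1) N hD (by omega)
  · exact span_S2_P_right P D (b-1) N hD (by omega)
  · exact span_S1_poly Q (D + b) N (by omega) (by omega)

/-- u-stuffle of `g c * g2 a b` : the product minus the three strict terms is in the span -/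
lemma U12g {c a b N : ℕ} (hc : 1 ≤ c) (ha : 1 ≤ a) (hb : 1 ≤ b) (hN : c + a + b ≤ N) :
    g c * g2 a b - g3 c a b - g3 a c b - g3 a b c ∈ Sp N := by
  obtain ⟨Q1, hQ1deg, hQ1⟩ := conv_polyP
    (Polynomial.C ((Nat.factorial (c-1) : ℚ)⁻¹ * (Nat.factorial (a-1) : ℚ)⁻¹)
      * Polynomial.X ^ (c-1)) (c-1) (a-1)
    (le_of_le_of_eq (Polynomial.natDegree_C_mul_le _ _) (Polynomial.natDegree_X_pow _))
  obtain ⟨Q2, hQ2deg, hQ2⟩ := conv_polyP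
    (Polynomial.C ((Nat.factorial (c-1) : ℚ)⁻¹ * (Nat.factorial (b-1) : ℚ)⁻¹)
      * Polynomial.X ^ (c-1)) (c-1) (b-1)
    (le_of_le_of_eq (Polynomial.natDegree_C_mul_le _ _) (Polynomial.natDegree_X_pow _))
  have hU := U12 (fun _ v => (v:ℚ)^(c-1) / (Nat.factorial (c-1) : ℚ))
    (fun _ _ v1 v2 => ((v1:ℚ)^(a-1) / (Nat.factorial (a-1) : ℚ)) *
      ((v2:ℚ)^(b-1) / (Nat.factorial (b-1) : ℚ)))
  rw [← g_S1, ← g2_S2] at hU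
  have e1 : S3 (fun a' b' c' x y z =>
      ((x:ℚ)^(c-1) / (Nat.factorial (c-1) : ℚ)) *
      (((y:ℚ)^(a-1) / (Nat.factorial (a-1) : ℚ)) * ((z:ℚ)^(b-1) / (Nat.factorial (b-1) : ℚ))))
      = g3 c a b := by
    rw [g3_S3]
    exact S3_congr fun u1 u2 u3 v1 v2 v3 _ _ _ _ _ _ => by ring
  have e2 : S3 (fun a' b' c' x y z =>
      ((y:ℚ)^(c-1) / (Nat.factorial (c-1) : ℚ)) *
      (((x:ℚ)^(a-1) / (Nat.factorial (a-1) : ℚ)) * ((z:ℚ)^(b-1) / (Nat.factorial (b-1) : ℚ))))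
      = g3 a c b := by
    rw [g3_S3]
    exact S3_congr fun u1 u2 u3 v1 v2 v3 _ _ _ _ _ _ => by ring
  have e3 : S3 (fun a' b' c' x y z =>
      ((z:ℚ)^(c-1) / (Nat.factorial (c-1) : ℚ)) *
      (((x:ℚ)^(a-1) / (Nat.factorial (a-1) : ℚ)) * ((y:ℚ)^(b-1) / (Nat.factorial (b-1) : ℚ))))
      = g3 a b c := by
    rw [g3_S3]
    exact S3_congr fun u1 u2 u3 v1 v2 v3 _ _ _ _ _ _ => by ring
  have e4 : S2 (fun u1 u2 w v2 => ∑ v ∈ Finset.Ico 1 w,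
        ((v:ℚ)^(c-1) / (Nat.factorial (c-1) : ℚ)) *
        (((((w - v : ℕ)):ℚ)^(a-1) / (Nat.factorial (a-1) : ℚ)) *
          ((v2:ℚ)^(b-1) / (Nat.factorial (b-1) : ℚ))))
      = S2 (fun _ _ v1 v2 => Q1.eval (v1:ℚ) * ((v2:ℚ)^(b-1) / (Nat.factorial (b-1) : ℚ))) := by
    apply S2_congr
    intro u1 u2 v1 v2 _ _ hv1 _
    rw [← hQ1 v1 hv1, Finset.sum_mul]
    refine Finset.sum_congr rfl fun v _ => ?_
    simp only [Polynomial.eval_mul, Polynomial.eval_C, Polynomial.eval_pow, Polynomial.eval_X]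
    ring
  have e5 : S2 (fun u1 u2 v1 w => ∑ v ∈ Finset.Ico 1 w,
        ((v:ℚ)^(c-1) / (Nat.factorial (c-1) : ℚ)) *
        (((v1:ℚ)^(a-1) / (Nat.factorial (a-1) : ℚ)) *
          ((((w - v : ℕ)):ℚ)^(b-1) / (Nat.factorial (b-1) : ℚ))))
      = S2 (fun _ _ v1 v2 => ((v1:ℚ)^(a-1) / (Nat.factorial (a-1) : ℚ)) * Q2.eval (v2:ℚ)) := by
    apply S2_congr
    intro u1 u2 v1 v2 _ _ _ hv2
    rw [← hQ2 v2 hv2, Finset.mul_sum]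
    refine Finset.sum_congr rfl fun v _ => ?_
    simp only [Polynomial.eval_mul, Polynomial.eval_C, Polynomial.eval_pow, Polynomial.eval_X]
    ring
  rw [e1, e2, e3, e4, e5] at hU
  have hfin : g c * g2 a b - g3 c a b - g3 a c b - g3 a b c
      = S2 (fun _ _ v1 v2 => Q1.eval (v1:ℚ) * ((v2:ℚ)^(b-1) / (Nat.factorial (b-1) : ℚ)))
      + S2 (fun _ _ v1 v2 => ((v1:ℚ)^(a-1) / (Nat.factorial (a-1) : ℚ)) * Q2.eval (v2:ℚ)) := by
    linear_combination hU
  rw [hfin]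
  refine Submodule.add_mem _ ?_ ?_
  · exact span_S2_P_left Q1 (c+a-1) (b-1) N (by omega) (by omega)
  · exact span_S2_P_right Q2 (c+b-1) (a-1) N (by omega) (by omega)

/-- the swapped (shuffle-type) stuffle of `g 1 * g2 a b` : exact identity -/
lemma M12 {a b : ℕ} (ha : 1 ≤ a) (hb : 1 ≤ b) :
    g 1 * g2 a b = g3 1 a b + (∑ j ∈ Finset.range a, g3 (j+1) (a-j) b)
      + (∑ i ∈ Finset.range b, g3 a (i+1) (b-i))
      + gb2 0 1 a b - (2:ℚ) • g2 a b := by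
  have ha1 : a - 1 + 1 = a := by omega
  have hb1 : b - 1 + 1 = b := by omega
  set V' : ℕ → ℕ → ℕ → ℕ → ℚ := fun u1 u2 v1 v2 =>
    ((((u2 - u1 : ℕ)):ℚ)^(a-1) / (Nat.factorial (a-1) : ℚ)) *
    (((u1:ℚ))^(b-1) / (Nat.factorial (b-1) : ℚ)) with hV'
  have hswap : g2 a b = S2 V' := by
    rw [g2_S2, S2_swap]
  have hU := U12 (fun _ _ => (1:ℚ)) V'
  rw [← g1_eq, ← hswap] at hU
  -- term 1 : insertion at the bottom
  have e1 : S3 (fun a' b' c' x y z => (1:ℚ) * V' b' c' y z)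
      = ∑ i ∈ Finset.range b, g3 a (i+1) (b-i) := by
    rw [S3_swap]
    have h1 : S3 (fun u1 u2 u3 v1 v2 v3 => (1:ℚ) * V' (v2+v3) (v1+v2+v3) (u2-u1) u1)
        = S3 (fun u1 u2 u3 v1 v2 v3 => ∑ i ∈ Finset.range b,
            ((v1:ℚ)^(a-1) / (Nat.factorial (a-1) : ℚ)) *
            (((v2:ℚ)^i / (Nat.factorial i : ℚ)) *
             ((v3:ℚ)^(b-1-i) / (Nat.factorial (b-1-i) : ℚ)))) := by
      apply S3_congr
      intro u1 u2 u3 v1 v2 v3 _ _ _ _ _ _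
      rw [hV']
      simp only [one_mul]
      have h2 : v1 + v2 + v3 - (v2 + v3) = v1 := by omega
      rw [h2]
      push_cast
      rw [addpow_fact (v2:ℚ) (v3:ℚ) (b-1), hb1, Finset.mul_sum]
    rw [h1, S3_sum]
    refine Finset.sum_congr rfl fun i hi => ?_
    have hi' : i ≤ b - 1 := by have := Finset.mem_range.mp hi; omega
    rw [g3_S3]
    apply S3_congr
    intro u1 u2 u3 v1 v2 v3 _ _ _ _ _ _
    have e1' : (i+1) - 1 = i := by omega
    have e2' : (b-i) - 1 = b-1-i := by omega
    rw [e1', e2']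
    try ring
  -- term 3 : insertion in the middle
  have e3 : S3 (fun a' b' c' x y z => (1:ℚ) * V' a' c' x z)
      = ∑ j ∈ Finset.range a, g3 (j+1) (a-j) b := by
    rw [S3_swap]
    have h1 : S3 (fun u1 u2 u3 v1 v2 v3 => (1:ℚ) * V' v3 (v1+v2+v3) (u3-u2) u1)
        = S3 (fun u1 u2 u3 v1 v2 v3 => ∑ j ∈ Finset.range a,
            (((v1:ℚ)^j / (Nat.factorial j : ℚ)) *
             ((v2:ℚ)^(a-1-j) / (Nat.factorial (a-1-j) : ℚ))) *
            ((v3:ℚ)^(b-1) / (Nat.factorial (b-1) : ℚ))) := by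
      apply S3_congr
      intro u1 u2 u3 v1 v2 v3 _ _ _ _ _ _
      rw [hV']
      simp only [one_mul]
      have h2 : v1 + v2 + v3 - v3 = v1 + v2 := by omega
      rw [h2]
      push_cast
      rw [addpow_fact (v1:ℚ) (v2:ℚ) (a-1), ha1, Finset.sum_mul]
    rw [h1, S3_sum]
    refine Finset.sum_congr rfl fun j hj => ?_
    have hj' : j ≤ a - 1 := by have := Finset.mem_range.mp hj; omega
    rw [g3_S3]
    apply S3_congr
    intro u1 u2 u3 v1 v2 v3 _ _ _ _ _ _
    have e1' : (j+1) - 1 = j := by omega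
    have e2' : (a-j) - 1 = a-1-j := by omega
    rw [e1', e2']
    try ring
  -- term 5 : insertion at the top
  have e5 : S3 (fun a' b' c' x y z => (1:ℚ) * V' a' b' x y) = g3 1 a b := by
    rw [S3_swap, g3_S3]
    apply S3_congr
    intro u1 u2 u3 v1 v2 v3 _ _ _ _ _ _
    simp only [hV', one_mul]
    have h2 : v2 + v3 - v3 = v2 := by omega
    rw [h2]
    norm_num
    try ring
  -- term 2 : first merge
  have e2 : S2 (fun u1 u2 w v2 => ∑ v ∈ Finset.Ico 1 w, (1:ℚ) * V' u1 u2 (w - v) v2)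
      = gb2 0 1 a b - gb2 1 0 a b - g2 a b := by
    have h1 : S2 (fun u1 u2 w v2 => ∑ v ∈ Finset.Ico 1 w, (1:ℚ) * V' u1 u2 (w - v) v2)
        = S2 (fun u1 u2 v1 v2 => (((v1 - 1 : ℕ)):ℚ) * V' u1 u2 0 v2) := by
      apply S2_congr
      intro u1 u2 v1 v2 _ _ _ _
      simp only [hV', one_mul]
      rw [Finset.sum_const, Nat.card_Ico, nsmul_eq_mul]
    rw [h1, S2_swap]
    have h2 : S2 (fun u1 u2 v1 v2 => ((((u2-u1) - 1 : ℕ)):ℚ) * V' v2 (v1+v2) 0 u1)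
        = S2 (fun u1 u2 v1 v2 =>
            (((u2:ℚ)^1 / (Nat.factorial 1 : ℚ)) *
              (((v1:ℚ)^(a-1) / (Nat.factorial (a-1) : ℚ)) *
               ((v2:ℚ)^(b-1) / (Nat.factorial (b-1) : ℚ))))
            - (((u1:ℚ)^1 / (Nat.factorial 1 : ℚ)) *
              (((v1:ℚ)^(a-1) / (Nat.factorial (a-1) : ℚ)) *
               ((v2:ℚ)^(b-1) / (Nat.factorial (b-1) : ℚ))))
            - (((v1:ℚ)^(a-1) / (Nat.factorial (a-1) : ℚ)) *
               ((v2:ℚ)^(b-1) / (Nat.factorial (b-1) : ℚ)))) := by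
      apply S2_congr
      intro u1 u2 v1 v2 hu1 hu12 _ _
      simp only [hV']
      have h3 : ((u2 - u1 - 1 : ℕ) : ℚ) = (u2:ℚ) - (u1:ℚ) - 1 := by
        have h5 : 1 ≤ u2 - u1 := by omega
        push_cast [Nat.le_of_lt hu12, h5]
        ring
      have h4 : v1 + v2 - v2 = v1 := by omega
      rw [h4, h3]
      norm_num
      ring
    have hX : S2 (fun u1 u2 v1 v2 =>
        ((u2:ℚ)^1 / (Nat.factorial 1 : ℚ)) *
          (((v1:ℚ)^(a-1) / (Nat.factorial (a-1) : ℚ)) *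
           ((v2:ℚ)^(b-1) / (Nat.factorial (b-1) : ℚ)))) = gb2 0 1 a b := by
      rw [gb2_S2]
      exact S2_congr fun u1 u2 v1 v2 _ _ _ _ => by norm_num; try ring
    have hY : S2 (fun u1 u2 v1 v2 =>
        ((u1:ℚ)^1 / (Nat.factorial 1 : ℚ)) *
          (((v1:ℚ)^(a-1) / (Nat.factorial (a-1) : ℚ)) *
           ((v2:ℚ)^(b-1) / (Nat.factorial (b-1) : ℚ)))) = gb2 1 0 a b := by
      rw [gb2_S2]
      exact S2_congr fun u1 u2 v1 v2 _ _ _ _ => by norm_num; try ring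
    have hZ : S2 (fun u1 u2 v1 v2 =>
        ((v1:ℚ)^(a-1) / (Nat.factorial (a-1) : ℚ)) *
        ((v2:ℚ)^(b-1) / (Nat.factorial (b-1) : ℚ))) = g2 a b := (g2_S2 a b).symm
    rw [h2, S2_sub, S2_sub, hX, hY, hZ]
  -- term 4 : second merge
  have e4 : S2 (fun u1 u2 v1 w => ∑ v ∈ Finset.Ico 1 w, (1:ℚ) * V' u1 u2 v1 (w - v))
      = gb2 1 0 a b - g2 a b := by
    have h1 : S2 (fun u1 u2 v1 w => ∑ v ∈ Finset.Ico 1 w, (1:ℚ) * V' u1 u2 v1 (w - v))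
        = S2 (fun u1 u2 v1 v2 => (((v2 - 1 : ℕ)):ℚ) * V' u1 u2 v1 0) := by
      apply S2_congr
      intro u1 u2 v1 v2 _ _ _ _
      simp only [hV', one_mul]
      rw [Finset.sum_const, Nat.card_Ico, nsmul_eq_mul]
    rw [h1, S2_swap]
    have h2 : S2 (fun u1 u2 v1 v2 => (((u1 - 1 : ℕ)):ℚ) * V' v2 (v1+v2) (u2-u1) 0)
        = S2 (fun u1 u2 v1 v2 =>
            (((u1:ℚ)^1 / (Nat.factorial 1 : ℚ)) *
              (((v1:ℚ)^(a-1) / (Nat.factorial (a-1) : ℚ)) *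
               ((v2:ℚ)^(b-1) / (Nat.factorial (b-1) : ℚ))))
            - (((v1:ℚ)^(a-1) / (Nat.factorial (a-1) : ℚ)) *
               ((v2:ℚ)^(b-1) / (Nat.factorial (b-1) : ℚ)))) := by
      apply S2_congr
      intro u1 u2 v1 v2 hu1 hu12 _ _
      simp only [hV']
      have h3 : ((u1 - 1 : ℕ) : ℚ) = (u1:ℚ) - 1 := by push_cast [hu1]; ring
      have h4 : v1 + v2 - v2 = v1 := by omega
      rw [h4, h3]
      norm_num
      ring
    have hY : S2 (fun u1 u2 v1 v2 =>
        ((u1:ℚ)^1 / (Nat.factorial 1 : ℚ)) *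
          (((v1:ℚ)^(a-1) / (Nat.factorial (a-1) : ℚ)) *
           ((v2:ℚ)^(b-1) / (Nat.factorial (b-1) : ℚ)))) = gb2 1 0 a b := by
      rw [gb2_S2]
      exact S2_congr fun u1 u2 v1 v2 _ _ _ _ => by norm_num; try ring
    have hZ : S2 (fun u1 u2 v1 v2 =>
        ((v1:ℚ)^(a-1) / (Nat.factorial (a-1) : ℚ)) *
        ((v2:ℚ)^(b-1) / (Nat.factorial (b-1) : ℚ))) = g2 a b := (g2_S2 a b).symm
    rw [h2, S2_sub, hY, hZ]
  rw [e1, e2, e3, e4, e5] at hU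
  rw [smul_eq_C_mul, map_ofNat]
  linear_combination hU

/-- the key depth-2 lemma : `g^{(0,1)}_{a,b}` is in the span -/
lemma L2 {a b N : ℕ} (ha : 2 ≤ a) (hb : 2 ≤ b) (hN : a + b + 1 ≤ N) :
    gb2 0 1 a b ∈ Sp N := by
  obtain ⟨m, rfl⟩ : ∃ m, a = m + 2 := ⟨a - 2, by omega⟩
  obtain ⟨l, rfl⟩ : ∃ l, b = l + 2 := ⟨b - 2, by omega⟩
  have hU := U12g (c:=1) (a:=m+2) (b:=l+2) (N:=N) (by omega) (by omega) (by omega) (by omega)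
  have hM := M12 (a:=m+2) (b:=l+2) (by omega) (by omega)
  set SA := ∑ j ∈ Finset.Ico 1 (m+1), g3 (j+1) (m+2-j) (l+2) with hSA
  set SB := ∑ i ∈ Finset.Ico 1 (l+2), g3 (m+2) (i+1) (l+2-i) with hSB
  have s1 : ∑ j ∈ Finset.range (m+2), g3 (j+1) (m+2-j) (l+2)
      = g3 1 (m+2) (l+2) + SA + g3 (m+2) 1 (l+2) := by
    rw [Finset.range_eq_Ico, Finset.sum_eq_sum_Ico_succ_bot (by omega : 0 < m+2),
      Finset.sum_Ico_succ_top (by omega : 1 ≤ m+1)]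
    have e1 : m + 2 - (m+1) = 1 := by omega
    have e2 : m + 2 - 0 = m + 2 := by omega
    rw [e1, e2, hSA]
    norm_num
    abel
  have s2 : ∑ i ∈ Finset.range (l+2), g3 (m+2) (i+1) (l+2-i)
      = g3 (m+2) 1 (l+2) + SB := by
    rw [Finset.range_eq_Ico, Finset.sum_eq_sum_Ico_succ_bot (by omega : 0 < l+2), hSB]
    norm_num
  have hSAmem : SA ∈ Sp N := by
    rw [hSA]
    apply Submodule.sum_mem
    intro j hj
    rw [Finset.mem_Ico] at hj
    rw [← gsh3_plain (l+2) (by omega : j+1 ≠ 1) (by omega : m+2-j ≠ 1)]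
    exact mem_gsh3 (by omega) (by omega) (by omega) (by omega)
  have hSBmem : SB ∈ Sp N := by
    rw [hSB]
    apply Submodule.sum_mem
    intro i hi
    rw [Finset.mem_Ico] at hi
    rw [← gsh3_plain (l+2-i) (by omega : m+2 ≠ 1) (by omega : i+1 ≠ 1)]
    exact mem_gsh3 (by omega) (by omega) (by omega) (by omega)
  have c1 := gsh3_one_left (a:=m+2) (l+2) (by omega)
  have c2 := gsh3_one_mid (a:=m+2) (l+2) (by omega)
  have c3 := gsh3_plain (a:=m+2) (b:=l+2) 1 (by omega) (by omega)
  have hC12 : (PowerSeries.C (R := ℚ)) (1/2 : ℚ) * 2 = 1 := by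
    rw [← map_ofNat (PowerSeries.C (R := ℚ)) 2, ← map_mul]
    norm_num
  have hkey : gb2 0 1 (m+2) (l+2)
      = (2:ℚ) • (g 1 * g2 (m+2) (l+2) - g3 1 (m+2) (l+2) - g3 (m+2) 1 (l+2)
          - g3 (m+2) (l+2) 1)
        - (2:ℚ) • gsh3 1 (m+2) (l+2) - (2:ℚ) • gsh3 (m+2) 1 (l+2)
        + (2:ℚ) • gsh3 (m+2) (l+2) 1
        - (2:ℚ) • SA - (2:ℚ) • SB + (2:ℚ) • g2 (m+2) (l+2) := by
    simp only [smul_eq_C_mul, map_ofNat] at hM c1 c2 ⊢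
    linear_combination (-2 : PowerSeries ℚ) * hM - 2 * s1 - 2 * s2
      + 2 * c1 + 2 * c2 - 2 * c3
      + (gb2 0 1 (m+2) (l+2) - 2 * g2 (m+2) (l+2)) * hC12
  rw [hkey]
  refine Submodule.add_mem _ (Submodule.sub_mem _ (Submodule.sub_mem _
    (Submodule.add_mem _ (Submodule.sub_mem _ (Submodule.sub_mem _
      (Submodule.smul_mem _ _ hU)
      (Submodule.smul_mem _ _ (mem_gsh3 (by omega) (by omega) (by omega) (by omega))))
      (Submodule.smul_mem _ _ (mem_gsh3 (by omega) (by omega) (by omega) (by omega))))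
      (Submodule.smul_mem _ _ (mem_gsh3 (by omega) (by omega) (by omega) (by omega))))
    (Submodule.smul_mem _ _ hSAmem))
    (Submodule.smul_mem _ _ hSBmem))
    (Submodule.smul_mem _ _ (g2mem (by omega) (by omega) (by omega)))

/-- the special product `g2 1 k1 * g k2` carries `½·gb2 1 0 k1 k2` -/
lemma special {k1 k2 N : ℕ} (h1 : 2 ≤ k1) (h2 : 2 ≤ k2) (hN : k1 + k2 + 1 ≤ N) :
    g2 1 k1 * g k2 + (1/2 : ℚ) • gb2 1 0 k1 k2 ∈ Sp N := by
  have hU := U12g (c:=k2) (a:=1) (b:=k1) (N:=N) (by omega) (by omega) (by omega) (by omega)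
  have c1 := gsh3_one_mid (a:=k2) k1 (by omega)
  have c2 := gsh3_one_left (a:=k2) k1 (by omega)
  have c3 := gsh3_one_left (a:=k1) k2 (by omega)
  have hC12 : (PowerSeries.C (R := ℚ)) (1/2 : ℚ) * 2 = 1 := by
    rw [← map_ofNat (PowerSeries.C (R := ℚ)) 2, ← map_mul]
    norm_num
  have hkey : g2 1 k1 * g k2 + (1/2 : ℚ) • gb2 1 0 k1 k2
      = (g k2 * g2 1 k1 - g3 k2 1 k1 - g3 1 k2 k1 - g3 1 k1 k2)
        + gsh3 k2 1 k1 + gsh3 1 k2 k1 + gsh3 1 k1 k2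
        - (1/2 : ℚ) • gb2 0 1 k2 k1 + g2 k2 k1 + (1/2 : ℚ) • g2 k1 k2 := by
    simp only [smul_eq_C_mul] at c1 c2 c3 ⊢
    linear_combination - c1 - c2 - c3 + (g2 k2 k1) * hC12
  rw [hkey]
  refine Submodule.add_mem _ (Submodule.add_mem _ (Submodule.sub_mem _
    (Submodule.add_mem _ (Submodule.add_mem _ (Submodule.add_mem _ hU
      (mem_gsh3 (by omega) (by omega) (by omega) (by omega)))
      (mem_gsh3 (by omega) (by omega) (by omega) (by omega)))
      (mem_gsh3 (by omega) (by omega) (by omega) (by omega)))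
    (Submodule.smul_mem _ _ (L2 (by omega) (by omega) (by omega))))
    (g2mem (by omega) (by omega) (by omega)))
    (Submodule.smul_mem _ _ (g2mem (by omega) (by omega) (by omega)))

/-- u-stuffle of `gb 1 k1 * g k2` -/
lemma UT {k1 k2 : ℕ} (h1 : 1 ≤ k1) (h2 : 1 ≤ k2) :
    ∃ Q : Polynomial ℚ, Q.natDegree ≤ k1 + k2 - 1 ∧
      gb 1 k1 * g k2 = gb2 1 0 k1 k2 + gb2 0 1 k2 k1
        + S1 (fun u w => (u:ℚ) * Q.eval (w:ℚ)) := by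
  obtain ⟨Q, hQdeg, hQ⟩ := conv_polyP
    (Polynomial.C ((Nat.factorial (k1-1) : ℚ)⁻¹ * (Nat.factorial (k2-1) : ℚ)⁻¹)
      * Polynomial.X ^ (k1-1)) (k1-1) (k2-1)
    (le_of_le_of_eq (Polynomial.natDegree_C_mul_le _ _) (Polynomial.natDegree_X_pow _))
  have hU := U11 (fun u v => ((u:ℚ)^1 / (Nat.factorial 1 : ℚ)) *
      ((v:ℚ)^(k1-1) / (Nat.factorial (k1-1) : ℚ)))
    (fun _ v => (v:ℚ)^(k2-1) / (Nat.factorial (k2-1) : ℚ))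
  rw [← gb_S1, ← g_S1] at hU
  refine ⟨Q, by omega, ?_⟩
  rw [hU]
  congr 1
  congr 1
  · rw [gb2_S2]
    exact S2_congr fun u1 u2 v1 v2 _ _ _ _ => by norm_num; try ring
  · rw [gb2_S2]
    exact S2_congr fun u1 u2 v1 v2 _ _ _ _ => by norm_num; try ring
  · apply S1_congr
    intro u w _ hw
    rw [← hQ w hw, Finset.mul_sum]
    refine Finset.sum_congr rfl fun v _ => ?_
    simp only [Polynomial.eval_mul, Polynomial.eval_C, Polynomial.eval_pow, Polynomial.eval_X]
    norm_num
    ring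

/-- main lemma -/
lemma main {k1 k2 : ℕ} (h1 : 2 ≤ k1) (h2 : 2 ≤ k2) :
    gb2 1 0 k1 k2 ∈ Sp (k1 + k2 + 1) := by
  obtain ⟨m, rfl⟩ : ∃ m, k1 = m + 2 := ⟨k1 - 2, by omega⟩
  set N := m + 2 + k2 + 1 with hNdef
  obtain ⟨P, hPdeg, hE⟩ := E1L (m+2) (by omega)
  obtain ⟨Q, hQdeg, hUT⟩ := UT (k1:=m+2) (k2:=k2) (by omega) (by omega)
  -- (1) T - X ∈ Sp N
  have hTX : gb 1 (m+2) * g k2 - gb2 1 0 (m+2) k2 ∈ Sp N := by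
    have hid : gb 1 (m+2) * g k2 - gb2 1 0 (m+2) k2
        = gb2 0 1 k2 (m+2) + S1 (fun u w => (u:ℚ) * Q.eval (w:ℚ)) := by
      rw [hUT]; ring
    rw [hid]
    refine Submodule.add_mem _ (L2 (by omega) (by omega) (by omega)) ?_
    exact span_S1_upoly Q (m + 2 + k2 - 1) N (by omega) (by omega)
  -- (2) sum splitting
  set SM := ∑ j ∈ Finset.Ico 1 (m+1), g2 (j+1) (m+2-j) * g k2 with hSM
  have s1 : ∑ j ∈ Finset.range (m+2), g2 (j+1) (m+2-j) * g k2
      = g2 1 (m+2) * g k2 + SM + g2 (m+2) 1 * g k2 := by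
    rw [Finset.range_eq_Ico, Finset.sum_eq_sum_Ico_succ_bot (by omega : 0 < m+2),
      Finset.sum_Ico_succ_top (by omega : 1 ≤ m+1)]
    have e1 : m + 2 - (m+1) = 1 := by omega
    have e2 : m + 2 - 0 = m + 2 := by omega
    rw [e1, e2, hSM]
    norm_num
    abel
  -- (3) memberships of the summands
  have hmid : SM ∈ Sp N := by
    rw [hSM]
    apply Submodule.sum_mem
    intro j hj
    rw [Finset.mem_Ico] at hj
    have hU := U12g (c:=k2) (a:=j+1) (b:=m+2-j) (N:=N) (by omega) (by omega)
      (by omega) (by omega)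
    have hid : g2 (j+1) (m+2-j) * g k2
        = (g k2 * g2 (j+1) (m+2-j) - g3 k2 (j+1) (m+2-j) - g3 (j+1) k2 (m+2-j)
            - g3 (j+1) (m+2-j) k2)
          + g3 k2 (j+1) (m+2-j) + g3 (j+1) k2 (m+2-j) + g3 (j+1) (m+2-j) k2 := by
      ring
    rw [hid]
    refine Submodule.add_mem _ (Submodule.add_mem _ (Submodule.add_mem _ hU ?_) ?_) ?_
    · rw [← gsh3_plain (m+2-j) (by omega : k2 ≠ 1) (by omega : j+1 ≠ 1)]
      exact mem_gsh3 (by omega) (by omega) (by omega) (by omega)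
    · rw [← gsh3_plain (m+2-j) (by omega : j+1 ≠ 1) (by omega : k2 ≠ 1)]
      exact mem_gsh3 (by omega) (by omega) (by omega) (by omega)
    · rw [← gsh3_plain k2 (by omega : j+1 ≠ 1) (by omega : m+2-j ≠ 1)]
      exact mem_gsh3 (by omega) (by omega) (by omega) (by omega)
  have hgg : g (m+2) * g k2 ∈ Sp N := by
    have hpp := prod_g_g (a:=m+2) (b:=k2) (N:=N) (by omega) (by omega) (by omega)
    have hid : g (m+2) * g k2 = (g (m+2) * g k2 - g2 (m+2) k2 - g2 k2 (m+2))
        + g2 (m+2) k2 + g2 k2 (m+2) := by ring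
    rw [hid]
    exact Submodule.add_mem _ (Submodule.add_mem _ hpp
      (g2mem (by omega) (by omega) (by omega))) (g2mem (by omega) (by omega) (by omega))
  have hS1P : S1 (fun _ w => P.eval (w:ℚ)) * g k2 ∈ Sp N :=
    prod_S1poly_g P (m+2) k2 N hPdeg (by omega) (by omega)
  have hsp := special (k1:=m+2) (k2:=k2) (N:=N) (by omega) (by omega) (by omega)
  -- (4) T - ½X ∈ Sp N
  have hT2 : gb 1 (m+2) * g k2 - (1/2:ℚ) • gb2 1 0 (m+2) k2 ∈ Sp N := by
    have hid : gb 1 (m+2) * g k2 - (1/2:ℚ) • gb2 1 0 (m+2) k2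
        = - (g2 1 (m+2) * g k2 + (1/2:ℚ) • gb2 1 0 (m+2) k2)
          + S1 (fun _ w => P.eval (w:ℚ)) * g k2 + g (m+2) * g k2 - SM := by
      have hEg := congrArg (fun f => f * g k2) hE
      rw [sub_mul, add_mul, add_mul, Finset.sum_mul] at hEg
      rw [s1] at hEg
      linear_combination hEg
    rw [hid]
    refine Submodule.sub_mem _ (Submodule.add_mem _ (Submodule.add_mem _
      (Submodule.neg_mem _ hsp) hS1P) hgg) hmid
  -- (5) conclude
  have hC12 : (PowerSeries.C (R := ℚ)) (1/2 : ℚ) * 2 = 1 := by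
    rw [← map_ofNat (PowerSeries.C (R := ℚ)) 2, ← map_mul]
    norm_num
  have hfin : (1/2:ℚ) • gb2 1 0 (m+2) k2
      = (gb 1 (m+2) * g k2 - (1/2:ℚ) • gb2 1 0 (m+2) k2)
        - (gb 1 (m+2) * g k2 - gb2 1 0 (m+2) k2) := by
    simp only [smul_eq_C_mul]
    linear_combination (gb2 1 0 (m+2) k2) * hC12
  have hmem : (1/2:ℚ) • gb2 1 0 (m+2) k2 ∈ Sp N := by
    rw [hfin]
    exact Submodule.sub_mem _ hT2 hTX
  have : gb2 1 0 (m+2) k2 = (2:ℚ) • ((1/2:ℚ) • gb2 1 0 (m+2) k2) := by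
    rw [smul_smul]
    norm_num
  rw [this]
  exact Submodule.smul_mem _ _ hmem

end Stmt15

/-- `g^{(1,0)}_{k₁,k₂}` lies in the ℚ-span of the `g^sh` of weight ≤ k₁+k₂+1. -/
theorem stmt_15 (k1 k2 : ℕ) (h1 : 2 ≤ k1) (h2 : 2 ≤ k2) :
    gb2 1 0 k1 k2 ∈ Submodule.span ℚ (gshSpanSet (k1 + k2 + 1)) :=
  Stmt15.main h1 h2
end
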